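/- arXiv:1908.10024 — 5 statements merged into one kernel-verified Lean document; each statement's English description precedes it below -/
import Mathlib

section
/- Hoeffding's inequality (part 2, convex order): Let X ~ PB(p_1,...,p_n), p̄ = (p_1+...+p_n)/n, and X̄ ~ Bin(n, p̄). For every function g : {0,1,...,n} → ℝ that is convex in the discrete sense, i.e. g(k+2) − 2g(k+1) + g(k) > 0 for all 0 ≤ k ≤ n−2, one has E[g(X)] ≤ E[g(X̄)], with equality if and only if p_1 = p_2 = ... = p_n = p̄. -/
open scoped BigOperators

/-- The Poisson binomial probability mass function `PB(p_1, ..., p_n)`. -/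
noncomputable def pbPMF (n : ℕ) (p : Fin n → ℝ) (k : ℕ) : ℝ :=
  ∑ A ∈ Finset.powersetCard k (Finset.univ : Finset (Fin n)),
    (∏ i ∈ A, p i) * ∏ i ∈ Aᶜ, (1 - p i)

/-- The binomial probability mass function `Bin(n, p)`. -/
noncomputable def binPMF (n : ℕ) (p : ℝ) (k : ℕ) : ℝ :=
  (n.choose k : ℝ) * p ^ k * (1 - p) ^ (n - k)

/-- The expectation of `g` under the Poisson binomial law, written as a sum over all subsets. -/
noncomputable def Wfun (n : ℕ) (p : Fin n → ℝ) (g : ℕ → ℝ) : ℝ :=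
  ∑ A ∈ (Finset.univ : Finset (Fin n)).powerset,
    (∏ i ∈ A, p i) * (∏ i ∈ Aᶜ, (1 - p i)) * g A.card

lemma sum_pbPMF_eq_Wfun (n : ℕ) (p : Fin n → ℝ) (g : ℕ → ℝ) :
    (∑ k ∈ Finset.range (n + 1), pbPMF n p k * g k) = Wfun n p g := by
  unfold pbPMF Wfun
  rw [Finset.sum_powerset, Finset.card_univ, Fintype.card_fin]
  refine Finset.sum_congr rfl fun k hk => ?_
  rw [Finset.sum_mul]
  refine Finset.sum_congr rfl fun A hA => ?_
  rw [(Finset.mem_powersetCard.1 hA).2]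

lemma pbPMF_const (n : ℕ) (q : ℝ) (k : ℕ) :
    pbPMF n (fun _ => q) k = binPMF n q k := by
  unfold pbPMF binPMF
  have h : ∀ A ∈ Finset.powersetCard k (Finset.univ : Finset (Fin n)),
      (∏ _i ∈ A, q) * ∏ _i ∈ Aᶜ, (1 - q) = q ^ k * (1 - q) ^ (n - k) := by
    intro A hA
    have h1 := (Finset.mem_powersetCard.1 hA).2
    rw [Finset.prod_const, Finset.prod_const, h1, Finset.card_compl, h1, Fintype.card_fin]
  rw [Finset.sum_congr rfl h, Finset.sum_const, Finset.card_powersetCard,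
    Finset.card_univ, Fintype.card_fin, nsmul_eq_mul]
  ring

lemma Wfun_update (n : ℕ) (p : Fin n → ℝ) (g : ℕ → ℝ) (i j : Fin n) (hij : i ≠ j)
    (a b : ℝ) :
    Wfun n (Function.update (Function.update p i a) j b) g =
      ∑ t ∈ ((Finset.univ.erase i).erase j).powerset,
        (∏ x ∈ t, p x) * (∏ x ∈ ((Finset.univ.erase i).erase j) \ t, (1 - p x)) *
          ((1 - a) * (1 - b) * g t.card + (a * (1 - b) + b * (1 - a)) * g (t.card + 1)
            + a * b * g (t.card + 2)) := by
  classical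
  set Q := Function.update (Function.update p i a) j b with hQ
  set u : Finset (Fin n) := (Finset.univ.erase i).erase j with hu
  have hQi : Q i = a := by
    rw [hQ, Function.update_of_ne hij, Function.update_self]
  have hQj : Q j = b := by rw [hQ, Function.update_self]
  have hQx : ∀ x, x ≠ i → x ≠ j → Q x = p x := fun x hxi hxj => by
    rw [hQ, Function.update_of_ne hxj, Function.update_of_ne hxi]
  have hju : j ∉ u := Finset.notMem_erase _ _
  have hiu : i ∉ u := fun h => (Finset.notMem_erase i _) (Finset.mem_of_mem_erase h)
  have hmemu : ∀ x : Fin n, x ∈ u ↔ x ≠ i ∧ x ≠ j := by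
    intro x; rw [hu]
    simp only [Finset.mem_erase, Finset.mem_univ, and_true]
    tauto
  have hij' : i ∉ insert j u := by
    simp only [Finset.mem_insert, not_or]
    exact ⟨hij, hiu⟩
  have hji : j ∈ Finset.univ.erase i := Finset.mem_erase.2 ⟨Ne.symm hij, Finset.mem_univ j⟩
  have huniv : (Finset.univ : Finset (Fin n)) = insert i (insert j u) := by
    rw [hu, Finset.insert_erase hji, Finset.insert_erase (Finset.mem_univ i)]
  unfold Wfun
  conv_lhs => rw [huniv]
  rw [Finset.sum_powerset_insert hij', Finset.sum_powerset_insert hju,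
    Finset.sum_powerset_insert hju, ← Finset.sum_add_distrib, ← Finset.sum_add_distrib,
    ← Finset.sum_add_distrib]
  refine Finset.sum_congr rfl fun t ht => ?_
  rw [Finset.mem_powerset] at ht
  have hit : i ∉ t := fun h => hiu (ht h)
  have hjt : j ∉ t := fun h => hju (ht h)
  have hPt : ∏ x ∈ t, Q x = ∏ x ∈ t, p x :=
    Finset.prod_congr rfl fun x hx =>
      hQx x (fun e => hit (e ▸ hx)) (fun e => hjt (e ▸ hx))
  have hPut : ∏ x ∈ u \ t, (1 - Q x) = ∏ x ∈ u \ t, (1 - p x) :=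
    Finset.prod_congr rfl fun x hx => by
      have hxu := (Finset.mem_sdiff.1 hx).1
      rw [hQx x ((hmemu x).1 hxu).1 ((hmemu x).1 hxu).2]
  have hiu' : i ∉ u \ t := fun h => hiu (Finset.mem_sdiff.1 h).1
  have hju' : j ∉ u \ t := fun h => hju (Finset.mem_sdiff.1 h).1
  have hij'' : i ∉ insert j (u \ t) := by
    simp only [Finset.mem_insert, not_or]; exact ⟨hij, hiu'⟩
  have hji'' : j ∉ insert i (u \ t) := by
    simp only [Finset.mem_insert, not_or]; exact ⟨Ne.symm hij, hju'⟩
  have hijt : i ∉ insert j t := by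
    simp only [Finset.mem_insert, not_or]; exact ⟨hij, hit⟩
  have hc0 : tᶜ = insert i (insert j (u \ t)) := by
    ext x
    simp only [Finset.mem_compl, Finset.mem_insert, Finset.mem_sdiff, hmemu]
    by_cases hxi : x = i
    · subst hxi; simp [hit]
    by_cases hxj : x = j
    · subst hxj; simp [hjt]
    simp [hxi, hxj]
  have hc1j : (insert j t)ᶜ = insert i (u \ t) := by
    ext x
    simp only [Finset.mem_compl, Finset.mem_insert, Finset.mem_sdiff, hmemu, not_or]
    by_cases hxi : x = i
    · subst hxi; simp [hit, hij]
    by_cases hxj : x = j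
    · subst hxj; simp [hxi, Ne.symm hij]
    · simp [hxi, hxj]
  have hc1i : (insert i t)ᶜ = insert j (u \ t) := by
    ext x
    simp only [Finset.mem_compl, Finset.mem_insert, Finset.mem_sdiff, hmemu, not_or]
    by_cases hxi : x = i
    · subst hxi; simp [hij]
    by_cases hxj : x = j
    · subst hxj; simp [hjt, Ne.symm hij]
    · simp [hxi, hxj]
  have hc2 : (insert i (insert j t))ᶜ = u \ t := by
    ext x
    simp only [Finset.mem_compl, Finset.mem_insert, Finset.mem_sdiff, hmemu, not_or]
    by_cases hxi : x = i
    · subst hxi; simp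
    by_cases hxj : x = j
    · subst hxj; simp
    · simp [hxi, hxj]
  have e0 : (∏ x ∈ t, Q x) * (∏ x ∈ tᶜ, (1 - Q x)) * g t.card
      = (∏ x ∈ t, p x) * (∏ x ∈ u \ t, (1 - p x)) * ((1 - a) * (1 - b) * g t.card) := by
    rw [hc0, Finset.prod_insert hij'', Finset.prod_insert hju', hQi, hQj, hPt, hPut]
    ring
  have e1 : (∏ x ∈ insert j t, Q x) * (∏ x ∈ (insert j t)ᶜ, (1 - Q x)) * g (insert j t).card
      = (∏ x ∈ t, p x) * (∏ x ∈ u \ t, (1 - p x)) * (b * (1 - a) * g (t.card + 1)) := by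
    rw [hc1j, Finset.prod_insert hjt, Finset.prod_insert hiu', hQi, hQj, hPt, hPut,
      Finset.card_insert_of_notMem hjt]
    ring
  have e2 : (∏ x ∈ insert i t, Q x) * (∏ x ∈ (insert i t)ᶜ, (1 - Q x)) * g (insert i t).card
      = (∏ x ∈ t, p x) * (∏ x ∈ u \ t, (1 - p x)) * (a * (1 - b) * g (t.card + 1)) := by
    rw [hc1i, Finset.prod_insert hit, Finset.prod_insert hju', hQi, hQj, hPt, hPut,
      Finset.card_insert_of_notMem hit]
    ring
  have e3 : (∏ x ∈ insert i (insert j t), Q x) *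
        (∏ x ∈ (insert i (insert j t))ᶜ, (1 - Q x)) * g (insert i (insert j t)).card
      = (∏ x ∈ t, p x) * (∏ x ∈ u \ t, (1 - p x)) * (a * b * g (t.card + 2)) := by
    rw [hc2, Finset.prod_insert hijt, Finset.prod_insert hjt, hQi, hQj, hPt, hPut,
      Finset.card_insert_of_notMem hijt, Finset.card_insert_of_notMem hjt]
    ring
  rw [e0, e1, e2, e3]
  ring

lemma Wfun_update_diff (n : ℕ) (p : Fin n → ℝ) (g : ℕ → ℝ) (i j : Fin n) (hij : i ≠ j)
    (a b a' b' : ℝ) (hs : a + b = a' + b') :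
    Wfun n (Function.update (Function.update p i a') j b') g
      - Wfun n (Function.update (Function.update p i a) j b) g
    = (a' * b' - a * b) *
      ∑ t ∈ ((Finset.univ.erase i).erase j).powerset,
        (∏ x ∈ t, p x) * (∏ x ∈ ((Finset.univ.erase i).erase j) \ t, (1 - p x)) *
          (g (t.card + 2) - 2 * g (t.card + 1) + g t.card) := by
  rw [Wfun_update n p g i j hij a b, Wfun_update n p g i j hij a' b',
    ← Finset.sum_sub_distrib, Finset.mul_sum]
  refine Finset.sum_congr rfl fun t ht => ?_
  linear_combination ((∏ x ∈ t, p x) *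
    (∏ x ∈ ((Finset.univ.erase i).erase j) \ t, (1 - p x)) *
    (g t.card - g (t.card + 1))) * hs

lemma C2_pos (n : ℕ) (p : Fin n → ℝ) (g : ℕ → ℝ)
    (hp : ∀ i, 0 ≤ p i ∧ p i ≤ 1)
    (hg : ∀ k : ℕ, k + 2 ≤ n → 0 < g (k + 2) - 2 * g (k + 1) + g k)
    (i j : Fin n) (hij : i ≠ j) :
    0 < ∑ t ∈ ((Finset.univ.erase i).erase j).powerset,
        (∏ x ∈ t, p x) * (∏ x ∈ ((Finset.univ.erase i).erase j) \ t, (1 - p x)) *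
          (g (t.card + 2) - 2 * g (t.card + 1) + g t.card) := by
  classical
  set u : Finset (Fin n) := (Finset.univ.erase i).erase j with hu
  have hn : 2 ≤ n := by
    have h1 : 1 < Fintype.card (Fin n) := Fintype.one_lt_card_iff_nontrivial.2 ⟨⟨i, j, hij⟩⟩
    simp at h1; omega
  have hji : j ∈ Finset.univ.erase i := Finset.mem_erase.2 ⟨Ne.symm hij, Finset.mem_univ j⟩
  have hucard : u.card = n - 2 := by
    rw [hu, Finset.card_erase_of_mem hji, Finset.card_erase_of_mem (Finset.mem_univ i),
      Finset.card_univ, Fintype.card_fin]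
    omega
  have hne : (Finset.range (n - 1)).Nonempty := ⟨0, by rw [Finset.mem_range]; omega⟩
  set c := (Finset.range (n - 1)).inf' hne (fun k => g (k + 2) - 2 * g (k + 1) + g k) with hc
  have hcpos : 0 < c := by
    rw [hc, Finset.lt_inf'_iff]
    intro k hk
    exact hg k (by rw [Finset.mem_range] at hk; omega)
  have hD0 : ∀ t ∈ u.powerset, 0 ≤ (∏ x ∈ t, p x) * (∏ x ∈ u \ t, (1 - p x)) := fun t _ =>
    mul_nonneg (Finset.prod_nonneg fun x _ => (hp x).1)
      (Finset.prod_nonneg fun x _ => by linarith [(hp x).2])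
  have hsum1 : ∑ t ∈ u.powerset, (∏ x ∈ t, p x) * (∏ x ∈ u \ t, (1 - p x)) = 1 := by
    rw [← Finset.prod_add]
    exact Finset.prod_eq_one fun x _ => by ring
  have hstep : ∀ t ∈ u.powerset,
      c * ((∏ x ∈ t, p x) * (∏ x ∈ u \ t, (1 - p x))) ≤
        (∏ x ∈ t, p x) * (∏ x ∈ u \ t, (1 - p x)) *
          (g (t.card + 2) - 2 * g (t.card + 1) + g t.card) := by
    intro t ht
    have hcard : t.card ≤ u.card := Finset.card_le_card (Finset.mem_powerset.1 ht)
    have hcle : c ≤ g (t.card + 2) - 2 * g (t.card + 1) + g t.card := by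
      apply Finset.inf'_le
      rw [Finset.mem_range]
      omega
    rw [mul_comm]
    exact mul_le_mul_of_nonneg_left hcle (hD0 t ht)
  calc 0 < c := hcpos
    _ = c * 1 := (mul_one c).symm
    _ = ∑ t ∈ u.powerset, c * ((∏ x ∈ t, p x) * (∏ x ∈ u \ t, (1 - p x))) := by
        rw [← Finset.mul_sum, hsum1]
    _ ≤ _ := Finset.sum_le_sum hstep

/-- Hoeffding's inequality (part 2, convex order): for `X ~ PB(p_1, ..., p_n)`,
`p̄ = (p_1 + ... + p_n)/n` and `X̄ ~ Bin(n, p̄)`, for every `g : {0, ..., n} → ℝ`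
which is discretely convex (`g(k+2) - 2 g(k+1) + g(k) > 0` for `0 ≤ k ≤ n - 2`),
one has `E[g(X)] ≤ E[g(X̄)]`, with equality iff `p_1 = ⋯ = p_n = p̄`. -/
theorem hoeffding_inequality_part2 (n : ℕ) (p : Fin n → ℝ)
    (hp : ∀ i, 0 ≤ p i ∧ p i ≤ 1) (pbar : ℝ) (hpbar : pbar = (∑ i, p i) / n)
    (g : ℕ → ℝ) (hg : ∀ k : ℕ, k + 2 ≤ n → 0 < g (k + 2) - 2 * g (k + 1) + g k) :
    (∑ k ∈ Finset.range (n + 1), pbPMF n p k * g k) ≤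
      (∑ k ∈ Finset.range (n + 1), binPMF n pbar k * g k) ∧
    ((∑ k ∈ Finset.range (n + 1), pbPMF n p k * g k) =
      (∑ k ∈ Finset.range (n + 1), binPMF n pbar k * g k) ↔ ∀ i, p i = pbar) := by
  classical
  have hRHS : (∑ k ∈ Finset.range (n + 1), binPMF n pbar k * g k)
      = Wfun n (fun _ => pbar) g := by
    rw [← sum_pbPMF_eq_Wfun]
    refine Finset.sum_congr rfl fun k hk => ?_
    rw [pbPMF_const n pbar k]
  have hsum : (∑ i, p i) = (n : ℝ) * pbar := by
    rcases Nat.eq_zero_or_pos n with h0 | h0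
    · subst h0
      simp
    · have hn0 : (n : ℝ) ≠ 0 := by positivity
      rw [hpbar]
      field_simp
  have key : ∀ (m : ℕ) (q : Fin n → ℝ), (∀ i, 0 ≤ q i ∧ q i ≤ 1) →
      (∑ i, q i) = (n : ℝ) * pbar →
      (Finset.univ.filter fun i => q i ≠ pbar).card ≤ m →
      Wfun n q g ≤ Wfun n (fun _ => pbar) g ∧
        (Wfun n q g = Wfun n (fun _ => pbar) g → ∀ i, q i = pbar) := by
    intro m
    induction m with
    | zero =>
        intro q hq hqs hcard
        have hall : ∀ x, q x = pbar := by
          intro x; by_contra hx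
          have hxm : x ∈ Finset.univ.filter (fun i => q i ≠ pbar) :=
            Finset.mem_filter.2 ⟨Finset.mem_univ x, hx⟩
          have := Finset.card_pos.2 ⟨x, hxm⟩
          omega
        rw [show q = fun _ => pbar from funext hall]
        exact ⟨le_rfl, fun _ _ => rfl⟩
    | succ m IH =>
        intro q hq hqs hcard
        by_cases hall : ∀ x, q x = pbar
        · rw [show q = fun _ => pbar from funext hall]
          exact ⟨le_rfl, fun _ _ => rfl⟩
        push_neg at hall
        obtain ⟨i0, hi0⟩ := hall
        have hconst : (∑ _x : Fin n, pbar) = (n : ℝ) * pbar := by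
          rw [Finset.sum_const, Finset.card_univ, Fintype.card_fin, nsmul_eq_mul]
        have hex_gt : ∃ x, pbar < q x := by
          by_contra hcon; push_neg at hcon
          have hi0lt : q i0 < pbar := lt_of_le_of_ne (hcon i0) hi0
          have h1 : (∑ x, q x) < ∑ _x : Fin n, pbar :=
            Finset.sum_lt_sum (fun x _ => hcon x) ⟨i0, Finset.mem_univ i0, hi0lt⟩
          rw [hqs, hconst] at h1
          exact lt_irrefl _ h1
        have hex_lt : ∃ x, q x < pbar := by
          by_contra hcon; push_neg at hcon
          have hi0gt : pbar < q i0 := lt_of_le_of_ne (hcon i0) (Ne.symm hi0)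
          have h1 : (∑ _x : Fin n, pbar) < ∑ x, q x :=
            Finset.sum_lt_sum (fun x _ => hcon x) ⟨i0, Finset.mem_univ i0, hi0gt⟩
          rw [hqs, hconst] at h1
          exact lt_irrefl _ h1
        obtain ⟨i, hi⟩ := hex_lt
        obtain ⟨j, hj⟩ := hex_gt
        have hij : i ≠ j := by
          intro h; rw [h] at hi; linarith
        have hnpos : 0 < n := i.pos
        have hnR : (0 : ℝ) < n := by exact_mod_cast hnpos
        have hq0 : 0 ≤ ∑ x, q x := Finset.sum_nonneg fun x _ => (hq x).1
        have hpbar0 : 0 ≤ pbar := by nlinarith [hqs]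
        have hq1 : (∑ x, q x) ≤ ∑ _x : Fin n, (1 : ℝ) :=
          Finset.sum_le_sum fun x _ => (hq x).2
        have hone : (∑ _x : Fin n, (1 : ℝ)) = (n : ℝ) := by
          rw [Finset.sum_const, Finset.card_univ, Fintype.card_fin, nsmul_eq_mul, mul_one]
        have hpbar1 : pbar ≤ 1 := by
          rw [hone] at hq1; nlinarith [hqs]
        set b : ℝ := q i + q j - pbar with hb
        set q' : Fin n → ℝ := Function.update (Function.update q i pbar) j b with hq'def
        have hq'i : q' i = pbar := by
          rw [hq'def, Function.update_of_ne hij, Function.update_self]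
        have hq'j : q' j = b := by rw [hq'def, Function.update_self]
        have hq'x : ∀ x, x ≠ i → x ≠ j → q' x = q x := fun x hxi hxj => by
          rw [hq'def, Function.update_of_ne hxj, Function.update_of_ne hxi]
        have hb0 : 0 ≤ b := by rw [hb]; linarith [(hq i).1]
        have hb1 : b ≤ 1 := by rw [hb]; linarith [(hq j).2]
        have hq' : ∀ x, 0 ≤ q' x ∧ q' x ≤ 1 := by
          intro x
          by_cases hxj : x = j
          · subst hxj; rw [hq'j]; exact ⟨hb0, hb1⟩
          by_cases hxi : x = i
          · subst hxi; rw [hq'i]; exact ⟨hpbar0, hpbar1⟩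
          · rw [hq'x x hxi hxj]; exact hq x
        have hqs' : (∑ x, q' x) = (n : ℝ) * pbar := by
          have hd : (∑ x ∈ ({i, j} : Finset (Fin n)), (q' x - q x))
              = ∑ x, (q' x - q x) := by
            apply Finset.sum_subset (Finset.subset_univ _)
            intro x _ hx
            simp only [Finset.mem_insert, Finset.mem_singleton, not_or] at hx
            rw [hq'x x hx.1 hx.2, sub_self]
          rw [Finset.sum_pair hij, hq'i, hq'j, hb] at hd
          rw [Finset.sum_sub_distrib] at hd
          have : (∑ x, q' x) = ∑ x, q x := by linarith
          rw [this, hqs]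
        have hiF : i ∈ Finset.univ.filter (fun x => q x ≠ pbar) :=
          Finset.mem_filter.2 ⟨Finset.mem_univ i, ne_of_lt hi⟩
        have hsub : (Finset.univ.filter fun x => q' x ≠ pbar) ⊆
            (Finset.univ.filter fun x => q x ≠ pbar).erase i := by
          intro x hx
          rw [Finset.mem_filter] at hx
          have hxi : x ≠ i := by
            rintro rfl
            exact hx.2 hq'i
          rw [Finset.mem_erase, Finset.mem_filter]
          refine ⟨hxi, Finset.mem_univ x, ?_⟩
          by_cases hxj : x = j
          · subst hxj; exact ne_of_gt hj
          · rw [← hq'x x hxi hxj]; exact hx.2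
        have hcard' : (Finset.univ.filter fun x => q' x ≠ pbar).card ≤ m := by
          have h1 := Finset.card_le_card hsub
          have h2 := Finset.card_erase_of_mem hiF
          have h3 := Finset.card_pos.2 ⟨i, hiF⟩
          omega
        have hC2 := C2_pos n q g hq hg i j hij
        have hdiff := Wfun_update_diff n q g i j hij (q i) (q j) pbar b (by rw [hb]; ring)
        have hqeq : Function.update (Function.update q i (q i)) j (q j) = q := by
          rw [Function.update_eq_self, Function.update_eq_self]
        rw [hqeq] at hdiff
        have hfac : 0 < pbar * b - q i * q j := by
          rw [hb]
          nlinarith [mul_pos (sub_pos.2 hi) (sub_pos.2 hj)]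
        have hlt : Wfun n q g < Wfun n q' g := by
          rw [hq'def]
          nlinarith [mul_pos hfac hC2]
        obtain ⟨hle', _⟩ := IH q' hq' hqs' hcard'
        have hstrict : Wfun n q g < Wfun n (fun _ => pbar) g := lt_of_lt_of_le hlt hle'
        exact ⟨le_of_lt hstrict, fun h => absurd h (ne_of_lt hstrict)⟩
  obtain ⟨hle, himp⟩ :=
    key ((Finset.univ.filter fun i => p i ≠ pbar).card) p hp hsum le_rfl
  rw [sum_pbPMF_eq_Wfun n p g, hRHS]
  refine ⟨hle, himp, fun hall => ?_⟩
  rw [show p = fun _ => pbar from funext hall]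
end

section
/- Majorization and Poisson binomial tails (Gleser–Wang): Let X ~ PB(p_1,...,p_n) and X' ~ PB(p'_1,...,p'_n) with p̄ = (p_1+...+p_n)/n, and suppose (p_1,...,p_n) majorizes (p'_1,...,p'_n). Then P(X ≤ k) ≤ P(X' ≤ k) for all integers k with 0 ≤ k ≤ n·p̄ − 2, and P(X ≤ k) ≥ P(X' ≤ k) for all integers k with n·p̄ + 2 ≤ k ≤ n. Moreover Var(X) ≤ Var(X'). -/
open scoped BigOperators

/-- The cumulative distribution function `P(X ≤ k)` of a pmf on ℕ. -/
noncomputable def cdf (f : ℕ → ℝ) (k : ℕ) : ℝ :=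
  ∑ i ∈ Finset.range (k + 1), f i

/-- The variance of a distribution supported on `{0, ..., n}` given by pmf `f`. -/
noncomputable def pmfVar (n : ℕ) (f : ℕ → ℝ) : ℝ :=
  (∑ k ∈ Finset.range (n + 1), (k : ℝ) ^ 2 * f k) -
    (∑ k ∈ Finset.range (n + 1), (k : ℝ) * f k) ^ 2

/-- `x` majorizes `y`: denoting the increasing rearrangements by `x ∘ σ` and `y ∘ τ`,
the partial sums `Σ_{i=1}^k x_(i)` are at most `Σ_{i=1}^k y_(i)` for `k ≤ n - 1`, and
the total sums agree. -/
def Majorizes (n : ℕ) (x y : Fin n → ℝ) : Prop :=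
  ∃ σ τ : Equiv.Perm (Fin n),
    Monotone (fun i => x (σ i)) ∧ Monotone (fun i => y (τ i)) ∧
    (∀ k : ℕ, k ≤ n - 1 →
      ∑ i ∈ Finset.univ.filter (fun i : Fin n => (i : ℕ) < k), x (σ i) ≤
        ∑ i ∈ Finset.univ.filter (fun i : Fin n => (i : ℕ) < k), y (τ i)) ∧
    (∑ i, x i) = ∑ i, y i
open Finset

noncomputable def pb {n : ℕ} (s : Finset (Fin n)) (p : Fin n → ℝ) (z : ℤ) : ℝ :=
  if 0 ≤ z then
    ∑ A ∈ Finset.powersetCard z.toNat s, (∏ i ∈ A, p i) * ∏ i ∈ s \ A, (1 - p i)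
  else 0

lemma pb_of_neg {n : ℕ} {s : Finset (Fin n)} {p : Fin n → ℝ} {z : ℤ} (hz : z < 0) :
    pb s p z = 0 := by
  simp [pb, not_le.mpr hz]

lemma pb_nonneg {n : ℕ} {s : Finset (Fin n)} {p : Fin n → ℝ}
    (hp : ∀ i ∈ s, 0 ≤ p i ∧ p i ≤ 1) (z : ℤ) : 0 ≤ pb s p z := by
  unfold pb
  split
  · apply Finset.sum_nonneg
    intro A hA
    rw [Finset.mem_powersetCard] at hA
    apply mul_nonneg
    · exact Finset.prod_nonneg fun i hi => (hp i (hA.1 hi)).1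
    · exact Finset.prod_nonneg fun i hi => by
        have := (hp i (Finset.mem_sdiff.mp hi).1).2; linarith
  · exact le_refl 0

lemma pb_congr {n : ℕ} {s : Finset (Fin n)} {p q : Fin n → ℝ}
    (h : ∀ i ∈ s, p i = q i) (z : ℤ) : pb s p z = pb s q z := by
  unfold pb
  split
  · apply Finset.sum_congr rfl
    intro A hA
    rw [Finset.mem_powersetCard] at hA
    congr 1
    · exact Finset.prod_congr rfl fun i hi => h i (hA.1 hi)
    · exact Finset.prod_congr rfl fun i hi => by rw [h i (Finset.mem_sdiff.mp hi).1]
  · rfl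

lemma pb_empty {n : ℕ} (p : Fin n → ℝ) (z : ℤ) :
    pb (∅ : Finset (Fin n)) p z = if z = 0 then 1 else 0 := by
  unfold pb
  rcases lt_trichotomy z 0 with h | h | h
  · rw [if_neg (not_le.mpr h), if_neg (by omega)]
  · subst h; simp
  · rw [if_pos h.le, if_neg (by omega)]
    rw [Finset.powersetCard_eq_empty.mpr (by simp; omega), Finset.sum_empty]

lemma pb_of_card_lt {n : ℕ} {s : Finset (Fin n)} (p : Fin n → ℝ) {z : ℤ}
    (hz : (s.card : ℤ) < z) : pb s p z = 0 := by
  unfold pb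
  rw [if_pos (by omega)]
  have : s.card < z.toNat := by omega
  rw [Finset.powersetCard_eq_empty.mpr this, Finset.sum_empty]

lemma pbPMF_eq_pb {n : ℕ} (p : Fin n → ℝ) (k : ℕ) :
    pbPMF n p k = pb Finset.univ p (k : ℤ) := by
  unfold pbPMF pb
  rw [if_pos (by positivity), Int.toNat_natCast]
  apply Finset.sum_congr rfl
  intro A _
  rw [Finset.compl_eq_univ_sdiff]
lemma pb_insert {n : ℕ} {t : Finset (Fin n)} {p : Fin n → ℝ} {i : Fin n} (hi : i ∉ t) (z : ℤ) :
    pb (insert i t) p z = (1 - p i) * pb t p z + p i * pb t p (z - 1) := by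
  rcases lt_trichotomy z 0 with hz | hz | hz
  · rw [pb_of_neg hz, pb_of_neg hz, pb_of_neg (by omega)]; ring
  · subst hz
    have h1 : pb t p (0 - 1) = 0 := pb_of_neg (by norm_num)
    rw [h1, mul_zero, add_zero]
    unfold pb
    rw [if_pos le_rfl, if_pos le_rfl]
    simp only [Int.toNat_zero, Finset.powersetCard_zero, Finset.sum_singleton,
      Finset.prod_empty, one_mul, Finset.sdiff_empty]
    rw [Finset.prod_insert hi]
    try ring
  · have hz0 : (0:ℤ) ≤ z := hz.le
    have hz1 : (0:ℤ) ≤ z - 1 := by omega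
    obtain ⟨m, hm⟩ : ∃ m : ℕ, z.toNat = m + 1 := ⟨z.toNat - 1, by omega⟩
    have hm' : (z - 1).toNat = m := by omega
    unfold pb
    rw [if_pos hz0, if_pos hz0, if_pos hz1, hm, hm']
    rw [Finset.powersetCard_succ_insert hi]
    rw [Finset.sum_union]
    · congr 1
      · rw [Finset.mul_sum]
        apply Finset.sum_congr rfl
        intro A hA
        rw [Finset.mem_powersetCard] at hA
        have hiA : i ∉ A := fun h => hi (hA.1 h)
        rw [Finset.insert_sdiff_of_notMem _ hiA]
        rw [Finset.prod_insert (fun h => hi (Finset.mem_sdiff.mp h).1)]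
        ring
      · rw [Finset.sum_image, Finset.mul_sum]
        · apply Finset.sum_congr rfl
          intro A hA
          rw [Finset.mem_powersetCard] at hA
          have hiA : i ∉ A := fun h => hi (hA.1 h)
          have h1 : insert i t \ insert i A = t \ A := by
            ext x
            simp only [Finset.mem_sdiff, Finset.mem_insert]
            constructor
            · rintro ⟨hx1 | hx1, hx2⟩
              · exact absurd (Or.inl hx1) hx2
              · exact ⟨hx1, fun h => hx2 (Or.inr h)⟩
            · rintro ⟨hx1, hx2⟩
              exact ⟨Or.inr hx1, fun h => by
                rcases h with h | h
                · exact hi (h ▸ hx1)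
                · exact hx2 h⟩
          rw [h1, Finset.prod_insert hiA]
          ring
        · intro A hA B hB hAB
          rw [Finset.mem_coe, Finset.mem_powersetCard] at hA hB
          have : (insert i A).erase i = (insert i B).erase i := by rw [hAB]
          rwa [Finset.erase_insert (fun h => hi (hA.1 h)),
            Finset.erase_insert (fun h => hi (hB.1 h))] at this
    · rw [Finset.disjoint_left]
      intro A hA hA'
      rw [Finset.mem_powersetCard] at hA
      rw [Finset.mem_image] at hA'
      obtain ⟨B, _, hB⟩ := hA'
      exact hi (hA.1 (hB ▸ Finset.mem_insert_self i B))

lemma pb_erase {n : ℕ} {s : Finset (Fin n)} {p : Fin n → ℝ} {i : Fin n} (hi : i ∈ s) (z : ℤ) :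
    pb s p z = (1 - p i) * pb (s.erase i) p z + p i * pb (s.erase i) p (z - 1) := by
  conv_lhs => rw [← Finset.insert_erase hi]
  exact pb_insert (Finset.notMem_erase i s) z
lemma pb_reflect {n : ℕ} (s : Finset (Fin n)) (p : Fin n → ℝ) (z : ℤ) :
    pb s (fun i => 1 - p i) ((s.card : ℤ) - z) = pb s p z := by
  rcases lt_trichotomy z 0 with hz | hz
  · rw [pb_of_neg hz, pb_of_card_lt _ (by omega)]
  rcases lt_or_ge (s.card : ℤ) z with hz2 | hz2
  · rw [pb_of_card_lt _ hz2, pb_of_neg (by omega)]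
  have hz0 : (0:ℤ) ≤ z := by omega
  unfold pb
  rw [if_pos (by omega), if_pos hz0]
  apply Finset.sum_nbij' (i := fun A => s \ A) (j := fun B => s \ B)
  · intro A hA
    rw [Finset.mem_powersetCard] at hA ⊢
    refine ⟨Finset.sdiff_subset, ?_⟩
    rw [Finset.card_sdiff_of_subset hA.1, hA.2]
    omega
  · intro B hB
    rw [Finset.mem_powersetCard] at hB ⊢
    refine ⟨Finset.sdiff_subset, ?_⟩
    rw [Finset.card_sdiff_of_subset hB.1, hB.2]
    omega
  · intro A hA
    rw [Finset.mem_powersetCard] at hA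
    exact Finset.sdiff_sdiff_eq_self hA.1
  · intro B hB
    rw [Finset.mem_powersetCard] at hB
    exact Finset.sdiff_sdiff_eq_self hB.1
  · intro A hA
    rw [Finset.mem_powersetCard] at hA
    have h1 : s \ (s \ A) = A := Finset.sdiff_sdiff_eq_self hA.1
    rw [h1, mul_comm]
    congr 1
    apply Finset.prod_congr rfl
    intro x _
    ring

lemma pb_pair {n : ℕ} {s : Finset (Fin n)} {p : Fin n → ℝ} {i j : Fin n}
    (hi : i ∈ s) (hj : j ∈ s) (hij : i ≠ j) (z : ℤ) :
    pb s p z = (1 - p i) * (1 - p j) * pb ((s.erase i).erase j) p z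
      + (p i * (1 - p j) + p j * (1 - p i)) * pb ((s.erase i).erase j) p (z - 1)
      + p i * p j * pb ((s.erase i).erase j) p (z - 2) := by
  have hj' : j ∈ s.erase i := Finset.mem_erase.mpr ⟨hij.symm, hj⟩
  rw [pb_erase hi z, pb_erase hj' z, pb_erase hj' (z - 1)]
  have h2 : z - 1 - 1 = z - 2 := by ring
  rw [h2]
  ring

lemma pb_sum_one {n : ℕ} {s : Finset (Fin n)} {p : Fin n → ℝ} :
    ∀ m : ℕ, s.card ≤ m → ∑ k ∈ Finset.range (m + 1), pb s p (k : ℤ) = 1 := by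
  induction s using Finset.induction_on with
  | empty =>
    intro m _
    rw [Finset.sum_eq_single 0]
    · rw [pb_empty]; norm_num
    · intro k _ hk
      rw [pb_empty, if_neg (by exact_mod_cast hk)]
    · intro h; exact absurd (Finset.mem_range.mpr (by omega)) h
  | @insert a s' hi ih =>
    intro m hm
    rw [Finset.card_insert_of_notMem hi] at hm
    obtain ⟨m', rfl⟩ : ∃ m', m = m' + 1 := ⟨m - 1, by omega⟩
    have hcard : s'.card ≤ m' := by omega
    have step : ∀ k : ℕ, pb (insert a s') p (k : ℤ) =
        (1 - p a) * pb s' p (k : ℤ) + p a * pb s' p ((k : ℤ) - 1) :=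
      fun k => pb_insert hi (k : ℤ)
    simp only [step]
    rw [Finset.sum_add_distrib, ← Finset.mul_sum, ← Finset.mul_sum]
    have e1 : ∑ k ∈ Finset.range (m' + 1 + 1), pb s' p (k : ℤ) = 1 := by
      rw [Finset.sum_range_succ, ih m' hcard, pb_of_card_lt _ (by push_cast; omega), add_zero]
    have e2 : ∑ k ∈ Finset.range (m' + 1 + 1), pb s' p ((k : ℤ) - 1) = 1 := by
      rw [Finset.sum_range_succ']
      have : ∀ k : ℕ, pb s' p ((((k:ℕ) + 1 : ℕ) : ℤ) - 1) = pb s' p (k : ℤ) := by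
        intro k; congr 1; push_cast; ring
      simp only [this]
      rw [ih m' hcard, pb_of_neg (by norm_num), add_zero]
    rw [e1, e2]; ring
lemma pb_sum_id {n : ℕ} {s : Finset (Fin n)} {p : Fin n → ℝ} :
    ∀ m : ℕ, s.card ≤ m →
      ∑ k ∈ Finset.range (m + 1), (k : ℝ) * pb s p (k : ℤ) = ∑ i ∈ s, p i := by
  induction s using Finset.induction_on with
  | empty =>
    intro m _
    rw [Finset.sum_eq_zero, Finset.sum_empty]
    intro k _
    rcases Nat.eq_zero_or_pos k with hk | hk
    · subst hk; norm_num
    · rw [pb_empty, if_neg (by exact_mod_cast Nat.pos_iff_ne_zero.mp hk), mul_zero]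
  | @insert a s' hi ih =>
    intro m hm
    rw [Finset.card_insert_of_notMem hi] at hm
    obtain ⟨m', rfl⟩ : ∃ m', m = m' + 1 := ⟨m - 1, by omega⟩
    have hcard : s'.card ≤ m' := by omega
    have step : ∀ k : ℕ, pb (insert a s') p (k : ℤ) =
        (1 - p a) * pb s' p (k : ℤ) + p a * pb s' p ((k : ℤ) - 1) :=
      fun k => pb_insert hi (k : ℤ)
    simp only [step]
    have expand : ∀ k : ℕ, (k : ℝ) * ((1 - p a) * pb s' p (k : ℤ) + p a * pb s' p ((k : ℤ) - 1))
        = (1 - p a) * ((k:ℝ) * pb s' p (k : ℤ)) + p a * ((k:ℝ) * pb s' p ((k : ℤ) - 1)) := by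
      intro k; ring
    simp only [expand]
    rw [Finset.sum_add_distrib, ← Finset.mul_sum, ← Finset.mul_sum]
    have e1 : ∑ k ∈ Finset.range (m' + 1 + 1), (k:ℝ) * pb s' p (k : ℤ) = ∑ i ∈ s', p i := by
      rw [Finset.sum_range_succ, ih m' hcard, pb_of_card_lt _ (by push_cast; omega), mul_zero, add_zero]
    have e2 : ∑ k ∈ Finset.range (m' + 1 + 1), (k:ℝ) * pb s' p ((k : ℤ) - 1)
        = (∑ i ∈ s', p i) + 1 := by
      rw [Finset.sum_range_succ']
      have h0 : ((0:ℕ):ℝ) * pb s' p (((0:ℕ) : ℤ) - 1) = 0 := by norm_num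
      have hsucc : ∀ k : ℕ, (((k+1:ℕ)):ℝ) * pb s' p ((((k+1:ℕ)) : ℤ) - 1)
          = ((k:ℝ) * pb s' p (k : ℤ)) + pb s' p (k : ℤ) := by
        intro k
        have : (((k+1:ℕ)) : ℤ) - 1 = (k:ℤ) := by push_cast; ring
        rw [this]; push_cast; ring
      simp only [hsucc, h0]
      rw [Finset.sum_add_distrib, ih m' hcard, pb_sum_one m' hcard, add_zero]
    rw [e1, e2, Finset.sum_insert hi]
    ring

lemma pb_sum_sq {n : ℕ} {s : Finset (Fin n)} {p : Fin n → ℝ} :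
    ∀ m : ℕ, s.card ≤ m →
      ∑ k ∈ Finset.range (m + 1), (k : ℝ)^2 * pb s p (k : ℤ)
        = (∑ i ∈ s, p i)^2 + ∑ i ∈ s, p i * (1 - p i) := by
  induction s using Finset.induction_on with
  | empty =>
    intro m _
    rw [Finset.sum_eq_zero, Finset.sum_empty]
    · norm_num
    intro k _
    rcases Nat.eq_zero_or_pos k with hk | hk
    · subst hk; norm_num
    · rw [pb_empty, if_neg (by exact_mod_cast Nat.pos_iff_ne_zero.mp hk), mul_zero]
  | @insert a s' hi ih =>
    intro m hm
    rw [Finset.card_insert_of_notMem hi] at hm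
    obtain ⟨m', rfl⟩ : ∃ m', m = m' + 1 := ⟨m - 1, by omega⟩
    have hcard : s'.card ≤ m' := by omega
    have step : ∀ k : ℕ, pb (insert a s') p (k : ℤ) =
        (1 - p a) * pb s' p (k : ℤ) + p a * pb s' p ((k : ℤ) - 1) :=
      fun k => pb_insert hi (k : ℤ)
    simp only [step]
    have expand : ∀ k : ℕ, (k : ℝ)^2 * ((1 - p a) * pb s' p (k : ℤ) + p a * pb s' p ((k : ℤ) - 1))
        = (1 - p a) * ((k:ℝ)^2 * pb s' p (k : ℤ)) + p a * ((k:ℝ)^2 * pb s' p ((k : ℤ) - 1)) := by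
      intro k; ring
    simp only [expand]
    rw [Finset.sum_add_distrib, ← Finset.mul_sum, ← Finset.mul_sum]
    have e1 : ∑ k ∈ Finset.range (m' + 1 + 1), (k:ℝ)^2 * pb s' p (k : ℤ)
        = (∑ i ∈ s', p i)^2 + ∑ i ∈ s', p i * (1 - p i) := by
      rw [Finset.sum_range_succ, ih m' hcard, pb_of_card_lt _ (by push_cast; omega), mul_zero, add_zero]
    have e2 : ∑ k ∈ Finset.range (m' + 1 + 1), (k:ℝ)^2 * pb s' p ((k : ℤ) - 1)
        = ((∑ i ∈ s', p i)^2 + ∑ i ∈ s', p i * (1 - p i)) + 2 * (∑ i ∈ s', p i) + 1 := by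
      rw [Finset.sum_range_succ']
      have h0 : ((0:ℕ):ℝ)^2 * pb s' p (((0:ℕ) : ℤ) - 1) = 0 := by norm_num
      have hsucc : ∀ k : ℕ, (((k+1:ℕ)):ℝ)^2 * pb s' p ((((k+1:ℕ)) : ℤ) - 1)
          = ((k:ℝ)^2 * pb s' p (k : ℤ)) + 2 * ((k:ℝ) * pb s' p (k : ℤ)) + pb s' p (k : ℤ) := by
        intro k
        have : (((k+1:ℕ)) : ℤ) - 1 = (k:ℤ) := by push_cast; ring
        rw [this]; push_cast; ring
      simp only [hsucc, h0]
      rw [Finset.sum_add_distrib, Finset.sum_add_distrib, ih m' hcard, ← Finset.mul_sum,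
        pb_sum_id m' hcard, pb_sum_one m' hcard, add_zero]
    rw [e1, e2, Finset.sum_insert hi, Finset.sum_insert hi]
    ring
noncomputable def binomZ (m : ℕ) (t : ℝ) (w : ℤ) : ℝ :=
  if 0 ≤ w then (m.choose w.toNat : ℝ) * t ^ w.toNat * (1 - t) ^ (m - w.toNat) else 0

lemma binomZ_neg {m : ℕ} {t : ℝ} {w : ℤ} (hw : w < 0) : binomZ m t w = 0 := by
  simp [binomZ, not_le.mpr hw]

lemma binomZ_nonneg {m : ℕ} {t : ℝ} (ht0 : 0 ≤ t) (ht1 : t ≤ 1) (w : ℤ) :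
    0 ≤ binomZ m t w := by
  unfold binomZ
  split
  · have h1 : (0:ℝ) ≤ 1 - t := by linarith
    positivity
  · exact le_refl 0

lemma binomZ_zero_m (t : ℝ) (w : ℤ) : binomZ 0 t w = if w = 0 then 1 else 0 := by
  unfold binomZ
  rcases lt_trichotomy w 0 with h | h | h
  · rw [if_neg (not_le.mpr h), if_neg (by omega)]
  · subst h; norm_num
  · rw [if_pos h.le, if_neg (by omega)]
    rw [Nat.choose_eq_zero_of_lt (by omega)]
    norm_num

lemma binomZ_succ (m : ℕ) (t : ℝ) (w : ℤ) :
    binomZ (m + 1) t w = (1 - t) * binomZ m t w + t * binomZ m t (w - 1) := by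
  rcases lt_trichotomy w 0 with hw | hw | hw
  · rw [binomZ_neg hw, binomZ_neg hw, binomZ_neg (by omega)]; ring
  · subst hw
    have hneg : binomZ m t (0 - 1) = 0 := binomZ_neg (by norm_num)
    rw [hneg, mul_zero, add_zero]
    unfold binomZ
    rw [if_pos le_rfl, if_pos le_rfl]
    simp only [Int.toNat_zero, Nat.choose_zero_right, Nat.cast_one, pow_zero, Nat.sub_zero]
    rw [pow_succ]
    ring
  · have hw0 : (0:ℤ) ≤ w := hw.le
    obtain ⟨u, hu⟩ : ∃ u : ℕ, w.toNat = u + 1 := ⟨w.toNat - 1, by omega⟩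
    have hu' : (w - 1).toNat = u := by omega
    unfold binomZ
    rw [if_pos hw0, if_pos hw0, if_pos (by omega), hu, hu']
    rcases le_or_gt (u + 1) m with hum | hum
    · have e1 : m + 1 - (u + 1) = (m - (u + 1)) + 1 := by omega
      have e2 : m - u = (m - (u + 1)) + 1 := by omega
      rw [e1, e2, Nat.choose_succ_succ m u]
      push_cast
      ring
    · rcases eq_or_lt_of_le (Nat.le_of_lt_succ hum) with hum2 | hum2
      · -- m = u, w.toNat = m+1
        have hm : m = u := by omega
        subst hm
        have e1 : m + 1 - (m + 1) = 0 := by omega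
        have e2 : m - m = 0 := by omega
        rw [e1, e2, Nat.choose_self, Nat.choose_eq_zero_of_lt (by omega), Nat.choose_self]
        push_cast
        ring
      · rw [Nat.choose_eq_zero_of_lt (by omega), Nat.choose_eq_zero_of_lt (by omega),
          Nat.choose_eq_zero_of_lt (by omega)]
        norm_num

lemma binomZ_mono {m : ℕ} {t : ℝ} {w : ℤ} (ht0 : 0 < t) (ht1 : t < 1)
    (hw : (w : ℝ) ≤ t * m) : binomZ m t (w - 1) ≤ binomZ m t w := by
  rcases lt_or_ge w 1 with hw1 | hw1
  · rw [binomZ_neg (by omega)]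
    exact binomZ_nonneg ht0.le ht1.le w
  · obtain ⟨u', hu⟩ : ∃ u' : ℕ, w.toNat = u' + 1 := ⟨w.toNat - 1, by omega⟩
    have hu' : (w - 1).toNat = u' := by omega
    have hwr : ((u' : ℝ) + 1) ≤ t * m := by
      have : ((w.toNat : ℤ) : ℝ) = (w : ℝ) := by
        rw [Int.toNat_of_nonneg (by omega)]
      rw [hu] at this
      push_cast at this
      linarith
    have hum : u' + 1 < m := by
      by_contra hcon
      push_neg at hcon
      have hm : (m : ℝ) ≤ (u' : ℝ) + 1 := by exact_mod_cast hcon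
      nlinarith
    have e2 : m - u' = (m - (u' + 1)) + 1 := by omega
    unfold binomZ
    rw [if_pos (by omega), if_pos (by omega), hu, hu', e2]
    set e := m - (u' + 1) with he
    have key : (m.choose u' : ℝ) * (1 - t) ≤ (m.choose (u' + 1) : ℝ) * t := by
      have hch0 := Nat.choose_succ_right_eq m u'
      have hch : ((m.choose (u' + 1) : ℝ)) * ((u' : ℝ) + 1) = (m.choose u' : ℝ) * ((m : ℝ) - u') := by
        have : ((m.choose (u' + 1) * (u' + 1) : ℕ) : ℝ) = ((m.choose u' * (m - u') : ℕ) : ℝ) := by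
          exact_mod_cast congrArg (Nat.cast (R := ℝ)) hch0
        push_cast [Nat.cast_sub (by omega : u' ≤ m)] at this
        linarith [this]
      have hC' : (0:ℝ) ≤ (m.choose u' : ℝ) := Nat.cast_nonneg _
      have hstep : ((u' : ℝ) + 1) * (1 - t) ≤ ((m : ℝ) - u') * t := by nlinarith
      have h3 : (m.choose u' : ℝ) * (1 - t) * ((u' : ℝ) + 1) ≤ (m.choose (u' + 1) : ℝ) * t * ((u' : ℝ) + 1) := by
        have h4 : (m.choose u' : ℝ) * (((u' : ℝ) + 1) * (1 - t)) ≤ (m.choose u' : ℝ) * (((m : ℝ) - u') * t) :=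
          mul_le_mul_of_nonneg_left hstep hC'
        nlinarith [hch]
      exact le_of_mul_le_mul_right h3 (by positivity)
    have hX : (0:ℝ) ≤ t ^ u' * (1 - t) ^ e := by
      have : (0:ℝ) < 1 - t := by linarith
      positivity
    calc (m.choose u' : ℝ) * t ^ u' * (1 - t) ^ (e + 1)
        = ((m.choose u' : ℝ) * (1 - t)) * (t ^ u' * (1 - t) ^ e) := by rw [pow_succ]; ring
      _ ≤ ((m.choose (u' + 1) : ℝ) * t) * (t ^ u' * (1 - t) ^ e) :=
          mul_le_mul_of_nonneg_right key hX
      _ = (m.choose (u' + 1) : ℝ) * t ^ (u' + 1) * (1 - t) ^ e := by rw [pow_succ]; ring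
open scoped Classical in
lemma pb_struct {n : ℕ} {p : Fin n → ℝ} {t : ℝ} (ht0 : t ≠ 0) (ht1 : t ≠ 1)
    (s : Finset (Fin n)) (hstruct : ∀ l ∈ s, p l = t ∨ p l = 0 ∨ p l = 1) : ∀ z : ℤ,
      pb s p z = binomZ (s.filter (fun l => p l = t)).card t
        (z - ((s.filter (fun l => p l = 1)).card : ℤ)) := by
  induction s using Finset.induction_on with
  | empty =>
    intro z
    rw [pb_empty]
    simp only [Finset.filter_empty, Finset.card_empty, Nat.cast_zero, sub_zero, binomZ_zero_m]
  | @insert a s' hi ih =>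
    intro z
    have hs' : ∀ l ∈ s', p l = t ∨ p l = 0 ∨ p l = 1 :=
      fun l hl => hstruct l (Finset.mem_insert_of_mem hl)
    have ih' := ih hs'
    rw [pb_insert hi]
    rcases hstruct a (Finset.mem_insert_self a s') with ha | ha | ha
    · rw [Finset.filter_insert, Finset.filter_insert, if_pos ha,
        if_neg (fun h : p a = 1 => ht1 (ha ▸ h)),
        Finset.card_insert_of_notMem (fun h => hi (Finset.mem_of_mem_filter a h))]
      rw [ih' z, ih' (z-1), ha, binomZ_succ]
      have harg : z - 1 - ((s'.filter (fun l => p l = 1)).card : ℤ)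
          = z - ((s'.filter (fun l => p l = 1)).card : ℤ) - 1 := by ring
      rw [harg]
    · rw [Finset.filter_insert, Finset.filter_insert,
        if_neg (fun h : p a = t => ht0 (ha ▸ h.symm ▸ rfl)),
        if_neg (by rw [ha]; norm_num)]
      rw [ih' z, ih' (z-1), ha]
      ring
    · rw [Finset.filter_insert, Finset.filter_insert,
        if_neg (fun h : p a = t => ht1 ((ha ▸ h).symm)),
        if_pos ha,
        Finset.card_insert_of_notMem (fun h => hi (Finset.mem_of_mem_filter a h))]
      rw [ih' z, ih' (z-1), ha]
      have harg : z - 1 - ((s'.filter (fun l => p l = 1)).card : ℤ)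
          = z - (((s'.filter (fun l => p l = 1)).card + 1 : ℕ) : ℤ) := by push_cast; ring
      rw [harg]
      ring
open scoped Classical in
lemma pb_sum_of_struct {n : ℕ} {p : Fin n → ℝ} {t : ℝ} (ht1 : t ≠ 1)
    (s : Finset (Fin n)) (hstruct : ∀ l ∈ s, p l = t ∨ p l = 0 ∨ p l = 1) :
    ∑ i ∈ s, p i = t * ((s.filter (fun l => p l = t)).card : ℝ)
      + ((s.filter (fun l => p l = 1)).card : ℝ) := by
  rw [← Finset.sum_filter_add_sum_filter_not s (fun l => p l = t)]
  congr 1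
  · rw [Finset.sum_congr rfl (fun l hl => (Finset.mem_filter.mp hl).2),
      Finset.sum_const, nsmul_eq_mul, mul_comm]
  · have h1 : ∀ l ∈ s.filter (fun l => ¬ p l = t), p l = if p l = 1 then (1:ℝ) else 0 := by
      intro l hl
      rw [Finset.mem_filter] at hl
      rcases hstruct l hl.1 with h | h | h
      · exact absurd h hl.2
      · rw [h, if_neg (by norm_num)]
      · rw [h]; norm_num
    rw [Finset.sum_congr rfl h1, Finset.sum_boole]
    congr 2
    rw [Finset.filter_filter]
    apply Finset.filter_congr
    intro l _
    constructor
    · rintro ⟨_, h⟩; exact h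
    · intro h; exact ⟨fun h' => ht1 (h' ▸ h.symm ▸ rfl), h⟩

open scoped Classical in
lemma pb_mono_of_struct {n : ℕ} {s : Finset (Fin n)} {p : Fin n → ℝ}
    (hp : ∀ i ∈ s, 0 ≤ p i ∧ p i ≤ 1)
    (h : ∀ i ∈ s, ∀ j ∈ s, 0 < p i → p i < 1 → 0 < p j → p j < 1 → p i = p j)
    {z : ℤ} (hz : (z : ℝ) ≤ ∑ i ∈ s, p i) :
    pb s p (z - 1) ≤ pb s p z := by
  -- find a suitable t
  obtain ⟨t, ht0, ht1, hstruct⟩ :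
      ∃ t : ℝ, 0 < t ∧ t < 1 ∧ ∀ l ∈ s, p l = t ∨ p l = 0 ∨ p l = 1 := by
    by_cases hex : ∃ i ∈ s, 0 < p i ∧ p i < 1
    · obtain ⟨i₀, hi₀, hi₀0, hi₀1⟩ := hex
      refine ⟨p i₀, hi₀0, hi₀1, fun l hl => ?_⟩
      rcases lt_or_ge 0 (p l) with h0 | h0
      · rcases lt_or_ge (p l) 1 with h1 | h1
        · exact Or.inl (h l hl i₀ hi₀ h0 h1 hi₀0 hi₀1)
        · exact Or.inr (Or.inr (le_antisymm (hp l hl).2 h1))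
      · exact Or.inr (Or.inl (le_antisymm h0 (hp l hl).1))
    · push_neg at hex
      refine ⟨1/2, by norm_num, by norm_num, fun l hl => ?_⟩
      rcases lt_or_ge 0 (p l) with h0 | h0
      · exact Or.inr (Or.inr (le_antisymm (hp l hl).2 (hex l hl h0)))
      · exact Or.inr (Or.inl (le_antisymm h0 (hp l hl).1))
  have hsum := pb_sum_of_struct (ne_of_lt ht1) s hstruct
  set M := (s.filter (fun l => p l = t)).card with hM
  set A := (s.filter (fun l => p l = 1)).card with hA
  have heval := pb_struct (ne_of_gt ht0) (ne_of_lt ht1) s hstruct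
  rw [heval z, heval (z - 1)]
  have harg : z - 1 - (A : ℤ) = z - (A : ℤ) - 1 := by ring
  rw [harg]
  apply binomZ_mono ht0 ht1
  have : ((z - (A : ℤ) : ℤ) : ℝ) = (z : ℝ) - (A : ℝ) := by push_cast; ring
  rw [this]
  rw [hsum] at hz
  linarith
lemma pb_continuous {n : ℕ} (s : Finset (Fin n)) (w : ℤ) :
    Continuous (fun q : Fin n → ℝ => pb s q w) := by
  unfold pb
  by_cases h : 0 ≤ w
  · simp only [if_pos h]
    apply continuous_finset_sum
    intro A _
    exact ((continuous_finset_prod A (fun i _ => continuous_apply i)).mul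
      (continuous_finset_prod _ (fun i _ => continuous_const.sub (continuous_apply i))))
  · simp only [if_neg h]; exact continuous_const

lemma sum_two_diff {n : ℕ} {s : Finset (Fin n)} {f g : Fin n → ℝ} {i j : Fin n}
    (hi : i ∈ s) (hj : j ∈ s) (hij : i ≠ j)
    (hoff : ∀ l ∈ s, l ≠ i → l ≠ j → f l = g l) :
    ∑ l ∈ s, f l - ∑ l ∈ s, g l = (f i - g i) + (f j - g j) := by
  rw [← Finset.sum_sub_distrib]
  rw [← Finset.sum_subset (show ({i, j} : Finset (Fin n)) ⊆ s by
      intro x hx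
      rcases Finset.mem_insert.mp hx with h | h
      · exact h ▸ hi
      · exact (Finset.mem_singleton.mp h) ▸ hj)
    (fun x hx hx2 => by
      have hxi : x ≠ i := fun h => hx2 (by rw [h]; exact Finset.mem_insert_self _ _)
      have hxj : x ≠ j := fun h => hx2 (by
        rw [h]; exact Finset.mem_insert.mpr (Or.inr (Finset.mem_singleton_self j)))
      rw [hoff x hx hxi hxj, sub_self])]
  rw [Finset.sum_pair hij]

set_option maxHeartbeats 2000000 in
theorem pb_incr {n : ℕ} {s : Finset (Fin n)} {p : Fin n → ℝ}
    (hp : ∀ i ∈ s, 0 ≤ p i ∧ p i ≤ 1) {z : ℤ} (hz : (z : ℝ) ≤ ∑ i ∈ s, p i) :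
    pb s p (z - 1) ≤ pb s p z := by
  set c₀ : ℝ := ∑ i ∈ s, p i with hc₀
  set K : Set (Fin n → ℝ) :=
    (Set.univ.pi (fun _ => Set.Icc (0:ℝ) 1)) ∩ {q | ∑ i ∈ s, q i = c₀} with hKdef
  have hsumcont : Continuous (fun q : Fin n → ℝ => ∑ i ∈ s, q i) :=
    continuous_finset_sum s (fun i _ => continuous_apply i)
  have hKc : IsCompact K :=
    (isCompact_univ_pi (fun _ => isCompact_Icc)).inter_right
      (isClosed_eq hsumcont continuous_const)
  set p₀ : Fin n → ℝ := fun i => if i ∈ s then p i else 0 with hp₀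
  have hp₀K : p₀ ∈ K := by
    constructor
    · rw [Set.mem_univ_pi]
      intro i
      by_cases h : i ∈ s
      · simp only [hp₀, if_pos h]; exact ⟨(hp i h).1, (hp i h).2⟩
      · simp only [hp₀, if_neg h]; exact ⟨le_refl 0, by norm_num⟩
    · show ∑ i ∈ s, p₀ i = c₀
      apply Finset.sum_congr rfl
      intro i hi; simp only [hp₀, if_pos hi]
  set F : (Fin n → ℝ) → ℝ := fun q => pb s q z - pb s q (z - 1) with hF
  have hFc : Continuous F := (pb_continuous s z).sub (pb_continuous s (z - 1))
  obtain ⟨q₀, hq₀K, hq₀min⟩ := hKc.exists_isMinOn ⟨p₀, hp₀K⟩ hFc.continuousOn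
  set K' : Set (Fin n → ℝ) := K ∩ {q | F q = F q₀} with hK'def
  have hK'c : IsCompact K' := hKc.inter_right (isClosed_eq hFc continuous_const)
  set G : (Fin n → ℝ) → ℝ := fun q => ∑ i ∈ s, (q i)^2 with hG
  have hGc : Continuous G := continuous_finset_sum s (fun i _ => (continuous_apply i).pow 2)
  obtain ⟨q₁, hq₁K', hq₁max⟩ := hK'c.exists_isMaxOn ⟨q₀, hq₀K, rfl⟩ hGc.continuousOn
  obtain ⟨hq₁K, hq₁F⟩ := hq₁K'
  have hq₁box : ∀ i, 0 ≤ q₁ i ∧ q₁ i ≤ 1 := by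
    intro i
    have h2 := hq₁K.1
    rw [Set.mem_univ_pi] at h2
    exact ⟨(h2 i).1, (h2 i).2⟩
  have hq₁sum : ∑ i ∈ s, q₁ i = c₀ := hq₁K.2
  have hminq₁ : ∀ x ∈ K, F q₁ ≤ F x := by
    intro x hx
    rw [hq₁F]
    exact isMinOn_iff.mp hq₀min x hx
  have hclaim : ∀ i ∈ s, ∀ j ∈ s, 0 < q₁ i → q₁ i < 1 →
      0 < q₁ j → q₁ j < 1 → q₁ i < q₁ j → False := by
    intro i hi j hj h0i h1i h0j h1j hlt
    have hij : i ≠ j := fun h => absurd (h ▸ hlt) (lt_irrefl _)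
    set a := q₁ i with ha
    set b := q₁ j with hb
    set d : ℝ := b - a with hd
    have hdpos : 0 < d := by rw [hd]; linarith
    set ε : ℝ := min (min a (1 - b)) (d / 2) with hε
    have hεpos : 0 < ε := lt_min (lt_min h0i (by linarith)) (by linarith)
    have hεa : ε ≤ a := le_trans (min_le_left _ _) (min_le_left _ _)
    have hεb : ε ≤ 1 - b := le_trans (min_le_left _ _) (min_le_right _ _)
    have hεd : ε ≤ d / 2 := min_le_right _ _
    set Q : ℝ → (Fin n → ℝ) :=
      fun e => Function.update (Function.update q₁ i (a + e)) j (b - e) with hQdef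
    have hQi : ∀ e, Q e i = a + e := by
      intro e
      show Function.update (Function.update q₁ i (a + e)) j (b - e) i = a + e
      rw [Function.update_of_ne hij, Function.update_self]
    have hQj : ∀ e, Q e j = b - e := by
      intro e
      show Function.update (Function.update q₁ i (a + e)) j (b - e) j = b - e
      rw [Function.update_self]
    have hQl : ∀ e, ∀ l, l ≠ i → l ≠ j → Q e l = q₁ l := by
      intro e l hli hlj
      show Function.update (Function.update q₁ i (a + e)) j (b - e) l = q₁ l
      rw [Function.update_of_ne hlj, Function.update_of_ne hli]
    have hQsum : ∀ e, ∑ l ∈ s, Q e l = c₀ := by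
      intro e
      have h2 := sum_two_diff hi hj hij (f := Q e) (g := q₁)
        (fun l _ hli hlj => hQl e l hli hlj)
      rw [hQi, hQj] at h2
      have : ∑ l ∈ s, Q e l - ∑ l ∈ s, q₁ l = 0 := by rw [h2]; ring
      rw [hq₁sum] at this
      linarith
    have hQK : ∀ e : ℝ, |e| ≤ ε → Q e ∈ K := by
      intro e he
      obtain ⟨he1, he2⟩ := abs_le.mp he
      constructor
      · rw [Set.mem_univ_pi]
        intro l
        by_cases hlj : l = j
        · subst hlj
          rw [hQj]
          constructor
          · linarith
          · linarith
        by_cases hli : l = i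
        · subst hli
          rw [hQi]
          constructor
          · linarith
          · linarith
        · rw [hQl e l hli hlj]
          exact ⟨(hq₁box l).1, (hq₁box l).2⟩
      · exact hQsum e
    -- the slice decomposition
    set rest : Finset (Fin n) := (s.erase i).erase j with hrest
    set H : ℤ → ℝ := fun w => pb rest q₁ w with hH
    set Bc : ℝ := ((H z - H (z-1)) - 2 * (H (z-1) - H (z-2))) + (H (z-2) - H (z-3)) with hBc
    set Ac : ℝ := (1 - (a + b)) * (H z - H (z-1)) + (a + b) * (H (z-1) - H (z-2)) with hAc
    have hrw1 : z - 1 - 1 = z - 2 := by ring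
    have hrw2 : z - 1 - 2 = z - 3 := by ring
    have hcongrQ : ∀ e, ∀ w, pb rest (Q e) w = H w := by
      intro e w
      apply pb_congr
      intro l hl
      have hlj : l ≠ j := (Finset.mem_erase.mp hl).1
      have hli : l ≠ i := (Finset.mem_erase.mp ((Finset.mem_erase.mp hl).2)).1
      exact hQl e l hli hlj
    have hFQ : ∀ e : ℝ, F (Q e) = Ac + ((a + e) * (b - e)) * Bc := by
      intro e
      show pb s (Q e) z - pb s (Q e) (z - 1) = Ac + ((a + e) * (b - e)) * Bc
      rw [pb_pair hi hj hij z, pb_pair hi hj hij (z-1), hrw1, hrw2]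
      rw [hcongrQ e z, hcongrQ e (z-1), hcongrQ e (z-2), hcongrQ e (z-3)]
      rw [hQi, hQj, hAc, hBc]
      ring
    have hFq₁ : F q₁ = Ac + (a * b) * Bc := by
      show pb s q₁ z - pb s q₁ (z - 1) = Ac + (a * b) * Bc
      rw [pb_pair hi hj hij z, pb_pair hi hj hij (z-1), hrw1, hrw2]
      rw [hAc, hBc, ← ha, ← hb]
      show _ = _
      ring
    have hB0 : Bc = 0 := by
      have h1 : F q₁ ≤ F (Q ε) := hminq₁ _ (hQK ε (by rw [abs_of_pos hεpos]))
      have h2 : F q₁ ≤ F (Q (-ε)) := hminq₁ _ (hQK (-ε) (by rw [abs_neg, abs_of_pos hεpos]))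
      rw [hFQ ε, hFq₁] at h1
      rw [hFQ (-ε), hFq₁] at h2
      -- h1 : A + ab B ≤ A + (a+ε)(b-ε) B, (a+ε)(b-ε) - ab = ε(d-ε) > 0
      have hc1 : (a + ε) * (b - ε) - a * b = ε * (d - ε) := by rw [hd]; ring
      have hc2 : (a + -ε) * (b - -ε) - a * b = -(ε * (d + ε)) := by rw [hd]; ring
      have hpos1 : 0 < ε * (d - ε) := mul_pos hεpos (by linarith)
      have hpos2 : 0 < ε * (d + ε) := mul_pos hεpos (by linarith)
      nlinarith [h1, h2, hc1, hc2, hpos1, hpos2]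
    have hQ'K' : Q (-ε) ∈ K' := by
      refine ⟨hQK (-ε) (by rw [abs_neg, abs_of_pos hεpos]), ?_⟩
      show F (Q (-ε)) = F q₀
      rw [hFQ (-ε), hB0, ← hq₁F, hFq₁, hB0]
      ring
    have hGdiff : G (Q (-ε)) - G q₁ = 2 * ε * (d + ε) := by
      have h2 := sum_two_diff hi hj hij (f := fun l => (Q (-ε) l)^2) (g := fun l => (q₁ l)^2)
        (fun l _ hli hlj => show Q (-ε) l ^ 2 = q₁ l ^ 2 by rw [hQl (-ε) l hli hlj])
      have h3 : G (Q (-ε)) - G q₁ =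
          Q (-ε) i ^ 2 - q₁ i ^ 2 + (Q (-ε) j ^ 2 - q₁ j ^ 2) := h2
      rw [h3, hQi, hQj, ← ha, ← hb, hd]
      ring
    have hle := isMaxOn_iff.mp hq₁max _ hQ'K'
    show False
    have : G (Q (-ε)) ≤ G q₁ := hle
    have hpos3 : (0:ℝ) < 2 * ε * (d + ε) :=
      mul_pos (mul_pos (by norm_num : (0:ℝ) < 2) hεpos) (by linarith : (0:ℝ) < d + ε)
    linarith [hGdiff, hpos3, this]
  have hshape : ∀ i ∈ s, ∀ j ∈ s, 0 < q₁ i → q₁ i < 1 → 0 < q₁ j → q₁ j < 1 → q₁ i = q₁ j := by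
    intro i hi j hj h0i h1i h0j h1j
    rcases lt_trichotomy (q₁ i) (q₁ j) with h | h | h
    · exact absurd (hclaim i hi j hj h0i h1i h0j h1j h) id
    · exact h
    · exact absurd (hclaim j hj i hi h0j h1j h0i h1i h) id
  have hmono := pb_mono_of_struct (fun i _ => hq₁box i) hshape
    (z := z) (by rw [hq₁sum]; exact hz)
  have h0F : (0:ℝ) ≤ F q₁ := by
    show (0:ℝ) ≤ pb s q₁ z - pb s q₁ (z - 1)
    linarith [hmono]
  have hFp₀ : F q₁ ≤ F p₀ := hminq₁ p₀ hp₀K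
  have hFp₀eq : F p₀ = pb s p z - pb s p (z - 1) := by
    show pb s p₀ z - pb s p₀ (z - 1) = pb s p z - pb s p (z - 1)
    rw [pb_congr (p := p₀) (q := p) (fun i hi => by simp only [hp₀, if_pos hi]) z,
      pb_congr (p := p₀) (q := p) (fun i hi => by simp only [hp₀, if_pos hi]) (z-1)]
  rw [hFp₀eq] at hFp₀
  linarith
theorem pb_decr {n : ℕ} {s : Finset (Fin n)} {p : Fin n → ℝ}
    (hp : ∀ i ∈ s, 0 ≤ p i ∧ p i ≤ 1) {z : ℤ} (hz : (∑ i ∈ s, p i) + 1 ≤ (z : ℝ)) :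
    pb s p z ≤ pb s p (z - 1) := by
  rcases lt_or_ge (s.card : ℤ) z with hcz | hcz
  · rw [pb_of_card_lt _ hcz]
    exact pb_nonneg hp (z - 1)
  · have hsum0 : (0:ℝ) ≤ ∑ i ∈ s, p i := Finset.sum_nonneg fun i hi => (hp i hi).1
    have hz1 : (1:ℝ) ≤ (z:ℝ) := by linarith
    have hz1' : (1:ℤ) ≤ z := by exact_mod_cast hz1
    set pt : Fin n → ℝ := fun i => 1 - p i with hpt
    have hpts : ∑ i ∈ s, pt i = (s.card : ℝ) - ∑ i ∈ s, p i := by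
      rw [hpt]
      rw [Finset.sum_sub_distrib, Finset.sum_const, nsmul_eq_mul, mul_one]
    have hptb : ∀ i ∈ s, 0 ≤ pt i ∧ pt i ≤ 1 := by
      intro i hi
      constructor
      · simp only [hpt]; linarith [(hp i hi).2]
      · simp only [hpt]; linarith [(hp i hi).1]
    have hcond : (((s.card : ℤ) - z + 1 : ℤ) : ℝ) ≤ ∑ i ∈ s, pt i := by
      rw [hpts]
      push_cast
      linarith
    have h1 := pb_incr hptb (z := (s.card : ℤ) - z + 1) hcond
    have e1 : (s.card : ℤ) - z + 1 - 1 = (s.card : ℤ) - z := by ring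
    have e2 : (s.card : ℤ) - z + 1 = (s.card : ℤ) - (z - 1) := by ring
    rw [e1] at h1
    calc pb s p z = pb s pt ((s.card : ℤ) - z) := (pb_reflect s p z).symm
      _ ≤ pb s pt ((s.card : ℤ) - z + 1) := by rw [← e1] at h1 ⊢; exact h1
      _ = pb s pt ((s.card : ℤ) - (z - 1)) := by rw [e2]
      _ = pb s p (z - 1) := pb_reflect s p (z - 1)

lemma sum_erase_erase {n : ℕ} {i j : Fin n} (hij : i ≠ j) (x : Fin n → ℝ) :
    ∑ l ∈ (Finset.univ.erase i).erase j, x l = (∑ l, x l) - x i - x j := by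
  have hj : j ∈ Finset.univ.erase i := Finset.mem_erase.mpr ⟨hij.symm, Finset.mem_univ j⟩
  have h1 : ∑ l ∈ Finset.univ.erase i, x l = (∑ l, x l) - x i := by
    have := Finset.add_sum_erase Finset.univ x (Finset.mem_univ i)
    linarith
  have h2 : ∑ l ∈ (Finset.univ.erase i).erase j, x l
      = (∑ l ∈ Finset.univ.erase i, x l) - x j := by
    have := Finset.add_sum_erase (Finset.univ.erase i) x hj
    linarith
  rw [h2, h1]

lemma cdf_step {n : ℕ} {x x' : Fin n → ℝ} {i j : Fin n} (hij : i ≠ j)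
    (hoff : ∀ l, l ≠ i → l ≠ j → x' l = x l)
    (hsum : x' i + x' j = x i + x j) (k : ℕ) :
    cdf (pbPMF n x') k - cdf (pbPMF n x) k
      = (x' i * x' j - x i * x j) *
        (pb ((Finset.univ.erase i).erase j) x (k : ℤ)
          - pb ((Finset.univ.erase i).erase j) x ((k : ℤ) - 1)) := by
  set rest : Finset (Fin n) := (Finset.univ.erase i).erase j with hrest
  set H : ℤ → ℝ := fun w => pb rest x w with hH
  have hcongr : ∀ w, pb rest x' w = H w := by
    intro w
    apply pb_congr
    intro l hl
    have hlj : l ≠ j := (Finset.mem_erase.mp hl).1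
    have hli : l ≠ i := (Finset.mem_erase.mp ((Finset.mem_erase.mp hl).2)).1
    exact hoff l hli hlj
  have hdiff : ∀ m : ℕ, pbPMF n x' m - pbPMF n x m
      = (x' i * x' j - x i * x j) *
        ((H m - H ((m:ℤ) - 1)) - (H ((m:ℤ) - 1) - H ((m:ℤ) - 2))) := by
    intro m
    rw [pbPMF_eq_pb, pbPMF_eq_pb]
    rw [pb_pair (Finset.mem_univ i) (Finset.mem_univ j) hij (m : ℤ),
      pb_pair (p := x) (Finset.mem_univ i) (Finset.mem_univ j) hij (m : ℤ)]
    rw [hcongr, hcongr, hcongr]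
    have hx'j : x' j = x i + x j - x' i := by linarith
    rw [hx'j]
    ring
  unfold cdf
  rw [← Finset.sum_sub_distrib]
  rw [Finset.sum_congr rfl (fun m _ => hdiff m), ← Finset.mul_sum]
  congr 1
  set φ : ℕ → ℝ := fun m => H ((m:ℤ) - 1) - H ((m:ℤ) - 2) with hφ
  have hterm : ∀ m : ℕ, (H m - H ((m:ℤ) - 1)) - (H ((m:ℤ) - 1) - H ((m:ℤ) - 2))
      = φ (m + 1) - φ m := by
    intro m
    simp only [hφ]
    have e1 : ((m + 1 : ℕ) : ℤ) - 1 = (m : ℤ) := by push_cast; ring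
    have e2 : ((m + 1 : ℕ) : ℤ) - 2 = (m : ℤ) - 1 := by push_cast; ring
    rw [e1, e2]
  rw [Finset.sum_congr rfl (fun m _ => hterm m), Finset.sum_range_sub φ]
  simp only [hφ]
  have e5 : ((k + 1 : ℕ) : ℤ) - 1 = (k : ℤ) := by push_cast; ring
  have e6 : ((k + 1 : ℕ) : ℤ) - 2 = (k : ℤ) - 1 := by push_cast; ring
  have hH1 : H (((0:ℕ):ℤ) - 1) = 0 := pb_of_neg (by norm_num)
  have hH2 : H (((0:ℕ):ℤ) - 2) = 0 := pb_of_neg (by norm_num)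
  rw [e5, e6, hH1, hH2]
  ring
noncomputable def partSum {n : ℕ} (x : Fin n → ℝ) (k : ℕ) : ℝ :=
  ∑ l ∈ Finset.univ.filter (fun l : Fin n => (l : ℕ) < k), x l

set_option maxHeartbeats 2000000 in
lemma chain {n : ℕ} (y : Fin n → ℝ) (hy : ∀ l, 0 ≤ y l ∧ y l ≤ 1)
    (hymono : Monotone y) :
    ∀ N : ℕ, ∀ x : Fin n → ℝ, (∀ l, 0 ≤ x l ∧ x l ≤ 1) →
      ((Finset.univ.filter (fun l => x l ≠ y l)).card ≤ N) →
      (∀ k : ℕ, k ≤ n → partSum x k ≤ partSum y k) →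
      ((∑ l, x l) = ∑ l, y l) →
      ((∀ k : ℕ, (k : ℝ) ≤ (∑ l, y l) - 2 → cdf (pbPMF n x) k ≤ cdf (pbPMF n y) k) ∧
       (∀ k : ℕ, (∑ l, y l) + 2 ≤ (k : ℝ) → cdf (pbPMF n y) k ≤ cdf (pbPMF n x) k) ∧
       (∑ l, (y l)^2) ≤ ∑ l, (x l)^2) := by
  intro N
  induction N with
  | zero =>
    intro x hx hcard hPS htot
    have hxy : x = y := by
      funext l
      by_contra hne
      have hl : l ∈ Finset.univ.filter (fun l => x l ≠ y l) :=
        Finset.mem_filter.mpr ⟨Finset.mem_univ l, hne⟩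
      have := Finset.card_pos.mpr ⟨l, hl⟩
      omega
    subst hxy
    exact ⟨fun k _ => le_refl _, fun k _ => le_refl _, le_refl _⟩
  | succ N ih =>
    intro x hx hcard hPS htot
    by_cases hxy : x = y
    · subst hxy; exact ⟨fun k _ => le_refl _, fun k _ => le_refl _, le_refl _⟩
    set D := Finset.univ.filter (fun l => x l ≠ y l) with hD
    have hDne : D.Nonempty := by
      rcases Finset.eq_empty_or_nonempty D with h | h
      · exfalso
        apply hxy
        funext l
        by_contra hne
        have hl : l ∈ D := Finset.mem_filter.mpr ⟨Finset.mem_univ l, hne⟩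
        rw [h] at hl
        exact absurd hl (Finset.notMem_empty l)
      · exact h
    set i := D.min' hDne with hidef
    have hiD : i ∈ D := D.min'_mem hDne
    have hine : x i ≠ y i := (Finset.mem_filter.mp hiD).2
    have hlow : ∀ l : Fin n, (l : ℕ) < (i : ℕ) → x l = y l := by
      intro l hl
      by_contra hne
      have hlD : l ∈ D := Finset.mem_filter.mpr ⟨Finset.mem_univ l, hne⟩
      have h2 := D.min'_le l hlD
      rw [Fin.le_def] at h2
      omega
    have hsplit : ∀ v : Fin n → ℝ, partSum v ((i:ℕ)+1) = partSum v (i:ℕ) + v i := by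
      intro v
      unfold partSum
      have hset : Finset.univ.filter (fun l : Fin n => (l:ℕ) < (i:ℕ)+1)
          = insert i (Finset.univ.filter (fun l : Fin n => (l:ℕ) < (i:ℕ))) := by
        ext l
        simp only [Finset.mem_insert, Finset.mem_filter, Finset.mem_univ, true_and]
        constructor
        · intro h
          rcases Nat.lt_succ_iff_lt_or_eq.mp h with h | h
          · exact Or.inr h
          · exact Or.inl (Fin.ext h)
        · intro h
          rcases h with h | h
          · subst h; omega
          · omega
      rw [hset, Finset.sum_insert (by
        intro hmem
        have := (Finset.mem_filter.mp hmem).2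
        omega)]
      ring
    have hPSagree : partSum x (i:ℕ) = partSum y (i:ℕ) := by
      unfold partSum
      apply Finset.sum_congr rfl
      intro l hl
      exact hlow l (Finset.mem_filter.mp hl).2
    have hxiyi : x i < y i := by
      have h1 := hPS ((i:ℕ)+1) (by omega)
      rw [hsplit x, hsplit y, hPSagree] at h1
      rcases lt_or_eq_of_le (by linarith : x i ≤ y i) with h | h
      · exact h
      · exact absurd h hine
    set E := Finset.univ.filter (fun l : Fin n => (i:ℕ) < (l:ℕ) ∧ y l < x l) with hE
    have hEne : E.Nonempty := by
      rcases Finset.eq_empty_or_nonempty E with h | h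
      · exfalso
        have hle : ∀ l ∈ Finset.univ, x l ≤ y l := by
          intro l _
          rcases lt_trichotomy ((l:ℕ)) ((i:ℕ)) with hc | hc | hc
          · exact le_of_eq (hlow l hc)
          · have : l = i := Fin.ext hc
            subst this
            exact hxiyi.le
          · by_contra hcon
            push_neg at hcon
            have hlE : l ∈ E := Finset.mem_filter.mpr ⟨Finset.mem_univ l, hc, hcon⟩
            rw [h] at hlE
            exact absurd hlE (Finset.notMem_empty l)
        have := Finset.sum_lt_sum hle ⟨i, Finset.mem_univ i, hxiyi⟩
        linarith [htot]
      · exact h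
    set j := E.min' hEne with hjdef
    have hjE : j ∈ E := E.min'_mem hEne
    have hij_val : (i:ℕ) < (j:ℕ) := (Finset.mem_filter.mp hjE).2.1
    have hyjxj : y j < x j := (Finset.mem_filter.mp hjE).2.2
    have hij : i ≠ j := fun h => by rw [h] at hij_val; omega
    have hmid : ∀ l : Fin n, (i:ℕ) < (l:ℕ) → (l:ℕ) < (j:ℕ) → x l ≤ y l := by
      intro l h1 h2
      by_contra hcon
      push_neg at hcon
      have hlE : l ∈ E := Finset.mem_filter.mpr ⟨Finset.mem_univ l, h1, hcon⟩
      have h3 := E.min'_le l hlE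
      rw [Fin.le_def] at h3
      omega
    set δ : ℝ := min (y i - x i) (x j - y j) with hδ
    have hδpos : 0 < δ := lt_min (by linarith) (by linarith)
    have hδ1 : x i + δ ≤ y i := by
      have := min_le_left (y i - x i) (x j - y j)
      rw [← hδ] at this
      linarith
    have hδ2 : y j ≤ x j - δ := by
      have := min_le_right (y i - x i) (x j - y j)
      rw [← hδ] at this
      linarith
    have hyij : y i ≤ y j := hymono (by rw [Fin.le_def]; omega)
    have h2δ : x i + δ ≤ x j - δ := le_trans hδ1 (le_trans hyij hδ2)
    set x' : Fin n → ℝ :=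
      Function.update (Function.update x i (x i + δ)) j (x j - δ) with hx'def
    have hx'i : x' i = x i + δ := by
      show Function.update (Function.update x i (x i + δ)) j (x j - δ) i = x i + δ
      rw [Function.update_of_ne hij, Function.update_self]
    have hx'j : x' j = x j - δ := by
      show Function.update (Function.update x i (x i + δ)) j (x j - δ) j = x j - δ
      rw [Function.update_self]
    have hx'l : ∀ l, l ≠ i → l ≠ j → x' l = x l := by
      intro l hli hlj
      show Function.update (Function.update x i (x i + δ)) j (x j - δ) l = x l
      rw [Function.update_of_ne hlj, Function.update_of_ne hli]
    have hx'b : ∀ l, 0 ≤ x' l ∧ x' l ≤ 1 := by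
      intro l
      by_cases hlj : l = j
      · subst hlj
        rw [hx'j]
        exact ⟨by linarith [(hy j).1], by linarith [(hx j).2]⟩
      by_cases hli : l = i
      · subst hli
        rw [hx'i]
        exact ⟨by linarith [(hx i).1], by linarith [(hy i).2]⟩
      · rw [hx'l l hli hlj]
        exact hx l
    have hsumpair : x' i + x' j = x i + x j := by rw [hx'i, hx'j]; ring
    have hprod : x i * x j ≤ x' i * x' j := by
      rw [hx'i, hx'j]
      nlinarith [hδpos.le, h2δ]
    -- the differing set shrinks
    set D' := Finset.univ.filter (fun l => x' l ≠ y l) with hD'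
    have hD'sub : D' ⊆ D := by
      intro l hl
      have hl2 := (Finset.mem_filter.mp hl).2
      apply Finset.mem_filter.mpr
      refine ⟨Finset.mem_univ l, ?_⟩
      by_cases hlj : l = j
      · subst hlj; exact fun h => absurd h (ne_of_gt hyjxj)
      by_cases hli : l = i
      · subst hli; exact hine
      · rw [hx'l l hli hlj] at hl2; exact hl2
    have hD'ss : D' ⊂ D := by
      rcases min_cases (y i - x i) (x j - y j) with ⟨hmin, _⟩ | ⟨hmin, _⟩
      · -- δ = y i - x i, so x' i = y i, i ∉ D'
        refine ⟨hD'sub, fun hsub => ?_⟩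
        have hiD' : i ∈ D' := hsub hiD
        have := (Finset.mem_filter.mp hiD').2
        rw [hx'i] at this
        apply this
        rw [hδ, hmin]
        ring
      · refine ⟨hD'sub, fun hsub => ?_⟩
        have hjD : j ∈ D := Finset.mem_filter.mpr ⟨Finset.mem_univ j, fun h => absurd h (ne_of_gt hyjxj)⟩
        have hjD' : j ∈ D' := hsub hjD
        have := (Finset.mem_filter.mp hjD').2
        rw [hx'j] at this
        apply this
        rw [hδ, hmin]
        ring
    have hcard' : D'.card ≤ N := by
      have := Finset.card_lt_card hD'ss
      omega
    -- partial sums for x'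
    have hPS' : ∀ k : ℕ, k ≤ n → partSum x' k ≤ partSum y k := by
      intro k hk
      rcases le_or_gt k (j:ℕ) with hkj | hkj
      · unfold partSum
        apply Finset.sum_le_sum
        intro l hl
        have hlk : (l:ℕ) < k := (Finset.mem_filter.mp hl).2
        have hlj : l ≠ j := fun h => by subst h; omega
        by_cases hli : l = i
        · subst hli; rw [hx'i]; exact hδ1
        · rw [hx'l l hli hlj]
          rcases lt_trichotomy ((l:ℕ)) ((i:ℕ)) with hc | hc | hc
          · exact le_of_eq (hlow l hc)
          · exact absurd (Fin.ext hc) hli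
          · exact hmid l hc (by omega)
      · have hmemi : i ∈ Finset.univ.filter (fun l : Fin n => (l:ℕ) < k) :=
          Finset.mem_filter.mpr ⟨Finset.mem_univ i, by omega⟩
        have hmemj : j ∈ Finset.univ.filter (fun l : Fin n => (l:ℕ) < k) :=
          Finset.mem_filter.mpr ⟨Finset.mem_univ j, by omega⟩
        have h2 := sum_two_diff hmemi hmemj hij (f := x') (g := x)
          (fun l _ hli hlj => hx'l l hli hlj)
        rw [hx'i, hx'j] at h2
        have : partSum x' k = partSum x k := by
          unfold partSum
          have h3 : (x i + δ - x i) + (x j - δ - x j) = 0 := by ring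
          rw [h3] at h2
          linarith
        rw [this]
        exact hPS k hk
    have htot' : (∑ l, x' l) = ∑ l, y l := by
      have h2 := sum_two_diff (Finset.mem_univ i) (Finset.mem_univ j) hij (f := x') (g := x)
        (fun l _ hli hlj => hx'l l hli hlj)
      rw [hx'i, hx'j] at h2
      have h3 : (x i + δ - x i) + (x j - δ - x j) = 0 := by ring
      rw [h3] at h2
      have : (∑ l, x' l) = ∑ l, x l := by linarith
      rw [this, htot]
    have hsq' : (∑ l, (x' l)^2) ≤ ∑ l, (x l)^2 := by
      have h2 := sum_two_diff (Finset.mem_univ i) (Finset.mem_univ j) hij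
        (f := fun l => (x' l)^2) (g := fun l => (x l)^2)
        (fun l _ hli hlj => show (x' l)^2 = (x l)^2 by rw [hx'l l hli hlj])
      have h3 : ((∑ l, (x' l)^2) : ℝ) - ∑ l, (x l)^2
          = (x' i)^2 - (x i)^2 + ((x' j)^2 - (x j)^2) := h2
      rw [hx'i, hx'j] at h3
      nlinarith [h3, hδpos.le, h2δ]
    obtain ⟨ih1, ih2, ih3⟩ := ih x' hx'b hcard' hPS' htot'
    -- the rest sums
    have hrs : ∑ l ∈ (Finset.univ.erase i).erase j, x l = (∑ l, x l) - x i - x j :=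
      sum_erase_erase hij x
    have hrb : ∀ l ∈ (Finset.univ.erase i).erase j, 0 ≤ x l ∧ x l ≤ 1 := fun l _ => hx l
    refine ⟨?_, ?_, le_trans ih3 hsq'⟩
    · intro k hkk
      have hstep := cdf_step hij (fun l hli hlj => hx'l l hli hlj) hsumpair k
      have hinc : pb ((Finset.univ.erase i).erase j) x ((k:ℤ) - 1)
          ≤ pb ((Finset.univ.erase i).erase j) x (k:ℤ) := by
        apply pb_incr hrb
        rw [hrs, htot]
        push_cast
        have := (hx i).2
        have := (hx j).2
        linarith
      have h4 : cdf (pbPMF n x) k ≤ cdf (pbPMF n x') k := by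
        nlinarith [hstep, hinc, hprod]
      exact le_trans h4 (ih1 k hkk)
    · intro k hkk
      have hstep := cdf_step hij (fun l hli hlj => hx'l l hli hlj) hsumpair k
      have hdec : pb ((Finset.univ.erase i).erase j) x (k:ℤ)
          ≤ pb ((Finset.univ.erase i).erase j) x ((k:ℤ) - 1) := by
        apply pb_decr hrb
        rw [hrs, htot]
        push_cast
        have := (hx i).1
        have := (hx j).1
        linarith
      have h4 : cdf (pbPMF n x') k ≤ cdf (pbPMF n x) k := by
        nlinarith [hstep, hdec, hprod]
      exact le_trans (ih2 k hkk) h4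
lemma pbPMF_perm {n : ℕ} (p : Fin n → ℝ) (σ : Equiv.Perm (Fin n)) (k : ℕ) :
    pbPMF n (fun l => p (σ l)) k = pbPMF n p k := by
  unfold pbPMF
  apply Finset.sum_nbij' (i := fun A => A.image σ) (j := fun B => B.image σ.symm)
  · intro A hA
    rw [Finset.mem_powersetCard] at hA ⊢
    exact ⟨Finset.subset_univ _, by rw [Finset.card_image_of_injective _ σ.injective, hA.2]⟩
  · intro B hB
    rw [Finset.mem_powersetCard] at hB ⊢
    exact ⟨Finset.subset_univ _, by rw [Finset.card_image_of_injective _ σ.symm.injective, hB.2]⟩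
  · intro A _
    rw [Finset.image_image]
    simp only [Equiv.symm_comp_self, Finset.image_id]
  · intro B _
    rw [Finset.image_image]
    simp only [Equiv.self_comp_symm, Finset.image_id]
  · intro A _
    congr 1
    · rw [Finset.prod_image (fun a _ b _ h => σ.injective h)]
    · have hcompl : (A.image σ)ᶜ = Aᶜ.image σ := by
        ext m
        simp only [Finset.mem_compl, Finset.mem_image]
        constructor
        · intro h
          exact ⟨σ.symm m, fun hmem => h ⟨σ.symm m, hmem, Equiv.apply_symm_apply σ m⟩,
            Equiv.apply_symm_apply σ m⟩
        · rintro ⟨a, ha, rfl⟩ ⟨a', ha', heq⟩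
          exact ha (σ.injective heq ▸ ha')
      rw [hcompl, Finset.prod_image (fun a _ b _ h => σ.injective h)]
/-- Majorization and Poisson binomial tails (Gleser–Wang): if `X ~ PB(p_1, ..., p_n)`,
`X' ~ PB(p'_1, ..., p'_n)` and `(p_1, ..., p_n)` majorizes `(p'_1, ..., p'_n)`, then
`P(X ≤ k) ≤ P(X' ≤ k)` for `0 ≤ k ≤ n p̄ - 2`, `P(X ≤ k) ≥ P(X' ≤ k)` for
`n p̄ + 2 ≤ k ≤ n`, and `Var(X) ≤ Var(X')`. -/
theorem gleser_wang (n : ℕ) (p p' : Fin n → ℝ)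
    (hp : ∀ i, 0 ≤ p i ∧ p i ≤ 1) (hp' : ∀ i, 0 ≤ p' i ∧ p' i ≤ 1)
    (pbar : ℝ) (hpbar : pbar = (∑ i, p i) / n)
    (hmaj : Majorizes n p p') :
    (∀ k : ℕ, (k : ℝ) ≤ (n : ℝ) * pbar - 2 →
      cdf (pbPMF n p) k ≤ cdf (pbPMF n p') k) ∧
    (∀ k : ℕ, (n : ℝ) * pbar + 2 ≤ (k : ℝ) → k ≤ n →
      cdf (pbPMF n p') k ≤ cdf (pbPMF n p) k) ∧
    pmfVar n (pbPMF n p) ≤ pmfVar n (pbPMF n p') := by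
  obtain ⟨σ, τ, hmonox, hmonoy, hps, htot⟩ := hmaj
  set X : Fin n → ℝ := fun l => p (σ l) with hX
  set Y : Fin n → ℝ := fun l => p' (τ l) with hY
  have hXb : ∀ l, 0 ≤ X l ∧ X l ≤ 1 := fun l => hp (σ l)
  have hYb : ∀ l, 0 ≤ Y l ∧ Y l ≤ 1 := fun l => hp' (τ l)
  have hXsum : (∑ l, X l) = ∑ l, p l := Equiv.sum_comp σ p
  have hYsum : (∑ l, Y l) = ∑ l, p' l := Equiv.sum_comp τ p'
  have htotXY : (∑ l, X l) = ∑ l, Y l := by rw [hXsum, hYsum]; exact htot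
  have hPSxy : ∀ k : ℕ, k ≤ n → partSum X k ≤ partSum Y k := by
    intro k hk
    rcases lt_or_eq_of_le hk with hlt | heq
    · exact hps k (by omega)
    · have hfull : Finset.univ.filter (fun l : Fin n => (l : ℕ) < k) = Finset.univ := by
        ext l
        simp only [Finset.mem_filter, Finset.mem_univ, true_and]
        exact ⟨fun _ => trivial, fun _ => by have := l.isLt; omega⟩
      unfold partSum
      rw [hfull]
      exact le_of_eq htotXY
  have hcardbound : (Finset.univ.filter (fun l => X l ≠ Y l)).card ≤ n := by
    calc (Finset.univ.filter (fun l => X l ≠ Y l)).card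
        ≤ (Finset.univ : Finset (Fin n)).card := Finset.card_filter_le _ _
      _ = n := Finset.card_fin n
  obtain ⟨hc1, hc2, hc3⟩ := chain Y hYb hmonoy n X hXb hcardbound hPSxy htotXY
  have hpbX : ∀ k, pbPMF n X k = pbPMF n p k := fun k => pbPMF_perm p σ k
  have hpbY : ∀ k, pbPMF n Y k = pbPMF n p' k := fun k => pbPMF_perm p' τ k
  have hcdfX : ∀ k, cdf (pbPMF n X) k = cdf (pbPMF n p) k := by
    intro k
    unfold cdf
    exact Finset.sum_congr rfl fun m _ => hpbX m
  have hcdfY : ∀ k, cdf (pbPMF n Y) k = cdf (pbPMF n p') k := by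
    intro k
    unfold cdf
    exact Finset.sum_congr rfl fun m _ => hpbY m
  have hnp : (n : ℝ) * pbar = ∑ l, p l := by
    rcases Nat.eq_zero_or_pos n with hn | hn
    · subst hn
      simp
    · rw [hpbar]
      field_simp
  have hYtot : (∑ l, Y l) = (n : ℝ) * pbar := by
    rw [← htotXY, hXsum, hnp]
  refine ⟨?_, ?_, ?_⟩
  · intro k hk
    have hk' : (k : ℝ) ≤ (∑ l, Y l) - 2 := by rw [hYtot]; exact hk
    have := hc1 k hk'
    rwa [hcdfX k, hcdfY k] at this
  · intro k hk1 _
    have hk' : (∑ l, Y l) + 2 ≤ (k : ℝ) := by rw [hYtot]; exact hk1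
    have := hc2 k hk'
    rwa [hcdfX k, hcdfY k] at this
  · have hvar : ∀ q : Fin n → ℝ, pmfVar n (pbPMF n q) = (∑ l, q l) - ∑ l, (q l)^2 := by
      intro q
      unfold pmfVar
      simp only [pbPMF_eq_pb]
      rw [pb_sum_sq (s := Finset.univ) (p := q) n (by rw [Finset.card_fin]),
        pb_sum_id (s := Finset.univ) (p := q) n (by rw [Finset.card_fin])]
      have hqq : ∑ l, q l * (1 - q l) = (∑ l, q l) - ∑ l, (q l)^2 := by
        rw [← Finset.sum_sub_distrib]
        exact Finset.sum_congr rfl fun l _ => by ring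
      rw [hqq]
      ring
    rw [hvar p, hvar p']
    have hsX : (∑ l, (X l)^2) = ∑ l, (p l)^2 := Equiv.sum_comp σ (fun l => (p l)^2)
    have hsY : (∑ l, (Y l)^2) = ∑ l, (p' l)^2 := Equiv.sum_comp τ (fun l => (p' l)^2)
    rw [← hsX, ← hsY] at *
    have h1 : (∑ l, p l) = ∑ l, p' l := htot
    linarith [hc3]
end

section
/- Log-majorization and stochastic ordering (Proschan–Proschan): Let X ~ PB(p_1,...,p_n) and X' ~ PB(p'_1,...,p'_n) with all p_i, p'_i ∈ (0,1]. If (−log p_1, ..., −log p_n) majorizes (−log p'_1, ..., −log p'_n), then X is stochastically larger than X', i.e. P(X ≥ k) ≥ P(X' ≥ k) for every integer k. -/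
open scoped BigOperators

/-- The tail probability `P(X ≥ k)` of a distribution supported on `{0, ..., n}`. -/
noncomputable def tailProb (n : ℕ) (f : ℕ → ℝ) (k : ℕ) : ℝ :=
  ∑ i ∈ Finset.Icc k n, f i

section ProschanAux

open Polynomial Finset

noncomputable def pbPoly (n : ℕ) (p : Fin n → ℝ) (s : Finset (Fin n)) : ℝ[X] :=
  ∏ i ∈ s, (C (1 - p i) + C (p i) * X)

lemma pbPoly_coeff (n : ℕ) (p : Fin n → ℝ) (s : Finset (Fin n)) (k : ℕ) :
    (pbPoly n p s).coeff k =
      ∑ A ∈ Finset.powersetCard k s, (∏ i ∈ A, p i) * ∏ i ∈ s \ A, (1 - p i) := by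
  unfold pbPoly
  have h1 : (∏ i ∈ s, (C (1 - p i) + C (p i) * X))
      = ∏ i ∈ s, (C (p i) * X + C (1 - p i)) := by
    refine Finset.prod_congr rfl fun i _ => add_comm _ _
  rw [h1, Finset.prod_add, Polynomial.finset_sum_coeff,
    Finset.powersetCard_eq_filter, Finset.sum_filter]
  refine Finset.sum_congr rfl fun A hA => ?_
  rw [Finset.prod_mul_distrib, Finset.prod_const,
    ← map_prod C p A, ← map_prod C (fun i => 1 - p i) (s \ A),
    mul_comm (C (∏ i ∈ A, p i)) (X ^ A.card), mul_assoc, ← Polynomial.C_mul,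
    mul_comm (X ^ A.card) _, Polynomial.coeff_C_mul, Polynomial.coeff_X_pow]
  by_cases h : A.card = k <;> simp [h]
  · intro h'; exact absurd h'.symm h

lemma pbPMF_eq_coeff (n : ℕ) (p : Fin n → ℝ) (k : ℕ) :
    pbPMF n p k = (pbPoly n p Finset.univ).coeff k := by
  rw [pbPoly_coeff, pbPMF]
  refine Finset.sum_congr rfl fun A hA => ?_
  rw [Finset.compl_eq_univ_sdiff]

lemma pbPoly_coeff_nonneg (n : ℕ) (p : Fin n → ℝ) (s : Finset (Fin n)) (k : ℕ)
    (h : ∀ i, 0 ≤ p i ∧ p i ≤ 1) : 0 ≤ (pbPoly n p s).coeff k := by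
  rw [pbPoly_coeff]
  refine Finset.sum_nonneg fun A hA => mul_nonneg
    (Finset.prod_nonneg fun i _ => (h i).1)
    (Finset.prod_nonneg fun i _ => by linarith [(h i).2])

lemma pbPoly_coeff_eq_zero (n : ℕ) (p : Fin n → ℝ) (s : Finset (Fin n)) (k : ℕ)
    (h : s.card < k) : (pbPoly n p s).coeff k = 0 := by
  rw [pbPoly_coeff, Finset.powersetCard_eq_empty.2 h, Finset.sum_empty]

lemma pbPMF_comp_perm (n : ℕ) (p : Fin n → ℝ) (σ : Equiv.Perm (Fin n)) (k : ℕ) :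
    pbPMF n (fun i => p (σ i)) k = pbPMF n p k := by
  rw [pbPMF_eq_coeff, pbPMF_eq_coeff]
  congr 1
  unfold pbPoly
  exact Equiv.prod_comp σ (fun i => C (1 - p i) + C (p i) * X)

-- the telescoping sum lemma
lemma tail_coeff_XsubOne_mul_nonneg (R : ℝ[X]) (n k : ℕ)
    (hnonneg : ∀ i, 0 ≤ R.coeff i) (hdeg : R.coeff n = 0) :
    0 ≤ ∑ i ∈ Finset.Icc k n, ((X - 1) * R).coeff i := by
  have hexp : ∀ i, ((X - 1) * R).coeff i = (X * R).coeff i - R.coeff i := by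
    intro i; rw [sub_mul, one_mul, Polynomial.coeff_sub]
  simp only [hexp, Finset.sum_sub_distrib]
  rcases Nat.lt_or_ge n k with hnk | hkn
  · rw [Finset.Icc_eq_empty (by omega)]; simp
  rcases k with _ | m
  · -- k = 0
    have h0 : Finset.Icc 0 n = Finset.range (n + 1) := by
      ext i; simp [Nat.lt_succ_iff]
    rw [h0]
    have e1 : ∑ x ∈ Finset.range (n+1), (X * R).coeff x
        = ∑ x ∈ Finset.range n, (X * R).coeff (x + 1) + (X * R).coeff 0 :=
      Finset.sum_range_succ' _ n
    have e2 : ∑ x ∈ Finset.range (n+1), R.coeff x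
        = ∑ x ∈ Finset.range n, R.coeff x + R.coeff n := Finset.sum_range_succ _ n
    rw [e1, e2]
    simp only [Polynomial.coeff_X_mul]
    have : (X * R).coeff 0 = 0 := by
      rw [Polynomial.mul_coeff_zero, Polynomial.coeff_X_zero, zero_mul]
    rw [this, hdeg]
    simp
  · -- k = m + 1, with m + 1 ≤ n so n = c + 1
    obtain ⟨c, rfl⟩ : ∃ c, n = c + 1 := ⟨n - 1, by omega⟩
    have hmc : m ≤ c := by omega
    have hre : ∑ i ∈ Finset.Icc (m + 1) (c + 1), (X * R).coeff i
        = ∑ j ∈ Finset.Icc m c, R.coeff j := by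
      rw [← Finset.map_add_right_Icc m c 1]
      rw [Finset.sum_map]
      refine Finset.sum_congr rfl fun j hj => ?_
      simp [Polynomial.coeff_X_mul]
    rw [hre]
    rw [Finset.sum_Icc_succ_top (by omega : m + 1 ≤ c + 1)]
    rw [show Finset.Icc m c = insert m (Finset.Icc (m+1) c) by
      ext i; simp only [Finset.mem_Icc, Finset.mem_insert]; omega]
    rw [Finset.sum_insert (by simp)]
    rw [hdeg]
    have := hnonneg m
    linarith

lemma two_point (n : ℕ) (p q : Fin n → ℝ) (a b : Fin n) (hab : a ≠ b)
    (hpq : ∀ i, i ≠ a → i ≠ b → q i = p i)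
    (h01 : ∀ i, 0 ≤ p i ∧ p i ≤ 1)
    (hprod : q a * q b = p a * p b) (hsum : q a + q b ≤ p a + p b) (k : ℕ) :
    tailProb n (pbPMF n q) k ≤ tailProb n (pbPMF n p) k := by
  set R := pbPoly n p ({a, b}ᶜ : Finset (Fin n)) with hR
  have hRq : pbPoly n q ({a, b}ᶜ : Finset (Fin n)) = R := by
    refine Finset.prod_congr rfl fun i hi => ?_
    simp only [Finset.mem_compl, Finset.mem_insert, Finset.mem_singleton, not_or] at hi
    rw [hpq i hi.1 hi.2]
  have hsplit : ∀ r : Fin n → ℝ, pbPoly n r Finset.univ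
      = (C (1 - r a) + C (r a) * X) * (C (1 - r b) + C (r b) * X)
        * pbPoly n r ({a, b}ᶜ : Finset (Fin n)) := by
    intro r
    unfold pbPoly
    rw [show (C (1 - r a) + C (r a) * X) * (C (1 - r b) + C (r b) * X)
        = ∏ i ∈ ({a, b} : Finset (Fin n)), (C (1 - r i) + C (r i) * X) from
      (Finset.prod_pair (f := fun i => C (1 - r i) + C (r i) * X) hab).symm]
    exact (Finset.prod_mul_prod_compl {a, b} _).symm
  have key : pbPoly n p Finset.univ - pbPoly n q Finset.univ
      = C ((p a + p b) - (q a + q b)) * ((X - 1) * R) := by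
    rw [hsplit p, hsplit q, hRq, ← hR, ← sub_mul, ← mul_assoc]
    congr 1
    have hC : C (q a) * C (q b) = C (p a) * C (p b) := by rw [← C_mul, ← C_mul, hprod]
    simp only [C_sub, C_add, C_1]
    linear_combination (-1 : ℝ[X]) * (X - 1) ^ 2 * hC
  have hdiff : tailProb n (pbPMF n p) k - tailProb n (pbPMF n q) k
      = ((p a + p b) - (q a + q b)) * ∑ i ∈ Finset.Icc k n, ((X - 1) * R).coeff i := by
    unfold tailProb
    rw [← Finset.sum_sub_distrib, Finset.mul_sum]
    refine Finset.sum_congr rfl fun i hi => ?_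
    rw [pbPMF_eq_coeff, pbPMF_eq_coeff, ← Polynomial.coeff_sub, key,
      Polynomial.coeff_C_mul]
  have hS : 0 ≤ ∑ i ∈ Finset.Icc k n, ((X - 1) * R).coeff i := by
    refine tail_coeff_XsubOne_mul_nonneg R n k
      (fun i => pbPoly_coeff_nonneg n p _ i h01) ?_
    refine pbPoly_coeff_eq_zero n p _ n ?_
    rw [Finset.card_compl, Finset.card_pair hab]
    have : 0 < n := Fin.pos a
    simp only [Fintype.card_fin]
    omega
  nlinarith [mul_nonneg (sub_nonneg.2 hsum) hS]

lemma exp_transfer {u v u' v' : ℝ} (h1 : u ≤ u') (h2 : u ≤ v') (hsum : u' + v' = u + v) :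
    Real.exp (-u') + Real.exp (-v') ≤ Real.exp (-u) + Real.exp (-v) := by
  have hv : u ≤ v := by linarith
  rcases eq_or_lt_of_le hv with heq | hlt
  · have : u' = u := by linarith
    have : v' = v := by linarith
    simp_all
  · set t : ℝ := (u' - u) / (v - u) with ht
    have hvu : 0 < v - u := by linarith
    have ht0 : 0 ≤ t := div_nonneg (by linarith) hvu.le
    have hu'v : u' ≤ v := by linarith
    have ht1 : t ≤ 1 := by rw [div_le_one hvu]; linarith
    have hu' : -u' = (1 - t) * (-u) + t * (-v) := by
      have hmul : t * (v - u) = u' - u := by rw [ht]; exact div_mul_cancel₀ _ hvu.ne'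
      linear_combination hmul
    have hv' : -v' = t * (-u) + (1 - t) * (-v) := by
      have : v' = u + v - u' := by linarith
      rw [this]
      have hmul : t * (v - u) = u' - u := by rw [ht]; exact div_mul_cancel₀ _ hvu.ne'
      linear_combination (-1 : ℝ) * hmul
    have e1 : Real.exp (-u') ≤ (1 - t) * Real.exp (-u) + t * Real.exp (-v) := by
      have := convexOn_exp.2 (Set.mem_univ (-u)) (Set.mem_univ (-v))
        (by linarith : (0:ℝ) ≤ 1 - t) ht0 (by ring)
      simpa [hu', smul_eq_mul] using this
    have e2 : Real.exp (-v') ≤ t * Real.exp (-u) + (1 - t) * Real.exp (-v) := by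
      have := convexOn_exp.2 (Set.mem_univ (-u)) (Set.mem_univ (-v))
        ht0 (by linarith : (0:ℝ) ≤ 1 - t) (by ring)
      simpa [hv', smul_eq_mul] using this
    linarith

lemma main_induction (n : ℕ) : ∀ (d : ℕ) (x y : Fin n → ℝ),
    Monotone x → Monotone y → (∀ i, 0 ≤ x i) → (∀ i, 0 ≤ y i) →
    (∀ k : ℕ, k ≤ n - 1 →
      ∑ i ∈ Finset.univ.filter (fun i : Fin n => (i : ℕ) < k), x i ≤
        ∑ i ∈ Finset.univ.filter (fun i : Fin n => (i : ℕ) < k), y i) →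
    (∑ i, x i = ∑ i, y i) →
    ((Finset.univ.filter (fun i => x i ≠ y i)).card ≤ d) →
    ∀ k, tailProb n (pbPMF n (fun i => Real.exp (-(y i)))) k ≤
      tailProb n (pbPMF n (fun i => Real.exp (-(x i)))) k := by
  intro d
  induction d with
  | zero =>
    intro x y hx hy hx0 hy0 hpart htot hcard k
    have hxy : x = y := by
      funext i
      by_contra hne
      have hmem : i ∈ Finset.univ.filter (fun i => x i ≠ y i) := by
        simp [hne]
      have := Finset.card_pos.2 ⟨i, hmem⟩
      omega
    rw [hxy]
  | succ d ih =>
    intro x y hx hy hx0 hy0 hpart htot hcard k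
    by_cases hxy : x = y
    · rw [hxy]
    -- the set where y < x is nonempty
    have hDne : (Finset.univ.filter fun i => y i < x i).Nonempty := by
      rw [Finset.filter_nonempty_iff]
      by_contra hc
      push_neg at hc
      apply hxy
      funext i
      exact (Finset.sum_eq_sum_iff_of_le
        (fun j _ => hc j (Finset.mem_univ j))).1 htot i (Finset.mem_univ i)
    set b := (Finset.univ.filter fun i => y i < x i).min' hDne with hbdef
    have hbmem : y b < x b := by
      have h := Finset.min'_mem _ hDne
      exact (Finset.mem_filter.1 h).2
    have hblt : ∀ i : Fin n, i < b → x i ≤ y i := by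
      intro i hi
      by_contra hgt
      push_neg at hgt
      have : b ≤ i := Finset.min'_le _ i (by simp [hgt])
      exact absurd hi (not_lt.2 this)
    -- the set of indices below b where x < y is nonempty
    have hDlt : (Finset.univ.filter fun i => i < b ∧ x i < y i).Nonempty := by
      rw [Finset.filter_nonempty_iff]
      by_contra hc
      push_neg at hc
      have heqlt : ∀ i : Fin n, i < b → x i = y i := fun i hi =>
        le_antisymm (hblt i hi) (hc i (Finset.mem_univ i) hi)
      -- partial sums contradiction
      have hFins : (Finset.univ.filter fun i : Fin n => (i : ℕ) < (b : ℕ) + 1)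
          = insert b (Finset.univ.filter fun i : Fin n => (i : ℕ) < (b : ℕ)) := by
        ext i
        simp only [Finset.mem_filter, Finset.mem_insert, Finset.mem_univ, true_and]
        constructor
        · intro h
          rcases Nat.lt_succ_iff_lt_or_eq.1 h with h | h
          · exact Or.inr h
          · exact Or.inl (Fin.ext h)
        · rintro (rfl | h)
          · omega
          · omega
      have hbnot : b ∉ (Finset.univ.filter fun i : Fin n => (i : ℕ) < (b : ℕ)) := by
        simp
      have hsub : ∑ i ∈ Finset.univ.filter (fun i : Fin n => (i : ℕ) < (b : ℕ)), x i
          = ∑ i ∈ Finset.univ.filter (fun i : Fin n => (i : ℕ) < (b : ℕ)), y i := by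
        refine Finset.sum_congr rfl fun i hi => ?_
        simp only [Finset.mem_filter] at hi
        exact heqlt i (by rw [Fin.lt_def]; exact hi.2)
      have hstrict : ∑ i ∈ Finset.univ.filter (fun i : Fin n => (i : ℕ) < (b : ℕ) + 1), y i
          < ∑ i ∈ Finset.univ.filter (fun i : Fin n => (i : ℕ) < (b : ℕ) + 1), x i := by
        rw [hFins, Finset.sum_insert hbnot, Finset.sum_insert hbnot, hsub]
        linarith
      rcases Nat.lt_or_ge ((b : ℕ) + 1) n with hlt | hge
      · have := hpart ((b : ℕ) + 1) (by omega)
        linarith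
      · have hbn : (b : ℕ) + 1 = n := by have := b.isLt; omega
        have huniv : (Finset.univ.filter fun i : Fin n => (i : ℕ) < (b : ℕ) + 1)
            = Finset.univ := by
          apply Finset.filter_true_of_mem
          intro i _
          have := i.isLt; omega
        rw [huniv] at hstrict
        rw [htot] at hstrict
        exact absurd hstrict (lt_irrefl _)
    set a := (Finset.univ.filter fun i => i < b ∧ x i < y i).max' hDlt with hadef
    have hamem : a < b ∧ x a < y a := by
      have h := Finset.max'_mem _ hDlt
      exact (Finset.mem_filter.1 h).2
    have hmid : ∀ i : Fin n, a < i → i < b → x i = y i := by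
      intro i hai hib
      refine le_antisymm (hblt i hib) ?_
      by_contra h
      push_neg at h
      have : i ≤ a := Finset.le_max' _ i (by simp [hib, h])
      exact absurd hai (not_lt.2 this)
    set δ := min (y a - x a) (x b - y b) with hδdef
    have hδ1 : δ ≤ y a - x a := min_le_left _ _
    have hδ2 : δ ≤ x b - y b := min_le_right _ _
    have hδpos : 0 < δ := lt_min (by linarith [hamem.2]) (by linarith [hbmem])
    have hane : a ≠ b := ne_of_lt hamem.1
    set x' : Fin n → ℝ :=
      fun i => x i + (if i = a then δ else 0) - (if i = b then δ else 0) with hx'def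
    have hx'a : x' a = x a + δ := by simp [hx'def, hane]
    have hx'b : x' b = x b - δ := by simp [hx'def, hane.symm, Ne.symm]
    have hx'other : ∀ i, i ≠ a → i ≠ b → x' i = x i := by
      intro i h1 h2; simp [hx'def, h1, h2]
    have hyab : y a ≤ y b := hy hamem.1.le
    have hkey1 : x a + δ ≤ y a := by linarith
    have hkey2 : y b ≤ x b - δ := by linarith
    -- monotonicity of x'
    have hmono' : Monotone x' := by
      intro i j hij
      rcases eq_or_lt_of_le hij with rfl | hij
      · exact le_refl _
      by_cases hia : i = a
      · subst hia
        by_cases hjb : j = b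
        · subst hjb; rw [hx'a, hx'b]; linarith
        · have hja : j ≠ a := ne_of_gt hij
          rw [hx'a, hx'other j hja hjb]
          rcases lt_trichotomy j b with hjlt | rfl | hjgt
          · rw [hmid j hij hjlt]
            have : y a ≤ y j := hy hij.le
            linarith
          · exact absurd rfl hjb
          · have : x b ≤ x j := hx hjgt.le
            linarith
      · by_cases hib : i = b
        · subst hib
          have hja : j ≠ a := fun h => absurd (h ▸ hij) (not_lt.2 hamem.1.le)
          have hjb : j ≠ b := ne_of_gt hij
          rw [hx'b, hx'other j hja hjb]
          have : x b ≤ x j := hx hij.le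
          linarith
        · rw [hx'other i hia hib]
          by_cases hja : j = a
          · subst hja
            rw [hx'a]
            have : x i ≤ x a := hx hij.le
            linarith
          · by_cases hjb : j = b
            · subst hjb
              rw [hx'b]
              rcases lt_trichotomy i a with hilt | rfl | higt
              · have : x i ≤ x a := hx hilt.le
                linarith
              · exact absurd rfl hia
              · have h1 := hmid i higt hij
                have h2 : y i ≤ y b := hy hij.le
                linarith
            · rw [hx'other j hja hjb]
              exact hx hij.le
    -- nonnegativity of x'
    have hx'0 : ∀ i, 0 ≤ x' i := by
      intro i
      by_cases h1 : i = a
      · subst h1; rw [hx'a]; linarith [hx0 a]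
      by_cases h2 : i = b
      · subst h2; rw [hx'b]; linarith [hy0 b]
      · rw [hx'other i h1 h2]; exact hx0 i
    -- sums of x' over any finset
    have hFsum : ∀ s : Finset (Fin n), ∑ i ∈ s, x' i
        = ∑ i ∈ s, x i + (if a ∈ s then δ else 0) - (if b ∈ s then δ else 0) := by
      intro s
      simp only [hx'def]
      rw [Finset.sum_sub_distrib, Finset.sum_add_distrib,
        Finset.sum_ite_eq' s a (fun _ => δ), Finset.sum_ite_eq' s b (fun _ => δ)]
    -- partial sums
    have hpart' : ∀ k : ℕ, k ≤ n - 1 →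
        ∑ i ∈ Finset.univ.filter (fun i : Fin n => (i : ℕ) < k), x' i ≤
          ∑ i ∈ Finset.univ.filter (fun i : Fin n => (i : ℕ) < k), y i := by
      intro m hm
      rw [hFsum]
      have hmema : a ∈ Finset.univ.filter (fun i : Fin n => (i : ℕ) < m) ↔ (a : ℕ) < m := by
        simp
      have hmemb : b ∈ Finset.univ.filter (fun i : Fin n => (i : ℕ) < m) ↔ (b : ℕ) < m := by
        simp
      by_cases hbk : (b : ℕ) < m
      · have hak : (a : ℕ) < m := by
          have : (a : ℕ) < (b : ℕ) := hamem.1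
          omega
        rw [if_pos (hmema.2 hak), if_pos (hmemb.2 hbk)]
        have := hpart m hm
        linarith
      · by_cases hak : (a : ℕ) < m
        · rw [if_pos (hmema.2 hak), if_neg (fun h => hbk (hmemb.1 h))]
          have h1 : ∀ i ∈ Finset.univ.filter (fun i : Fin n => (i : ℕ) < m),
              0 ≤ y i - x i := by
            intro i hi
            simp only [Finset.mem_filter] at hi
            have : i < b := by rw [Fin.lt_def]; omega
            linarith [hblt i this]
          have h2 : y a - x a ≤
              ∑ i ∈ Finset.univ.filter (fun i : Fin n => (i : ℕ) < m), (y i - x i) :=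
            Finset.single_le_sum h1 (by simp [hak])
          rw [Finset.sum_sub_distrib] at h2
          linarith
        · rw [if_neg (fun h => hak (hmema.1 h)), if_neg (fun h => hbk (hmemb.1 h))]
          have := hpart m hm
          linarith
    -- total sum
    have htot' : ∑ i, x' i = ∑ i, y i := by
      rw [hFsum Finset.univ, if_pos (Finset.mem_univ a), if_pos (Finset.mem_univ b)]
      linarith
    -- cardinality decrease
    have hsub : (Finset.univ.filter fun i => x' i ≠ y i)
        ⊂ (Finset.univ.filter fun i => x i ≠ y i) := by
      rw [Finset.ssubset_def]
      constructor
      · intro i hi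
        simp only [Finset.mem_filter, Finset.mem_univ, true_and] at hi ⊢
        by_cases h1 : i = a
        · subst h1; exact ne_of_lt hamem.2
        by_cases h2 : i = b
        · subst h2; exact ne_of_gt hbmem
        · rw [← hx'other i h1 h2]; exact hi
      · intro hts
        rcases le_total (y a - x a) (x b - y b) with hmin | hmin
        · have hda : δ = y a - x a := min_eq_left hmin
          have hxa' : x' a = y a := by rw [hx'a, hda]; ring
          have hmem : a ∈ (Finset.univ.filter fun i => x i ≠ y i) := by
            simp only [Finset.mem_filter, Finset.mem_univ, true_and]
            exact ne_of_lt hamem.2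
          have := hts hmem
          simp only [Finset.mem_filter, Finset.mem_univ, true_and] at this
          exact this hxa'
        · have hdb : δ = x b - y b := min_eq_right hmin
          have hxb' : x' b = y b := by rw [hx'b, hdb]; ring
          have hmem : b ∈ (Finset.univ.filter fun i => x i ≠ y i) := by
            simp only [Finset.mem_filter, Finset.mem_univ, true_and]
            exact ne_of_gt hbmem
          have := hts hmem
          simp only [Finset.mem_filter, Finset.mem_univ, true_and] at this
          exact this hxb'
    have hcard' : (Finset.univ.filter fun i => x' i ≠ y i).card ≤ d := by
      have := Finset.card_lt_card hsub
      omega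
    -- apply IH and two_point
    have step1 := ih x' y hmono' hy hx'0 hy0 hpart' htot' hcard' k
    have step2 : tailProb n (pbPMF n (fun i => Real.exp (-(x' i)))) k ≤
        tailProb n (pbPMF n (fun i => Real.exp (-(x i)))) k := by
      refine two_point n (fun i => Real.exp (-(x i))) (fun i => Real.exp (-(x' i)))
        a b hane (fun i h1 h2 => by
          show Real.exp (-(x' i)) = Real.exp (-(x i))
          rw [hx'other i h1 h2]) (fun i =>
          ⟨(Real.exp_pos _).le, Real.exp_le_one_iff.2 (by linarith [hx0 i])⟩) ?_ ?_ k
      · show Real.exp (-(x' a)) * Real.exp (-(x' b)) = Real.exp (-(x a)) * Real.exp (-(x b))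
        rw [← Real.exp_add, ← Real.exp_add, hx'a, hx'b]
        congr 1
        ring
      · show Real.exp (-(x' a)) + Real.exp (-(x' b)) ≤ Real.exp (-(x a)) + Real.exp (-(x b))
        rw [hx'a, hx'b]
        refine exp_transfer (by linarith) (by linarith) (by ring)
    exact le_trans step1 step2

end ProschanAux

/-- Log-majorization and stochastic ordering (Proschan–Proschan): if
`X ~ PB(p_1, ..., p_n)`, `X' ~ PB(p'_1, ..., p'_n)` with all `p_i, p'_i ∈ (0, 1]`, and
`(-log p_1, ..., -log p_n)` majorizes `(-log p'_1, ..., -log p'_n)`, then `X` is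
stochastically larger than `X'`: `P(X ≥ k) ≥ P(X' ≥ k)` for every `k`. -/
theorem proschan_proschan (n : ℕ) (p p' : Fin n → ℝ)
    (hp : ∀ i, 0 < p i ∧ p i ≤ 1) (hp' : ∀ i, 0 < p' i ∧ p' i ≤ 1)
    (hmaj : Majorizes n (fun i => -Real.log (p i)) (fun i => -Real.log (p' i))) :
    ∀ k : ℕ, tailProb n (pbPMF n p') k ≤ tailProb n (pbPMF n p) k := by
  intro k
  obtain ⟨σ, τ, hσ, hτ, hpart, htot⟩ := hmaj
  have hx0 : ∀ i : Fin n, 0 ≤ -Real.log (p (σ i)) := fun i =>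
    neg_nonneg.2 (Real.log_nonpos (hp _).1.le (hp _).2)
  have hy0 : ∀ i : Fin n, 0 ≤ -Real.log (p' (τ i)) := fun i =>
    neg_nonneg.2 (Real.log_nonpos (hp' _).1.le (hp' _).2)
  have htot' : ∑ i, -Real.log (p (σ i)) = ∑ i, -Real.log (p' (τ i)) := by
    rw [Equiv.sum_comp σ (fun i => -Real.log (p i)),
      Equiv.sum_comp τ (fun i => -Real.log (p' i))]
    exact htot
  have hcard : (Finset.univ.filter
      (fun i => -Real.log (p (σ i)) ≠ -Real.log (p' (τ i)))).card ≤ n := by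
    refine le_trans (Finset.card_filter_le _ _) ?_
    simp
  have hmain := main_induction n n (fun i => -Real.log (p (σ i)))
    (fun i => -Real.log (p' (τ i))) hσ hτ hx0 hy0 hpart htot' hcard k
  have e1 : (fun i => Real.exp (-(-Real.log (p (σ i))))) = fun i => p (σ i) := by
    funext i; rw [neg_neg, Real.exp_log (hp _).1]
  have e2 : (fun i => Real.exp (-(-Real.log (p' (τ i))))) = fun i => p' (τ i) := by
    funext i; rw [neg_neg, Real.exp_log (hp' _).1]
  rw [e1, e2] at hmain
  rw [funext (pbPMF_comp_perm n p σ), funext (pbPMF_comp_perm n p' τ)] at hmain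
  exact hmain
end

section
/- Stochastic comparison with a binomial (Boland–Singh–Cukic): Let X ~ PB(p_1,...,p_n) and Y ~ Bin(n,p). Then X is stochastically larger than Y (P(X ≥ k) ≥ P(Y ≥ k) for all k) if and only if p ≤ (Π_{i=1}^n p_i)^{1/n}, and X is stochastically smaller than Y (P(X ≥ k) ≤ P(Y ≥ k) for all k) if and only if p ≥ 1 − (Π_{i=1}^n (1−p_i))^{1/n}. Consequently, for X' ~ PB(p'_1,...,p'_n), if (Π_{i=1}^n p_i)^{1/n} ≥ 1 − (Π_{i=1}^n (1−p'_i))^{1/n} then X is stochastically larger than X'. -/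
open scoped BigOperators

/- ### Auxiliary development -/

noncomputable def pbl : List ℝ → ℕ → ℝ
  | [], 0 => 1
  | [], _+1 => 0
  | a :: l, 0 => (1 - a) * pbl l 0
  | a :: l, k+1 => a * pbl l k + (1 - a) * pbl l (k+1)

lemma pbl_nonneg {l : List ℝ} (h : ∀ x ∈ l, 0 ≤ x ∧ x ≤ 1) : ∀ k, 0 ≤ pbl l k := by
  induction l with
  | nil => intro k; cases k <;> simp [pbl]
  | cons a l ih =>
    have ha := h a (by simp)
    have ih' := ih (fun x hx => h x (by simp [hx]))
    intro k
    cases k with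
    | zero => have := ih' 0; simp only [pbl]; nlinarith [ha.1, ha.2]
    | succ k => have h1 := ih' k; have h2 := ih' (k+1); simp only [pbl]; nlinarith [ha.1, ha.2]

lemma pbl_eq_zero {l : List ℝ} : ∀ {k}, l.length < k → pbl l k = 0 := by
  induction l with
  | nil => intro k hk; match k, hk with | (k+1), _ => simp [pbl]
  | cons a l ih =>
    intro k hk
    match k, hk with
    | (k+1), hk =>
      simp only [List.length_cons] at hk
      rw [pbl, ih (by omega), ih (by omega)]; ring

noncomputable def T (l : List ℝ) (k : ℕ) : ℝ := ∑ i ∈ Finset.Icc k l.length, pbl l i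

lemma T_ext {l : List ℝ} {N k : ℕ} (hN : l.length ≤ N) :
    ∑ i ∈ Finset.Icc k N, pbl l i = T l k := by
  rw [T]
  refine (Finset.sum_subset ?_ ?_).symm
  · intro i hi; simp only [Finset.mem_Icc] at *; omega
  · intro i hi hni; simp only [Finset.mem_Icc] at *
    exact pbl_eq_zero (by omega)

lemma T_zero (l : List ℝ) : T l 0 = 1 := by
  induction l with
  | nil => simp [T, pbl]
  | cons a l ih =>
    have h : T (a :: l) 0 = ∑ i ∈ Finset.range (l.length + 2), pbl (a :: l) i := by
      rw [T]; congr 1; ext i; simp [Finset.mem_Icc, Finset.mem_range]; omega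
    have h2 : T l 0 = ∑ i ∈ Finset.range (l.length + 1), pbl l i := by
      rw [T]; congr 1; ext i; simp [Finset.mem_Icc, Finset.mem_range]
    rw [h, Finset.sum_range_succ' (fun i => pbl (a :: l) i)]
    simp only [pbl]
    rw [Finset.sum_add_distrib, ← Finset.mul_sum, ← Finset.mul_sum]
    have h3 : ∑ i ∈ Finset.range (l.length + 1), pbl l (i+1)
        = ∑ i ∈ Finset.range (l.length + 2), pbl l i - pbl l 0 := by
      rw [Finset.sum_range_succ' (fun i => pbl l i)]; ring
    have h4 : ∑ i ∈ Finset.range (l.length + 2), pbl l i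
        = ∑ i ∈ Finset.range (l.length + 1), pbl l i + pbl l (l.length + 1) := by
      rw [Finset.sum_range_succ]
    rw [h3, h4, pbl_eq_zero (by omega), ← h2, ih]
    ring

lemma T_eq_zero {l : List ℝ} {k : ℕ} (h : l.length < k) : T l k = 0 := by
  rw [T, Finset.Icc_eq_empty (by omega), Finset.sum_empty]

lemma T_antitone {l : List ℝ} (hl : ∀ x ∈ l, 0 ≤ x ∧ x ≤ 1) {j k : ℕ} (h : j ≤ k) :
    T l k ≤ T l j := by
  apply Finset.sum_le_sum_of_subset_of_nonneg
  · intro i hi; simp only [Finset.mem_Icc] at *; omega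
  · intro i _ _; exact pbl_nonneg hl i

lemma T_cons (a : ℝ) (l : List ℝ) (k : ℕ) :
    T (a :: l) k = a * T l (k - 1) + (1 - a) * T l k := by
  cases k with
  | zero => simp only [Nat.zero_sub, T_zero]; ring
  | succ j =>
    have hlen : (a :: l).length = l.length + 1 := rfl
    rw [T, hlen]
    rw [show Finset.Icc (j+1) (l.length+1) =
        Finset.map (addRightEmbedding 1) (Finset.Icc j l.length) by
      rw [Finset.map_add_right_Icc], Finset.sum_map]
    simp only [addRightEmbedding_apply]
    have : ∀ i ∈ Finset.Icc j l.length, pbl (a :: l) (i + 1)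
        = a * pbl l i + (1 - a) * pbl l (i+1) := fun i _ => rfl
    rw [Finset.sum_congr rfl this, Finset.sum_add_distrib, ← Finset.mul_sum, ← Finset.mul_sum]
    have h1 : ∑ i ∈ Finset.Icc j l.length, pbl l i = T l j := rfl
    have h2 : ∑ i ∈ Finset.Icc j l.length, pbl l (i+1) = T l (j+1) := by
      have : ∑ i ∈ Finset.Icc j l.length, pbl l (i+1)
          = ∑ i ∈ Finset.Icc (j+1) (l.length+1), pbl l i := by
        rw [show Finset.Icc (j+1) (l.length+1) =
          Finset.map (addRightEmbedding 1) (Finset.Icc j l.length) by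
            rw [Finset.map_add_right_Icc], Finset.sum_map]
        rfl
      rw [this, T_ext (by omega)]
    rw [h1, h2]
    simp

lemma T_pair (a b : ℝ) (l : List ℝ) (k : ℕ) :
    T (a :: b :: l) k = a * b * T l (k - 2) + (a * (1 - b) + (1 - a) * b) * T l (k - 1)
      + (1 - a) * (1 - b) * T l k := by
  rw [T_cons, T_cons, T_cons]
  rw [show k - 1 - 1 = k - 2 by omega]
  ring

lemma smoothing {a b s t : ℝ} {l : List ℝ} (hl : ∀ x ∈ l, 0 ≤ x ∧ x ≤ 1)
    (hab : a * b = s * t) (hsum : s + t ≤ a + b) (k : ℕ) :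
    T (s :: t :: l) k ≤ T (a :: b :: l) k := by
  rw [T_pair, T_pair]
  have h1 : T l k ≤ T l (k - 1) := T_antitone hl (by omega)
  have hprod : (0:ℝ) ≤ (a + b - s - t) * (T l (k-1) - T l k) :=
    mul_nonneg (by linarith) (by linarith)
  have e : (a * b * T l (k - 2) + (a * (1 - b) + (1 - a) * b) * T l (k - 1)
      + (1 - a) * (1 - b) * T l k)
      - (s * t * T l (k - 2) + (s * (1 - t) + (1 - s) * t) * T l (k - 1)
      + (1 - s) * (1 - t) * T l k)
      = (a + b - s - t) * (T l (k-1) - T l k) := by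
    linear_combination (T l (k - 2) - 2 * T l (k-1) + T l k) * hab
  linarith

lemma head_mono {a a' : ℝ} {l : List ℝ} (hl : ∀ x ∈ l, 0 ≤ x ∧ x ≤ 1)
    (h : a ≤ a') (k : ℕ) : T (a :: l) k ≤ T (a' :: l) k := by
  rw [T_cons, T_cons]
  have h1 : T l k ≤ T l (k - 1) := T_antitone hl (by omega)
  nlinarith [mul_nonneg (by linarith : (0:ℝ) ≤ a' - a)
    (by linarith : (0:ℝ) ≤ T l (k-1) - T l k)]

lemma cons_dom {a : ℝ} {l l' : List ℝ} (ha : 0 ≤ a) (ha1 : a ≤ 1)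
    (h : ∀ k, T l k ≤ T l' k) (k : ℕ) : T (a :: l) k ≤ T (a :: l') k := by
  rw [T_cons, T_cons]
  have h1 := h (k-1); have h2 := h k
  nlinarith
lemma pbl_perm {l l' : List ℝ} (h : l.Perm l') : ∀ k, pbl l k = pbl l' k := by
  induction h with
  | nil => intro k; rfl
  | cons x _ ih => intro k; cases k <;> simp only [pbl, ih]
  | swap x y l =>
    intro k
    match k with
    | 0 => simp only [pbl]; ring
    | 1 => simp only [pbl]; ring
    | (k+2) => simp only [pbl]; ring
  | trans _ _ ih1 ih2 => intro k; rw [ih1, ih2]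

lemma T_perm {l l' : List ℝ} (h : l.Perm l') (k : ℕ) : T l k = T l' k := by
  rw [T, T, h.length_eq]
  exact Finset.sum_congr rfl fun i _ => pbl_perm h i

lemma list_prod_le {g : ℝ} (hg : 0 ≤ g) :
    ∀ {l : List ℝ}, (∀ x ∈ l, 0 ≤ x ∧ x ≤ g) → l.prod ≤ g ^ l.length := by
  intro l
  induction l with
  | nil => simp
  | cons a l ih =>
    intro h
    have ha := h a (by simp)
    have hl := ih (fun x hx => h x (by simp [hx]))
    have hpn : 0 ≤ l.prod := List.prod_nonneg (fun x hx => (h x (by simp [hx])).1)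
    simp only [List.prod_cons, List.length_cons, pow_succ]
    calc a * l.prod ≤ g * l.prod := by nlinarith [ha.1, ha.2]
    _ ≤ g * g ^ l.length := by nlinarith [pow_nonneg hg l.length]
    _ = g ^ l.length * g := by ring

lemma list_prod_lt {g : ℝ} (hg : 0 ≤ g) {a : ℝ} {l : List ℝ} (ha : 0 ≤ a) (hag : a < g)
    (h : ∀ x ∈ l, 0 ≤ x ∧ x ≤ g) : (a :: l).prod < g ^ (a :: l).length := by
  have hl := list_prod_le hg h
  have hpn : 0 ≤ l.prod := List.prod_nonneg (fun x hx => (h x hx).1)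
  simp only [List.prod_cons, List.length_cons, pow_succ]
  have hgpos : 0 < g := lt_of_le_of_lt ha hag
  nlinarith [pow_pos hgpos l.length, pow_nonneg hg l.length]

lemma list_prod_gt {g : ℝ} (hg : 0 < g) :
    ∀ {l : List ℝ}, (∀ x ∈ l, g < x) → g ^ l.length ≤ l.prod := by
  intro l
  induction l with
  | nil => simp
  | cons a l ih =>
    intro h
    have ha := h a (by simp)
    have hl := ih (fun x hx => h x (by simp [hx]))
    simp only [List.prod_cons, List.length_cons, pow_succ]
    have : (0:ℝ) < g ^ l.length := pow_pos hg l.length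
    nlinarith

lemma list_prod_gt' {g : ℝ} (hg : 0 < g) {a : ℝ} {l : List ℝ} (hag : g < a)
    (h : ∀ x ∈ l, g < x) : g ^ (a :: l).length < (a :: l).prod := by
  have hl := list_prod_gt hg h
  simp only [List.prod_cons, List.length_cons, pow_succ]
  have : (0:ℝ) < g ^ l.length := pow_pos hg l.length
  nlinarith

lemma main_smooth : ∀ (m : ℕ) (l : List ℝ), l.length = m → (∀ x ∈ l, 0 ≤ x ∧ x ≤ 1) →
    ∀ g : ℝ, 0 < g → g ≤ 1 → l.prod = g ^ m → ∀ k, T (List.replicate m g) k ≤ T l k := by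
  intro m
  induction m with
  | zero =>
    intro l hlen _ g _ _ _ k
    rw [List.length_eq_zero_iff.mp hlen]; simp
  | succ m ih =>
    intro l hlen hl g hg0 hg1 hprod k
    -- find a ∈ l with g ≤ a
    have hex : ∃ a ∈ l, g ≤ a := by
      by_contra hcon
      push_neg at hcon
      obtain ⟨a, l₀, rfl⟩ : ∃ a l₀, l = a :: l₀ := by
        cases l with
        | nil => simp at hlen
        | cons a l₀ => exact ⟨a, l₀, rfl⟩
      have := list_prod_lt (le_of_lt hg0) (hl a (by simp)).1 (hcon a (by simp))
        (fun x hx => ⟨(hl x (List.mem_cons_of_mem a hx)).1,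
          le_of_lt (hcon x (List.mem_cons_of_mem a hx))⟩)
      rw [hprod, hlen] at this
      exact lt_irrefl _ this
    obtain ⟨a, hal, hga⟩ := hex
    have hperm1 : l.Perm (a :: l.erase a) := List.perm_cons_erase hal
    set l₂ := l.erase a with hl₂
    have hl₂sub : ∀ x ∈ l₂, x ∈ l := fun x hx => List.mem_of_mem_erase hx
    have hl₂len : l₂.length = m := by
      have := hperm1.length_eq
      simp [hlen] at this; omega
    have hprod2 : a * l₂.prod = g ^ (m + 1) := by
      rw [← List.prod_cons, ← hperm1.prod_eq, hprod]
    have ha01 := hl a hal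
    cases m with
    | zero =>
      -- l ~ [a], a = g
      have : l₂ = [] := List.length_eq_zero_iff.mp hl₂len
      rw [this] at hperm1 hprod2
      simp at hprod2
      rw [T_perm hperm1, hprod2]
      exact le_of_eq rfl
    | succ m' =>
      -- find b ∈ l₂ with b ≤ g
      have hex2 : ∃ b ∈ l₂, b ≤ g := by
        by_contra hcon
        push_neg at hcon
        obtain ⟨c, l₄, heq⟩ := List.exists_cons_of_ne_nil
          (show l₂ ≠ [] by intro h; rw [h] at hl₂len; simp at hl₂len)
        have h1 : g ^ (c :: l₄).length < (c :: l₄).prod :=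
          list_prod_gt' hg0 (hcon c (heq ▸ (List.mem_cons_self (a := c) (l := l₄))))
            (fun x hx => hcon x (heq ▸ List.mem_cons_of_mem c hx))
        rw [← heq, hl₂len] at h1
        have h2 : (0:ℝ) < g ^ (m'+1) := pow_pos hg0 _
        have h3 : (0:ℝ) < g ^ (m'+1+1) := pow_pos hg0 _
        nlinarith [pow_succ g (m'+1)]
      obtain ⟨b, hbl₂, hbg⟩ := hex2
      have hperm2 : l₂.Perm (b :: l₂.erase b) := List.perm_cons_erase hbl₂
      set l₃ := l₂.erase b with hl₃
      have hl₃sub : ∀ x ∈ l₃, x ∈ l := fun x hx => hl₂sub x (List.mem_of_mem_erase hx)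
      have hl₃01 : ∀ x ∈ l₃, 0 ≤ x ∧ x ≤ 1 := fun x hx => hl x (hl₃sub x hx)
      have hl₃len : l₃.length = m' := by
        have := hperm2.length_eq; simp [hl₂len] at this; omega
      have hb01 := hl b (hl₂sub b hbl₂)
      have hperm : l.Perm (a :: b :: l₃) := hperm1.trans (hperm2.cons a)
      have hprodabl : a * (b * l₃.prod) = g ^ (m' + 1 + 1) := by
        rw [← List.prod_cons, ← List.prod_cons, ← hperm.prod_eq, hprod]
      set t := a * b / g with ht
      have hgne : g ≠ 0 := ne_of_gt hg0
      have hst : a * b = g * t := by rw [ht]; field_simp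
      have ht0 : 0 ≤ t := div_nonneg (mul_nonneg ha01.1 hb01.1) (le_of_lt hg0)
      have ht1 : t ≤ 1 := by
        rw [ht, div_le_one hg0]
        nlinarith [ha01.2, hb01.1]
      have hsum : g + t ≤ a + b := by
        rw [ht, ← sub_nonneg]
        have : a + b - (g + a * b / g) = (a - g) * (g - b) / g := by field_simp; ring
        rw [this]
        apply div_nonneg _ (le_of_lt hg0)
        nlinarith
      have hprod3 : (t :: l₃).prod = g ^ (m' + 1) := by
        simp only [List.prod_cons]
        have : t * l₃.prod = (a * (b * l₃.prod)) / g := by rw [ht]; field_simp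
        rw [this, hprodabl, pow_succ]
        field_simp
      have ihres := ih (t :: l₃) (by simp [hl₃len]) 
        (by intro x hx; rcases List.mem_cons.mp hx with h | h
            · exact h ▸ ⟨ht0, ht1⟩
            · exact hl₃01 x h)
        g hg0 hg1 hprod3
      calc T (List.replicate (m' + 1 + 1) g) k 
          = T (g :: List.replicate (m' + 1) g) k := by rw [List.replicate_succ]
        _ ≤ T (g :: t :: l₃) k := cons_dom (le_of_lt hg0) hg1 ihres k
        _ ≤ T (a :: b :: l₃) k := smoothing hl₃01 hst hsum k
        _ = T l k := (T_perm hperm k).symm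

lemma bin_mono {q₁ q₂ : ℝ} (h0 : 0 ≤ q₁) (h12 : q₁ ≤ q₂) (h2 : q₂ ≤ 1) :
    ∀ (m : ℕ) (k : ℕ), T (List.replicate m q₁) k ≤ T (List.replicate m q₂) k := by
  intro m
  induction m with
  | zero => intro k; exact le_refl _
  | succ m ih =>
    intro k
    rw [List.replicate_succ, List.replicate_succ]
    calc T (q₁ :: List.replicate m q₁) k ≤ T (q₁ :: List.replicate m q₂) k :=
          cons_dom h0 (le_trans h12 h2) ih k
      _ ≤ T (q₂ :: List.replicate m q₂) k := by
          apply head_mono _ h12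
          intro x hx
          rw [List.eq_of_mem_replicate hx]
          exact ⟨le_trans h0 h12, h2⟩
lemma binPMF_eq (n : ℕ) (q : ℝ) : ∀ k, binPMF n q k = pbl (List.replicate n q) k := by
  induction n with
  | zero =>
    intro k
    cases k with
    | zero => simp [binPMF, pbl]
    | succ k => simp [binPMF, pbl, Nat.choose_eq_zero_of_lt]
  | succ n ih =>
    intro k
    rw [List.replicate_succ]
    cases k with
    | zero =>
      show binPMF (n+1) q 0 = (1 - q) * pbl (List.replicate n q) 0
      rw [← ih 0]
      simp [binPMF, pow_succ]
      ring
    | succ k =>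
      show binPMF (n+1) q (k+1) = q * pbl (List.replicate n q) k
        + (1 - q) * pbl (List.replicate n q) (k+1)
      rw [← ih k, ← ih (k+1)]
      rcases lt_trichotomy k n with h | h | h
      · -- k < n
        have h1 : n - k = (n - (k+1)) + 1 := by omega
        have h2 : (n+1) - (k+1) = n - k := by omega
        simp only [binPMF, h2, h1, pow_succ, Nat.choose_succ_succ]
        push_cast
        ring
      · subst h
        simp [binPMF, Nat.choose_self, Nat.choose_succ_self, Nat.sub_self,
          Nat.choose_eq_zero_of_lt]
        ring
      · simp [binPMF, Nat.choose_eq_zero_of_lt, h, Nat.choose_eq_zero_of_lt (by omega : n < k+1)]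

open Polynomial in
lemma pbl_coeff (l : List ℝ) :
    ∀ k, pbl l k = ((l.map (fun a => C (1 - a) + C a * X)).prod).coeff k := by
  induction l with
  | nil => intro k; cases k <;> simp [pbl, Polynomial.coeff_one]
  | cons a l ih =>
    intro k
    rw [List.map_cons, List.prod_cons]
    cases k with
    | zero =>
      show (1 - a) * pbl l 0 = _
      rw [mul_coeff_zero, ih 0]
      simp
    | succ k =>
      rw [add_mul, coeff_add, coeff_C_mul, mul_assoc, coeff_C_mul, coeff_X_mul]
      rw [pbl, ih k, ih (k+1)]
      ring

open Polynomial in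
lemma pbPMF_coeff (n : ℕ) (p : Fin n → ℝ) (k : ℕ) :
    pbPMF n p k = ((∏ i : Fin n, (C (1 - p i) + C (p i) * X)).coeff k) := by
  have : ∀ i : Fin n, C (1 - p i) + C (p i) * X = C (p i) * X + C (1 - p i) := by
    intro i; ring
  rw [Finset.prod_congr rfl (fun i _ => this i), Finset.prod_add]
  rw [finset_sum_coeff]
  have hterm : ∀ t : Finset (Fin n),
      ((∏ i ∈ t, C (p i) * X) * ∏ i ∈ Finset.univ \ t, C (1 - p i)).coeff k
      = if t.card = k then (∏ i ∈ t, p i) * ∏ i ∈ tᶜ, (1 - p i) else 0 := by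
    intro t
    rw [Finset.prod_mul_distrib, Finset.prod_const]
    rw [← Finset.compl_eq_univ_sdiff]
    rw [← map_prod, ← map_prod]
    rw [show (C (∏ i ∈ t, p i) * X ^ t.card) * C (∏ i ∈ tᶜ, (1 - p i))
      = C ((∏ i ∈ t, p i) * (∏ i ∈ tᶜ, (1 - p i))) * X ^ t.card by
        rw [map_mul]; ring]
    rw [coeff_C_mul, coeff_X_pow]
    by_cases h : t.card = k
    · simp [h]
    · rw [if_neg (fun hh => h hh.symm), if_neg h, mul_zero]
  rw [Finset.sum_congr rfl (fun t _ => hterm t), ← Finset.sum_filter,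
    ← Finset.powersetCard_eq_filter]
  rfl

lemma pbPMF_eq (n : ℕ) (p : Fin n → ℝ) (k : ℕ) : pbPMF n p k = pbl (List.ofFn p) k := by
  rw [pbPMF_coeff, pbl_coeff]
  congr 1
  rw [List.map_ofFn, List.prod_ofFn]
  rfl
lemma pbl_one_sub : ∀ (l : List ℝ) (k : ℕ), k ≤ l.length →
    pbl (l.map (fun x => 1 - x)) k = pbl l (l.length - k) := by
  intro l
  induction l with
  | nil =>
    intro k hk
    have : k = 0 := by simpa using hk
    subst this; rfl
  | cons a l ih =>
    intro k hk
    simp only [List.length_cons] at hk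
    rw [List.map_cons]
    cases k with
    | zero =>
      show (1 - (1 - a)) * pbl (l.map (fun x => 1 - x)) 0 = pbl (a :: l) (l.length + 1 - 0)
      rw [ih 0 (by omega)]
      show (1 - (1 - a)) * pbl l (l.length - 0) = pbl (a :: l) (l.length + 1)
      show _ = a * pbl l l.length + (1 - a) * pbl l (l.length + 1)
      rw [show pbl l (l.length + 1) = 0 from pbl_eq_zero (by omega), Nat.sub_zero]
      ring
    | succ j =>
      show (1 - a) * pbl (l.map (fun x => 1 - x)) j
          + (1 - (1 - a)) * pbl (l.map (fun x => 1 - x)) (j+1)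
          = pbl (a :: l) (l.length + 1 - (j+1))
      rw [ih j (by omega)]
      rcases Nat.lt_or_ge j l.length with h | h
      · rw [ih (j+1) (by omega)]
        have h1 : l.length + 1 - (j+1) = (l.length - (j+1)) + 1 := by omega
        rw [h1]
        show _ = a * pbl l (l.length - (j+1)) + (1 - a) * pbl l (l.length - (j+1) + 1)
        have h2 : l.length - (j+1) + 1 = l.length - j := by omega
        rw [h2]
        ring
      · have hj : j = l.length := by omega
        subst hj
        rw [pbl_eq_zero (l := l.map _) (by simp)]
        have h1 : l.length + 1 - (l.length + 1) = 0 := by omega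
        rw [h1]
        show _ = (1 - a) * pbl l 0
        rw [Nat.sub_self]
        ring

lemma T_dual (l : List ℝ) (k : ℕ) (hk : k ≤ l.length) :
    T (l.map (fun x => 1 - x)) k = 1 - T l (l.length - k + 1) := by
  set n := l.length with hn
  have hlen : (l.map (fun x => 1 - x)).length = n := by simp [hn]
  rw [T, hlen]
  have step1 : ∑ i ∈ Finset.Icc k n, pbl (l.map (fun x => 1 - x)) i
      = ∑ i ∈ Finset.Icc k n, pbl l (n - i) := by
    refine Finset.sum_congr rfl fun i hi => ?_
    simp only [Finset.mem_Icc] at hi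
    exact pbl_one_sub l i hi.2
  rw [step1]
  have step2 : ∑ i ∈ Finset.Icc k n, pbl l (n - i)
      = ∑ j ∈ Finset.Icc 0 (n - k), pbl l j := by
    refine Finset.sum_nbij' (fun i => n - i) (fun j => n - j) ?_ ?_ ?_ ?_ ?_
    · intro i hi; simp only [Finset.mem_Icc] at *; omega
    · intro j hj; simp only [Finset.mem_Icc] at *; omega
    · intro i hi; simp only [Finset.mem_Icc] at hi; show n - (n - i) = i; omega
    · intro j hj; simp only [Finset.mem_Icc] at hj; show n - (n - j) = j; omega
    · intro i _; rfl
  rw [step2]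
  have step3 : ∑ j ∈ Finset.Icc 0 (n - k), pbl l j
      + ∑ j ∈ Finset.Icc (n - k + 1) n, pbl l j = 1 := by
    have hsplit : Finset.Icc 0 n = Finset.Icc 0 (n - k) ∪ Finset.Icc (n - k + 1) n := by
      ext i; simp only [Finset.mem_union, Finset.mem_Icc]; omega
    have hdisj : Disjoint (Finset.Icc 0 (n - k)) (Finset.Icc (n - k + 1) n) := by
      rw [Finset.disjoint_left]
      intro i hi hi'; simp only [Finset.mem_Icc] at *; omega
    have := T_zero l
    rw [T] at this
    rw [show Finset.Icc 0 l.length = Finset.Icc 0 (n-k) ∪ Finset.Icc (n-k+1) n by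
      rw [← hn]; exact hsplit] at this
    rw [Finset.sum_union hdisj] at this
    linarith
  have : ∑ j ∈ Finset.Icc (n - k + 1) n, pbl l j = T l (n - k + 1) := rfl
  linarith [step3, this.symm.le]

lemma dual_iff (l : List ℝ) (q : ℝ) :
    (∀ k, T l k ≤ T (List.replicate l.length q) k) ↔
    (∀ k, T (List.replicate l.length (1 - q)) k ≤ T (l.map (fun x => 1 - x)) k) := by
  set n := l.length with hn
  have hrep : List.replicate n (1 - q) = (List.replicate n q).map (fun x => 1 - x) := by
    rw [List.map_replicate]
  have hreplen : (List.replicate n q).length = n := by simp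
  constructor
  · intro h k
    rcases le_or_gt k n with hk | hk
    · rw [hrep, T_dual _ k (by simpa using hk), T_dual l k (by omega), hreplen, ← hn]
      have := h (n - k + 1)
      linarith
    · rw [T_eq_zero (by simpa using hk), T_eq_zero (by simp; omega)]
  · intro h k
    rcases eq_or_ne k 0 with rfl | hk0
    · rw [T_zero, T_zero]
    rcases le_or_gt k n with hk | hk
    · have hj : n - (n - k + 1) + 1 = k := by omega
      have h1 := h (n - k + 1)
      rw [hrep, T_dual _ (n - k + 1) (by simp; omega),
        T_dual l (n - k + 1) (by omega), hreplen, ← hn, hj] at h1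
      linarith
    · rw [T_eq_zero (by simpa using hk), T_eq_zero (by simp; omega)]

lemma tail_bin (n : ℕ) (q : ℝ) (k : ℕ) :
    tailProb n (binPMF n q) k = T (List.replicate n q) k := by
  rw [tailProb, T, List.length_replicate]
  exact Finset.sum_congr rfl fun i _ => binPMF_eq n q i

lemma tail_pb (n : ℕ) (p : Fin n → ℝ) (k : ℕ) :
    tailProb n (pbPMF n p) k = T (List.ofFn p) k := by
  rw [tailProb, T, List.length_ofFn]
  exact Finset.sum_congr rfl fun i _ => pbPMF_eq n p i

lemma ofFn_mem {n : ℕ} {p : Fin n → ℝ} (hp : ∀ i, 0 ≤ p i ∧ p i ≤ 1) :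
    ∀ x ∈ List.ofFn p, 0 ≤ x ∧ x ≤ 1 := by
  intro x hx
  rw [List.mem_ofFn] at hx
  obtain ⟨i, rfl⟩ := hx
  exact hp i

lemma key (n : ℕ) (p : Fin n → ℝ) (hp : ∀ i, 0 ≤ p i ∧ p i ≤ 1)
    (q : ℝ) (hq0 : 0 ≤ q) (hq1 : q ≤ 1) :
    (∀ k : ℕ, tailProb n (binPMF n q) k ≤ tailProb n (pbPMF n p) k) ↔
      q ≤ (∏ i, p i) ^ ((n : ℝ)⁻¹) := by
  rcases Nat.eq_zero_or_pos n with rfl | hn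
  · constructor
    · intro _
      rw [show ((0:ℕ):ℝ)⁻¹ = 0 by simp, Real.rpow_zero]
      exact hq1
    · intro _ k
      rw [tail_bin, tail_pb, List.ofFn_zero]
      exact le_refl _
  have hnne : ((n:ℝ)) ≠ 0 := by positivity
  have hPn : 0 ≤ ∏ i, p i := Finset.prod_nonneg fun i _ => (hp i).1
  have hP1 : ∏ i, p i ≤ 1 := Finset.prod_le_one (fun i _ => (hp i).1) (fun i _ => (hp i).2)
  constructor
  · intro h
    have e1 : binPMF n q n = q ^ n := by simp [binPMF]
    have e2 : pbPMF n p n = ∏ i, p i := by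
      have hset : Finset.powersetCard n (Finset.univ : Finset (Fin n)) = {Finset.univ} := by
        ext A
        simp only [Finset.mem_powersetCard, Finset.subset_univ, true_and,
          Finset.mem_singleton]
        constructor
        · intro hA
          apply Finset.eq_univ_of_card
          rw [hA, Fintype.card_fin]
        · rintro rfl
          simp
      rw [pbPMF, hset, Finset.sum_singleton]
      simp
    have h1 : q ^ n ≤ ∏ i, p i := by
      have := h n
      rw [tailProb, tailProb, Finset.Icc_self, Finset.sum_singleton, Finset.sum_singleton,
        e1, e2] at this
      exact this
    calc q = (q ^ n) ^ ((n:ℝ)⁻¹) := by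
          rw [← Real.rpow_natCast q n, ← Real.rpow_mul hq0, mul_inv_cancel₀ hnne,
            Real.rpow_one]
      _ ≤ (∏ i, p i) ^ ((n:ℝ)⁻¹) := Real.rpow_le_rpow (pow_nonneg hq0 n) h1 (by positivity)
  · intro hqg k
    rw [tail_bin, tail_pb]
    rcases eq_or_lt_of_le hPn with hP0 | hP0
    · have hg0 : (∏ i, p i) ^ ((n:ℝ)⁻¹) = 0 := by
        rw [← hP0]; exact Real.zero_rpow (by positivity)
      have hq : q = 0 := le_antisymm (by rw [hg0] at hqg; exact hqg) hq0
      subst hq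
      cases k with
      | zero => rw [T_zero, T_zero]
      | succ k =>
        have hL : T (List.replicate n 0) (k+1) = 0 := by
          rw [T, List.length_replicate]
          apply Finset.sum_eq_zero
          intro i hi
          simp only [Finset.mem_Icc] at hi
          rw [← binPMF_eq]
          simp [binPMF, zero_pow (by omega : i ≠ 0)]
        rw [hL, T]
        exact Finset.sum_nonneg fun i _ => pbl_nonneg (ofFn_mem hp) i
    · set g := (∏ i, p i) ^ ((n:ℝ)⁻¹) with hg
      have hg1 : g ≤ 1 := Real.rpow_le_one hPn hP1 (by positivity)
      have hg0' : 0 < g := Real.rpow_pos_of_pos hP0 _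
      have hgpow : g ^ n = ∏ i, p i := by
        rw [← Real.rpow_natCast g n, hg, ← Real.rpow_mul hPn, inv_mul_cancel₀ hnne,
          Real.rpow_one]
      have step1 := bin_mono hq0 hqg hg1 n k
      have step2 := main_smooth n (List.ofFn p) (by simp) (ofFn_mem hp) g hg0' hg1
        (by rw [List.prod_ofFn, ← hgpow]) k
      exact le_trans step1 step2

lemma key2 (n : ℕ) (p : Fin n → ℝ) (hp : ∀ i, 0 ≤ p i ∧ p i ≤ 1)
    (q : ℝ) (hq0 : 0 ≤ q) (hq1 : q ≤ 1) :
    (∀ k : ℕ, tailProb n (pbPMF n p) k ≤ tailProb n (binPMF n q) k) ↔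
      1 - (∏ i, (1 - p i)) ^ ((n : ℝ)⁻¹) ≤ q := by
  have hp1 : ∀ i, 0 ≤ 1 - p i ∧ 1 - p i ≤ 1 :=
    fun i => ⟨by linarith [(hp i).2], by linarith [(hp i).1]⟩
  have D := dual_iff (List.ofFn p) q
  rw [List.length_ofFn] at D
  have hmap : (List.ofFn p).map (fun x => 1 - x) = List.ofFn (fun i => 1 - p i) := by
    rw [List.map_ofFn]; rfl
  rw [hmap] at D
  have hA : (∀ k : ℕ, tailProb n (pbPMF n p) k ≤ tailProb n (binPMF n q) k)
      ↔ (∀ k, T (List.ofFn p) k ≤ T (List.replicate n q) k) :=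
    forall_congr' fun k => by rw [tail_pb, tail_bin]
  have hB : (∀ k : ℕ, tailProb n (binPMF n (1 - q)) k
        ≤ tailProb n (pbPMF n (fun i => 1 - p i)) k)
      ↔ (∀ k, T (List.replicate n (1 - q)) k ≤ T (List.ofFn (fun i => 1 - p i)) k) :=
    forall_congr' fun k => by rw [tail_pb, tail_bin]
  rw [hA, D, ← hB, key n (fun i => 1 - p i) hp1 (1 - q) (by linarith) (by linarith)]
  constructor <;> intro <;> linarith

/-- Stochastic comparison with a binomial (Boland–Singh–Cukic). -/
theorem boland_singh_cukic (n : ℕ) (p p' : Fin n → ℝ)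
    (hp : ∀ i, 0 ≤ p i ∧ p i ≤ 1) (hp' : ∀ i, 0 ≤ p' i ∧ p' i ≤ 1)
    (q : ℝ) (hq : 0 ≤ q ∧ q ≤ 1) :
    ((∀ k : ℕ, tailProb n (binPMF n q) k ≤ tailProb n (pbPMF n p) k) ↔
      q ≤ (∏ i, p i) ^ ((n : ℝ)⁻¹)) ∧
    ((∀ k : ℕ, tailProb n (pbPMF n p) k ≤ tailProb n (binPMF n q) k) ↔
      1 - (∏ i, (1 - p i)) ^ ((n : ℝ)⁻¹) ≤ q) ∧
    (1 - (∏ i, (1 - p' i)) ^ ((n : ℝ)⁻¹) ≤ (∏ i, p i) ^ ((n : ℝ)⁻¹) →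
      ∀ k : ℕ, tailProb n (pbPMF n p') k ≤ tailProb n (pbPMF n p) k) := by
  refine ⟨key n p hp q hq.1 hq.2, key2 n p hp q hq.1 hq.2, ?_⟩
  intro h k
  have hB0 : 0 ≤ (∏ i, (1 - p' i)) ^ ((n:ℝ)⁻¹) :=
    Real.rpow_nonneg (Finset.prod_nonneg fun i _ => by linarith [(hp' i).2]) _
  have hB1 : (∏ i, (1 - p' i)) ^ ((n:ℝ)⁻¹) ≤ 1 :=
    Real.rpow_le_one (Finset.prod_nonneg fun i _ => by linarith [(hp' i).2])
      (Finset.prod_le_one (fun i _ => by linarith [(hp' i).2])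
        (fun i _ => by linarith [(hp' i).1])) (by positivity)
  have t1 := (key2 n p' hp' (1 - (∏ i, (1 - p' i)) ^ ((n:ℝ)⁻¹))
    (by linarith) (by linarith)).mpr (le_refl _)
  have t2 := (key n p hp (1 - (∏ i, (1 - p' i)) ^ ((n:ℝ)⁻¹))
    (by linarith) (by linarith)).mpr h
  exact le_trans (t1 k) (t2 k)
end

section
/- Translated Poisson approximation (Röllin): Let X ~ PB(p_1,...,p_n), μ = Σ_{i=1}^n p_i, σ² = Σ_{i=1}^n p_i(1−p_i) > 0. Then d_TV(L(X), TP(μ, σ²)) ≤ (2 + sqrt(Σ_{i=1}^n p_i³(1−p_i))) / σ², where d_TV is the total variation distance. -/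
open scoped BigOperators
noncomputable def ppi (lam : ℝ) (k : ℕ) : ℝ := Real.exp (-lam) * lam ^ k / k.factorial

lemma ppi_summable (lam : ℝ) : Summable (ppi lam) := by
  have h := (Real.summable_pow_div_factorial lam).mul_left (Real.exp (-lam))
  exact h.congr fun k => by simp [ppi, mul_div_assoc]

lemma ppi_nonneg {lam : ℝ} (hl : 0 < lam) (k : ℕ) : 0 ≤ ppi lam k :=
  div_nonneg (mul_nonneg (Real.exp_pos _).le (pow_nonneg hl.le _)) (Nat.cast_nonneg _)

lemma ppi_tsum (lam : ℝ) : ∑' k, ppi lam k = 1 := by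
  have h1 : ∑' k : ℕ, lam ^ k / k.factorial = Real.exp lam := by
    rw [Real.exp_eq_exp_ℝ, NormedSpace.exp_eq_tsum_div]
  calc ∑' k, ppi lam k = Real.exp (-lam) * ∑' k : ℕ, lam ^ k / k.factorial := by
        rw [← tsum_mul_left]; apply tsum_congr; intro k; simp [ppi, mul_div_assoc]
    _ = 1 := by rw [h1, ← Real.exp_add]; simp

lemma ppi_succ {lam : ℝ} (hl : 0 < lam) (k : ℕ) :
    lam * ppi lam k = ((k : ℝ) + 1) * ppi lam (k + 1) := by
  have hk : (k.factorial : ℝ) ≠ 0 := Nat.cast_ne_zero.mpr k.factorial_ne_zero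
  have hk1 : ((k : ℝ) + 1) ≠ 0 := by positivity
  simp only [ppi, pow_succ, Nat.factorial_succ, Nat.cast_mul, Nat.cast_add, Nat.cast_one]
  field_simp

noncomputable def piB (lam : ℝ) (h : ℕ → ℝ) : ℝ := ∑' k, h k * ppi lam k

variable {lam : ℝ} {h : ℕ → ℝ}

lemma piB_summable (hl : 0 < lam) (hh0 : ∀ k, 0 ≤ h k) (hh1 : ∀ k, h k ≤ 1) : Summable fun k => h k * ppi lam k := by
  apply Summable.of_nonneg_of_le (fun k => mul_nonneg (hh0 k) (ppi_nonneg hl k))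
    (fun k => ?_) (ppi_summable lam)
  calc h k * ppi lam k ≤ 1 * ppi lam k :=
        mul_le_mul_of_nonneg_right (hh1 k) (ppi_nonneg hl k)
    _ = ppi lam k := one_mul _

lemma piB_nonneg (hl : 0 < lam) (hh0 : ∀ k, 0 ≤ h k) : 0 ≤ piB lam h :=
  tsum_nonneg fun k => mul_nonneg (hh0 k) (ppi_nonneg hl k)

lemma piB_le_one (hl : 0 < lam) (hh0 : ∀ k, 0 ≤ h k) (hh1 : ∀ k, h k ≤ 1) : piB lam h ≤ 1 := by
  have := Summable.tsum_le_tsum (f := fun k => h k * ppi lam k) (g := ppi lam)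
    (fun k => by
      calc h k * ppi lam k ≤ 1 * ppi lam k :=
            mul_le_mul_of_nonneg_right (hh1 k) (ppi_nonneg hl k)
        _ = ppi lam k := one_mul _)
    (piB_summable hl hh0 hh1) (ppi_summable lam)
  simpa [piB, ppi_tsum lam] using this


/-- partial sums of the Stein kernel -/
noncomputable def SS (lam : ℝ) (h : ℕ → ℝ) (j : ℕ) : ℝ :=
  ∑ k ∈ Finset.range (j + 1), (h k - piB lam h) * ppi lam k

/-- `gnat lam h j = g (j+1)` : the Stein solution. -/
noncomputable def gnat (lam : ℝ) (h : ℕ → ℝ) (j : ℕ) : ℝ :=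
  (j.factorial : ℝ) * Real.exp lam / lam ^ (j + 1) * SS lam h j

noncomputable def steinG (lam : ℝ) (h : ℕ → ℝ) (z : ℤ) : ℝ :=
  if 1 ≤ z then gnat lam h (z - 1).toNat else 0

lemma steinG_nonpos {lam : ℝ} {h : ℕ → ℝ} {z : ℤ} (hz : z ≤ 0) : steinG lam h z = 0 := by
  simp [steinG]; omega

lemma stein_eq {lam : ℝ} {h : ℕ → ℝ} (hl : 0 < lam) (z : ℤ) (hz : 0 ≤ z) :
    lam * steinG lam h (z + 1) - (z : ℝ) * steinG lam h z = h z.toNat - piB lam h := by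
  have hlne : lam ≠ 0 := ne_of_gt hl
  have hexp : Real.exp (-lam) = (Real.exp lam)⁻¹ := by rw [Real.exp_neg]
  have hexpne : Real.exp lam ≠ 0 := (Real.exp_pos lam).ne'
  rcases Int.eq_ofNat_of_zero_le hz with ⟨j, rfl⟩
  cases j with
  | zero =>
    simp only [steinG]
    norm_num
    simp only [gnat, SS, zero_add, Finset.sum_range_one, ppi, hexp]
    field_simp
  | succ j =>
    have h1 : ((j : ℤ) + 1 + 1 - 1).toNat = j + 1 := by omega
    have h2 : ((j : ℤ) + 1 - 1).toNat = j := by omega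
    have h3 : ((j : ℤ) + 1).toNat = j + 1 := by omega
    push_cast
    simp only [steinG, show (1:ℤ) ≤ (j:ℤ) + 1 + 1 by omega, show (1:ℤ) ≤ (j:ℤ) + 1 by omega,
      if_true, h1, h2]
    rw [show ((j : ℤ) + 1 + 1 - 1) = ((j:ℤ) + 1) by ring] at *
    simp only [h3]  -- may need adjusting
    have hS : SS lam h (j + 1) = SS lam h j + (h (j+1) - piB lam h) * ppi lam (j+1) := by
      simp [SS, Finset.sum_range_succ]
    simp only [gnat, hS, ppi, hexp, Nat.factorial_succ]
    have : ((j+1).factorial : ℝ) ≠ 0 := Nat.cast_ne_zero.mpr (j+1).factorial_ne_zero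
    have : (j.factorial : ℝ) ≠ 0 := Nat.cast_ne_zero.mpr j.factorial_ne_zero
    push_cast
    field_simp
    ring

section Key
variable {lam : ℝ} {h : ℕ → ℝ}

/-- cdf of the Poisson distribution -/
noncomputable def Fcdf (lam : ℝ) (t : ℕ) : ℝ := ∑ k ∈ Finset.range (t + 1), ppi lam k

lemma lam_Fcdf (hl : 0 < lam) (j : ℕ) :
    lam * Fcdf lam j = ∑ k ∈ Finset.range (j + 2), (k : ℝ) * ppi lam k := by
  rw [Fcdf, Finset.mul_sum, Finset.sum_range_succ' (fun k => (k : ℝ) * ppi lam k) (j+1)]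
  simp only [Nat.cast_zero, zero_mul, add_zero, Nat.cast_add, Nat.cast_one]
  exact Finset.sum_congr rfl fun k _ => ppi_succ hl k

lemma D_eq (hl : 0 < lam) (j : ℕ) :
    ((j:ℝ)+1) * Fcdf lam (j+1) - lam * Fcdf lam j
      = ∑ k ∈ Finset.range (j + 2), (((j:ℝ)+1) - k) * ppi lam k := by
  rw [lam_Fcdf hl j, Fcdf, Finset.mul_sum, ← Finset.sum_sub_distrib]
  exact Finset.sum_congr rfl fun k _ => by ring

lemma D_nonneg (hl : 0 < lam) (j : ℕ) :
    0 ≤ ((j:ℝ)+1) * Fcdf lam (j+1) - lam * Fcdf lam j := by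
  rw [D_eq hl j]
  apply Finset.sum_nonneg
  intro k hk
  have : (k:ℝ) ≤ (j:ℝ) + 1 := by
    have := Finset.mem_range.mp hk; exact_mod_cast Nat.lt_succ_iff.mp (by omega)
  exact mul_nonneg (by linarith) (ppi_nonneg hl k)

lemma tail_eq (lam : ℝ) (t : ℕ) : 1 - Fcdf lam t = ∑' k, ppi lam (k + (t+1)) := by
  have := Summable.sum_add_tsum_nat_add (f := ppi lam) (t+1) (ppi_summable lam)
  rw [ppi_tsum lam] at this
  rw [Fcdf]
  linarith

lemma D_ge (hl : 0 < lam) (j : ℕ) :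
    ((j:ℝ)+1) - lam ≤ ((j:ℝ)+1) * Fcdf lam (j+1) - lam * Fcdf lam j := by
  have key : ((j:ℝ)+1) * (1 - Fcdf lam (j+1)) ≤ lam * (1 - Fcdf lam j) := by
    rw [tail_eq lam (j+1), tail_eq lam j, ← tsum_mul_left, ← tsum_mul_left]
    have hsum2 : Summable fun k => ppi lam (k + (j+2)) :=
      (summable_nat_add_iff (j+2)).2 (ppi_summable lam)
    have hsum1 : Summable fun k => ppi lam (k + (j+1)) :=
      (summable_nat_add_iff (j+1)).2 (ppi_summable lam)
    apply Summable.tsum_le_tsum _ (hsum2.mul_left _) (hsum1.mul_left _)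
    intro k
    have hrec : lam * ppi lam (k + (j+1)) = ((k:ℝ)+(j:ℝ)+2) * ppi lam (k + (j+2)) := by
      have := ppi_succ hl (k + (j+1))
      push_cast at this ⊢
      rw [show k + (j+1) + 1 = k + (j+2) by ring] at this
      rw [this]; ring
    rw [hrec]
    apply mul_le_mul_of_nonneg_right _ (ppi_nonneg hl _)
    push_cast; linarith
  nlinarith [key]

lemma key_ineq (hl : 0 < lam) (hh0 : ∀ k, 0 ≤ h k) (hh1 : ∀ k, h k ≤ 1) (j : ℕ) :
    |((j:ℝ)+1) * SS lam h (j+1) - lam * SS lam h j| ≤ ((j:ℝ)+1) * ppi lam (j+1) := by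
  set J : ℝ := (j:ℝ) + 1 with hJ
  set D : ℝ := J * Fcdf lam (j+1) - lam * Fcdf lam j with hD
  have hD0 : 0 ≤ D := D_nonneg hl j
  have hDge : J - lam ≤ D := D_ge hl j
  set d : ℕ → ℝ := fun k => if k < j+1 then J - lam else if k = j+1 then J else 0 with hd
  set e : ℕ → ℝ := fun k => d k - D with he
  -- summability pieces
  have hsum_hpd : Summable fun k => h k * ppi lam k * d k := by
    apply summable_of_ne_finset_zero (s := Finset.range (j+2))
    intro k hk
    have hk' : ¬ k < j + 1 ∧ k ≠ j + 1 := by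
      constructor <;> [skip; skip] <;> simp only [Finset.mem_range] at hk <;> omega
    simp [hd, hk'.1, hk'.2, show ¬ k ≤ j by omega]
  have hsum_hp : Summable fun k => h k * ppi lam k := piB_summable hl hh0 hh1
  have hsum_u : Summable fun k => h k * ppi lam k * e k := by
    have := hsum_hpd.sub (hsum_hp.mul_right D)
    exact this.congr fun k => by simp [he]; ring
  have hsum_pd : Summable fun k => ppi lam k * d k := by
    apply summable_of_ne_finset_zero (s := Finset.range (j+2))
    intro k hk
    have hk' : ¬ k < j + 1 ∧ k ≠ j + 1 := by
      constructor <;> [skip; skip] <;> simp only [Finset.mem_range] at hk <;> omega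
    simp [hd, hk'.1, hk'.2, show ¬ k ≤ j by omega]
  have hsum_pe : Summable fun k => ppi lam k * e k := by
    have := hsum_pd.sub ((ppi_summable lam).mul_right D)
    exact this.congr fun k => by simp [he]; ring
  -- the tsum identity
  have hfin_d : ∀ (f : ℕ → ℝ), (∑' k, f k * ppi lam k * d k)
      = ∑ k ∈ Finset.range (j+2), f k * ppi lam k * d k := by
    intro f
    apply tsum_eq_sum
    intro k hk
    have hk' : ¬ k < j + 1 ∧ k ≠ j + 1 := by
      constructor <;> [skip; skip] <;> simp only [Finset.mem_range] at hk <;> omega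
    simp [hd, hk'.1, hk'.2, show ¬ k ≤ j by omega]
  have hfin_eval : ∀ (f : ℕ → ℝ), (∑ k ∈ Finset.range (j+2), f k * ppi lam k * d k)
      = J * (∑ k ∈ Finset.range (j+2), f k * ppi lam k)
        - lam * (∑ k ∈ Finset.range (j+1), f k * ppi lam k) := by
    intro f
    rw [Finset.sum_range_succ (fun k => f k * ppi lam k * d k) (j+1),
        Finset.sum_range_succ (fun k => f k * ppi lam k) (j+1)]
    have h1 : ∀ k ∈ Finset.range (j+1), f k * ppi lam k * d k
        = J * (f k * ppi lam k) - lam * (f k * ppi lam k) := by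
      intro k hk
      have : k < j + 1 := Finset.mem_range.mp hk
      simp [hd, this, show k ≤ j by omega]; ring
    rw [Finset.sum_congr rfl h1]
    have h2 : d (j+1) = J := by simp [hd]
    rw [h2, Finset.sum_sub_distrib, ← Finset.mul_sum, ← Finset.mul_sum]
    ring
  have hSSf : ∀ t : ℕ, SS lam h t = (∑ k ∈ Finset.range (t+1), h k * ppi lam k)
      - piB lam h * Fcdf lam t := by
    intro t
    rw [SS, Fcdf, Finset.mul_sum, ← Finset.sum_sub_distrib]
    exact Finset.sum_congr rfl fun k _ => by ring
  have hident : (∑' k, h k * ppi lam k * e k)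
      = J * SS lam h (j+1) - lam * SS lam h j := by
    have expand : (∑' k, h k * ppi lam k * e k)
        = (∑' k, h k * ppi lam k * d k) - D * piB lam h := by
      have : (fun k => h k * ppi lam k * e k)
          = fun k => h k * ppi lam k * d k - D * (h k * ppi lam k) := by
        funext k; simp [he]; ring
      rw [this, Summable.tsum_sub hsum_hpd ((hsum_hp).mul_left D), tsum_mul_left]
      rfl
    rw [expand, hfin_d, hfin_eval, hSSf, hSSf, hD]
    ring
  -- zero sum
  have hzero : (∑' k, ppi lam k * e k) = 0 := by
    have expand : (∑' k, ppi lam k * e k)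
        = (∑' k, (1:ℝ) * ppi lam k * d k) - D * (∑' k, ppi lam k) := by
      have : (fun k => ppi lam k * e k)
          = fun k => (1:ℝ) * ppi lam k * d k - D * ppi lam k := by
        funext k; simp [he]; ring
      rw [this, Summable.tsum_sub (hsum_pd.congr fun k => by ring) ((ppi_summable lam).mul_left D),
        tsum_mul_left]
    rw [expand, hfin_d, hfin_eval, ppi_tsum]
    have : ∀ t : ℕ, (∑ k ∈ Finset.range (t+1), (1:ℝ) * ppi lam k) = Fcdf lam t := by
      intro t; rw [Fcdf]; exact Finset.sum_congr rfl fun k _ => one_mul _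
    rw [this, this, hD]; ring
  -- pointwise bounds
  set v : ℕ → ℝ := fun k => if k = j+1 then ppi lam (j+1) * max (J - D) 0 else 0 with hv
  have hsum_v : Summable v := by
    apply summable_of_ne_finset_zero (s := {j+1})
    intro k hk
    simp only [Finset.mem_singleton] at hk
    simp [hv, hk]
  have htsum_v : (∑' k, v k) = ppi lam (j+1) * max (J - D) 0 := by
    rw [hv, tsum_ite_eq]
  have he_neg : ∀ k, k ≠ j + 1 → e k ≤ 0 := by
    intro k hk
    by_cases hlt : k < j + 1
    · simp only [he, hd, hlt, if_true]; linarith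
    · simp only [he, hd, hlt, if_false, hk, if_false]; linarith
  have hub : ∀ k, h k * ppi lam k * e k ≤ v k := by
    intro k
    by_cases hk : k = j + 1
    · subst hk
      simp only [hv, if_true]
      have hejp : e (j+1) = J - D := by simp [he, hd]
      rw [hejp]
      rcases le_or_gt 0 (J - D) with hc | hc
      · calc h (j+1) * ppi lam (j+1) * (J - D) ≤ 1 * ppi lam (j+1) * (J - D) := by
              apply mul_le_mul_of_nonneg_right _ hc
              exact mul_le_mul_of_nonneg_right (hh1 _) (ppi_nonneg hl _)
          _ ≤ ppi lam (j+1) * max (J - D) 0 := by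
              rw [one_mul, max_eq_left hc]
      · have : h (j+1) * ppi lam (j+1) * (J - D) ≤ 0 :=
          mul_nonpos_of_nonneg_of_nonpos (mul_nonneg (hh0 _) (ppi_nonneg hl _)) hc.le
        calc h (j+1) * ppi lam (j+1) * (J - D) ≤ 0 := this
          _ ≤ ppi lam (j+1) * max (J - D) 0 :=
            mul_nonneg (ppi_nonneg hl _) (le_max_right _ _)
    · have hek := he_neg k hk
      have : h k * ppi lam k * e k ≤ 0 :=
        mul_nonpos_of_nonneg_of_nonpos (mul_nonneg (hh0 _) (ppi_nonneg hl _)) hek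
      simp only [hv, hk, if_false]
      exact this
  have hlb : ∀ k, ppi lam k * e k - v k ≤ h k * ppi lam k * e k := by
    intro k
    by_cases hk : k = j + 1
    · subst hk
      simp only [hv, if_true]
      have hejp : e (j+1) = J - D := by simp [he, hd]
      rw [hejp]
      rcases le_or_gt 0 (J - D) with hc | hc
      · rw [max_eq_left hc]
        have : 0 ≤ h (j+1) * ppi lam (j+1) * (J - D) :=
          mul_nonneg (mul_nonneg (hh0 _) (ppi_nonneg hl _)) hc
        nlinarith
      · rw [max_eq_right hc.le, mul_zero, sub_zero]
        have hπ := ppi_nonneg hl (j+1)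
        have h1 : 0 ≤ (1 - h (j+1)) * (-(J - D)) :=
          mul_nonneg (by linarith [hh1 (j+1)]) (by linarith)
        nlinarith [mul_nonneg hπ h1]
    · have hek := he_neg k hk
      simp only [hv, hk, if_false, sub_zero]
      have hπ := ppi_nonneg hl k
      have h1 : 0 ≤ (1 - h k) * (-(e k)) :=
        mul_nonneg (by linarith [hh1 k]) (by linarith)
      nlinarith [mul_nonneg hπ h1]
  -- conclude
  rw [← hident]
  rw [abs_le]
  constructor
  · have := Summable.tsum_le_tsum hlb (hsum_pe.sub hsum_v) hsum_u
    rw [Summable.tsum_sub hsum_pe hsum_v, hzero, htsum_v, zero_sub] at this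
    have hmax : ppi lam (j+1) * max (J - D) 0 ≤ J * ppi lam (j+1) := by
      have h1 : max (J - D) 0 ≤ J := by
        apply max_le (by linarith) (by positivity)
      nlinarith [ppi_nonneg hl (j+1)]
    linarith
  · have := Summable.tsum_le_tsum hub hsum_u hsum_v
    rw [htsum_v] at this
    have hmax : ppi lam (j+1) * max (J - D) 0 ≤ J * ppi lam (j+1) := by
      have h1 : max (J - D) 0 ≤ J := by
        apply max_le (by linarith) (by positivity)
      nlinarith [ppi_nonneg hl (j+1)]
    linarith

lemma steinG_diff (hl : 0 < lam) (hh0 : ∀ k, 0 ≤ h k) (hh1 : ∀ k, h k ≤ 1) (z : ℤ) :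
    |steinG lam h (z + 1) - steinG lam h z| ≤ 1 / lam := by
  have hlne : lam ≠ 0 := ne_of_gt hl
  have hexpne : Real.exp lam ≠ 0 := (Real.exp_pos lam).ne'
  have hexp : Real.exp (-lam) = (Real.exp lam)⁻¹ := by rw [Real.exp_neg]
  rcases lt_trichotomy z 0 with hz | hz | hz
  · have h1 : steinG lam h (z+1) = 0 := steinG_nonpos (by omega)
    have h2 : steinG lam h z = 0 := steinG_nonpos (by omega)
    rw [h1, h2, sub_zero, abs_zero]
    positivity
  · subst hz
    have h2 : steinG lam h 0 = 0 := steinG_nonpos le_rfl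
    have h1 : steinG lam h (0+1) = gnat lam h 0 := by norm_num [steinG]
    rw [h1, h2, sub_zero]
    have : gnat lam h 0 = (h 0 - piB lam h) / lam := by
      simp only [gnat, SS, zero_add, Finset.sum_range_one, ppi, hexp]
      field_simp
    rw [this, abs_div, abs_of_pos hl]
    apply div_le_div_of_nonneg_right _ hl.le
    rw [abs_le]
    constructor
    · have := piB_le_one hl hh0 hh1
      linarith [hh0 0]
    · have := piB_nonneg hl hh0
      linarith [hh1 0]
  · -- z ≥ 1
    obtain ⟨j, rfl⟩ : ∃ j : ℕ, z = (j : ℤ) + 1 := ⟨(z-1).toNat, by omega⟩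
    have h1 : steinG lam h ((j:ℤ) + 1 + 1) = gnat lam h (j+1) := by
      rw [steinG, if_pos (by omega)]
      congr 1; omega
    have h2 : steinG lam h ((j:ℤ) + 1) = gnat lam h j := by
      rw [steinG, if_pos (by omega)]
      congr 1; omega
    rw [h1, h2]
    have hdiff : gnat lam h (j+1) - gnat lam h j
        = (j.factorial : ℝ) * Real.exp lam / lam ^ (j+2)
          * (((j:ℝ)+1) * SS lam h (j+1) - lam * SS lam h j) := by
      simp only [gnat, Nat.factorial_succ]
      have : (j.factorial : ℝ) ≠ 0 := Nat.cast_ne_zero.mpr j.factorial_ne_zero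
      push_cast
      field_simp
      ring
    rw [hdiff, abs_mul]
    have hpos : 0 < (j.factorial : ℝ) * Real.exp lam / lam ^ (j+2) := by positivity
    rw [abs_of_pos hpos]
    calc (j.factorial : ℝ) * Real.exp lam / lam ^ (j+2)
          * |((j:ℝ)+1) * SS lam h (j+1) - lam * SS lam h j|
        ≤ (j.factorial : ℝ) * Real.exp lam / lam ^ (j+2) * (((j:ℝ)+1) * ppi lam (j+1)) :=
          mul_le_mul_of_nonneg_left (key_ineq hl hh0 hh1 j) hpos.le
      _ = 1 / lam := by
          simp only [ppi, hexp, Nat.factorial_succ]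
          have h0 : (j.factorial : ℝ) ≠ 0 := Nat.cast_ne_zero.mpr j.factorial_ne_zero
          push_cast
          field_simp
          ring

section Cube
variable {n : ℕ} (p : Fin n → ℝ)

/-- weight of an outcome of `n` independent Bernoulli trials -/
noncomputable def wgt (S : Finset (Fin n)) : ℝ :=
  ∏ i : Fin n, (if i ∈ S then p i else 1 - p i)

lemma ifprod (s S : Finset (Fin n)) (hS : S ⊆ s) :
    (∏ a ∈ s, (if a ∈ S then p a else 1 - p a))
      = (∏ a ∈ S, p a) * ∏ a ∈ s \ S, (1 - p a) := by
  rw [← Finset.prod_sdiff hS, mul_comm]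
  congr 1
  · exact Finset.prod_congr rfl fun a ha => if_pos ha
  · exact Finset.prod_congr rfl fun a ha => if_neg (Finset.mem_sdiff.mp ha).2

lemma wgt_nonneg (hp : ∀ i, 0 ≤ p i ∧ p i ≤ 1) (S : Finset (Fin n)) : 0 ≤ wgt p S :=
  Finset.prod_nonneg fun i _ => by
    by_cases hi : i ∈ S <;> simp [wgt, hi] <;> [exact (hp i).1; linarith [(hp i).2]]

lemma sum_wgt_base (s : Finset (Fin n)) :
    (∑ S ∈ s.powerset, ∏ a ∈ s, (if a ∈ S then p a else 1 - p a)) = 1 := by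
  have h := Finset.prod_add p (fun a => 1 - p a) s
  have h2 : ∀ a ∈ s, p a + (1 - p a) = 1 := fun a _ => by ring
  rw [Finset.prod_congr rfl h2, Finset.prod_const_one] at h
  calc (∑ S ∈ s.powerset, ∏ a ∈ s, (if a ∈ S then p a else 1 - p a))
      = ∑ S ∈ s.powerset, (∏ a ∈ S, p a) * ∏ a ∈ s \ S, (1 - p a) :=
        Finset.sum_congr rfl fun S hS => ifprod p s S (Finset.mem_powerset.mp hS)
    _ = 1 := h.symm

lemma sum_wgt : ∑ S : Finset (Fin n), wgt p S = 1 := by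
  rw [← Finset.powerset_univ]
  exact sum_wgt_base p Finset.univ

lemma split_eval (i : Fin n) (F : Finset (Fin n) → ℝ) (c : ℝ)
    (hF : ∀ S : Finset (Fin n), i ∉ S → (1 - p i) * F S + p i * F (insert i S) = c) :
    ∑ S : Finset (Fin n), wgt p S * F S = c := by
  have huniv : (Finset.univ : Finset (Fin n)) = insert i (Finset.univ.erase i) :=
    (Finset.insert_erase (Finset.mem_univ i)).symm
  have hstep : ∑ S : Finset (Fin n), wgt p S * F S
      = ∑ S ∈ (Finset.univ.erase i).powerset,
          (wgt p S * F S + wgt p (insert i S) * F (insert i S)) := by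
    rw [← Finset.powerset_univ]
    conv_lhs => rw [huniv]
    rw [Finset.sum_powerset_insert (Finset.notMem_erase i Finset.univ)]
    rw [← Finset.sum_add_distrib]
  rw [hstep]
  set w' : Finset (Fin n) → ℝ :=
    fun S => ∏ a ∈ Finset.univ.erase i, (if a ∈ S then p a else 1 - p a) with hw'
  have hw1 : ∀ S, i ∉ S → wgt p S = (1 - p i) * w' S := by
    intro S hi
    rw [wgt, ← Finset.mul_prod_erase Finset.univ _ (Finset.mem_univ i), if_neg hi]
  have hw2 : ∀ S, i ∉ S → wgt p (insert i S) = p i * w' S := by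
    intro S hi
    rw [wgt, ← Finset.mul_prod_erase Finset.univ _ (Finset.mem_univ i),
      if_pos (Finset.mem_insert_self i S)]
    congr 1
    apply Finset.prod_congr rfl
    intro a ha
    have hai : a ≠ i := Finset.ne_of_mem_erase ha
    by_cases haS : a ∈ S
    · rw [if_pos haS, if_pos (Finset.mem_insert_of_mem haS)]
    · rw [if_neg haS, if_neg (by simp [Finset.mem_insert, hai, haS])]
  have hterm : ∀ S ∈ (Finset.univ.erase i).powerset,
      wgt p S * F S + wgt p (insert i S) * F (insert i S) = w' S * c := by
    intro S hS
    have hi : i ∉ S := fun hiS =>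
      Finset.notMem_erase i Finset.univ ((Finset.mem_powerset.mp hS) hiS)
    rw [hw1 S hi, hw2 S hi, ← hF S hi]
    ring
  rw [Finset.sum_congr rfl hterm, ← Finset.sum_mul, sum_wgt_base]
  ring

lemma cov_eval (i : Fin n) (G : Finset (Fin n) → ℝ) (t : ℝ)
    (hG : ∀ S : Finset (Fin n), i ∉ S → G (insert i S) = G S + t) :
    ∑ S : Finset (Fin n), wgt p S * (((if i ∈ S then (1:ℝ) else 0) - p i) * G S)
      = p i * (1 - p i) * t := by
  apply split_eval
  intro S hi
  rw [if_neg hi, if_pos (Finset.mem_insert_self i S), hG S hi]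
  ring

lemma exp_xi (i : Fin n) :
    ∑ S : Finset (Fin n), wgt p S * (if i ∈ S then (1:ℝ) else 0) = p i := by
  apply split_eval
  intro S hi
  rw [if_neg hi, if_pos (Finset.mem_insert_self i S)]
  ring

end Cube

section Dist
variable {n : ℕ} (p : Fin n → ℝ)

lemma card_cast (S : Finset (Fin n)) :
    (S.card : ℝ) = ∑ i : Fin n, (if i ∈ S then (1:ℝ) else 0) := by
  rw [Finset.sum_ite_mem, Finset.univ_inter, Finset.card_eq_sum_ones]
  push_cast
  rfl

lemma U_cast (S : Finset (Fin n)) :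
    (∑ a ∈ S, p a) = ∑ i : Fin n, (if i ∈ S then (1:ℝ) else 0) * p i := by
  have h1 : ∀ i : Fin n, (if i ∈ S then (1:ℝ) else 0) * p i
      = if i ∈ S then p i else 0 := fun i => by split <;> simp
  rw [Finset.sum_congr rfl fun i _ => h1 i, Finset.sum_ite_mem, Finset.univ_inter]

lemma exp_sum (f : Fin n → Finset (Fin n) → ℝ) :
    ∑ S : Finset (Fin n), wgt p S * (∑ i, f i S)
      = ∑ i, ∑ S : Finset (Fin n), wgt p S * f i S := by
  rw [Finset.sum_comm]
  exact Finset.sum_congr rfl fun S _ => Finset.mul_sum _ _ _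

lemma exp_U : ∑ S : Finset (Fin n), wgt p S * (∑ a ∈ S, p a) = ∑ i, (p i)^2 := by
  have : ∀ S : Finset (Fin n), (∑ a ∈ S, p a) = ∑ i, (if i ∈ S then (1:ℝ) else 0) * p i :=
    U_cast p
  rw [Finset.sum_congr rfl fun S _ => by rw [this S], exp_sum]
  apply Finset.sum_congr rfl
  intro i _
  have : ∑ S : Finset (Fin n), wgt p S * ((if i ∈ S then (1:ℝ) else 0) * p i)
      = (∑ S : Finset (Fin n), wgt p S * (if i ∈ S then (1:ℝ) else 0)) * p i := by
    rw [Finset.sum_mul]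
    exact Finset.sum_congr rfl fun S _ => by ring
  rw [this, exp_xi]
  ring

lemma var_card :
    ∑ S : Finset (Fin n), wgt p S * ((S.card : ℝ) - ∑ i, p i)^2
      = ∑ i, p i * (1 - p i) := by
  have hpt : ∀ S : Finset (Fin n), ((S.card : ℝ) - ∑ i, p i)^2
      = ∑ i, (((if i ∈ S then (1:ℝ) else 0) - p i) * ((S.card : ℝ) - ∑ j, p j)) := by
    intro S
    have hs : (∑ i, ((if i ∈ S then (1:ℝ) else 0) - p i)) = (S.card : ℝ) - ∑ i, p i := by
      rw [Finset.sum_sub_distrib, ← card_cast]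
    rw [← Finset.sum_mul, hs]
    ring
  rw [Finset.sum_congr rfl fun S _ => by rw [hpt S], exp_sum]
  apply Finset.sum_congr rfl
  intro i _
  have := cov_eval p i (fun S => (S.card : ℝ) - ∑ j, p j) 1 (fun S hi => by
    simp only [Finset.card_insert_of_notMem hi, Nat.cast_add, Nat.cast_one]; ring)
  rw [this]
  ring

lemma var_U :
    ∑ S : Finset (Fin n), wgt p S * ((∑ a ∈ S, p a) - ∑ i, (p i)^2)^2
      = ∑ i, (p i)^3 * (1 - p i) := by
  have hpt : ∀ S : Finset (Fin n), ((∑ a ∈ S, p a) - ∑ i, (p i)^2)^2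
      = ∑ i, (p i * (((if i ∈ S then (1:ℝ) else 0) - p i)
          * ((∑ a ∈ S, p a) - ∑ j, (p j)^2))) := by
    intro S
    have hs : (∑ i, (((if i ∈ S then (1:ℝ) else 0) - p i) * p i))
        = (∑ a ∈ S, p a) - ∑ i, (p i)^2 := by
      have h1 : ∀ i : Fin n, (((if i ∈ S then (1:ℝ) else 0) - p i) * p i)
          = (if i ∈ S then (1:ℝ) else 0) * p i - (p i)^2 := fun i => by ring
      rw [Finset.sum_congr rfl fun i _ => h1 i, Finset.sum_sub_distrib, ← U_cast]
    have expand : ∑ i, (p i * (((if i ∈ S then (1:ℝ) else 0) - p i)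
          * ((∑ a ∈ S, p a) - ∑ j, (p j)^2)))
        = (∑ i, (((if i ∈ S then (1:ℝ) else 0) - p i) * p i))
            * ((∑ a ∈ S, p a) - ∑ j, (p j)^2) := by
      rw [Finset.sum_mul]
      exact Finset.sum_congr rfl fun i _ => by ring
    rw [expand, hs]
    ring
  rw [Finset.sum_congr rfl fun S _ => by rw [hpt S], exp_sum]
  apply Finset.sum_congr rfl
  intro i _
  have hc := cov_eval p i (fun S => (∑ a ∈ S, p a) - ∑ j, (p j)^2) (p i) (fun S hi => by
    simp only [Finset.sum_insert hi]; ring)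
  have : ∑ S : Finset (Fin n), wgt p S * (p i * (((if i ∈ S then (1:ℝ) else 0) - p i)
        * ((∑ a ∈ S, p a) - ∑ j, (p j)^2)))
      = p i * ∑ S : Finset (Fin n), wgt p S * (((if i ∈ S then (1:ℝ) else 0) - p i)
        * ((∑ a ∈ S, p a) - ∑ j, (p j)^2)) := by
    rw [Finset.mul_sum]
    exact Finset.sum_congr rfl fun S _ => by ring
  rw [this, hc]
  ring

lemma main_ident (g : ℤ → ℝ) (m : ℤ) (lam : ℝ) (hlam : lam = (∑ i, p i) - (m : ℝ)) :
    ∑ S : Finset (Fin n), wgt p S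
        * (lam * g ((S.card : ℤ) - m + 1) - (((S.card : ℤ) - m : ℤ) : ℝ) * g ((S.card : ℤ) - m))
      = ∑ S : Finset (Fin n), wgt p S
        * (((∑ a ∈ S, p a) - (m : ℝ)) * (g ((S.card : ℤ) - m + 1) - g ((S.card : ℤ) - m))) := by
  have per_i : ∀ i : Fin n, ∑ S : Finset (Fin n), wgt p S
      * (p i * g ((S.card : ℤ) - m + 1) - (if i ∈ S then (1:ℝ) else 0) * g ((S.card : ℤ) - m)
        - p i * (if i ∈ S then (1:ℝ) else 0)
          * (g ((S.card : ℤ) - m + 1) - g ((S.card : ℤ) - m))) = 0 := by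
    intro i
    apply split_eval
    intro S hi
    rw [if_neg hi, if_pos (Finset.mem_insert_self i S), Finset.card_insert_of_notMem hi]
    have h1 : ((S.card + 1 : ℕ) : ℤ) - m = (S.card : ℤ) - m + 1 := by push_cast; ring
    rw [h1]
    ring
  have hsum : ∑ i : Fin n, (∑ S : Finset (Fin n), wgt p S
      * (p i * g ((S.card : ℤ) - m + 1) - (if i ∈ S then (1:ℝ) else 0) * g ((S.card : ℤ) - m)
        - p i * (if i ∈ S then (1:ℝ) else 0)
          * (g ((S.card : ℤ) - m + 1) - g ((S.card : ℤ) - m)))) = 0 :=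
    Finset.sum_eq_zero fun i _ => per_i i
  rw [← exp_sum] at hsum
  have hpt : ∀ S : Finset (Fin n),
      (lam * g ((S.card : ℤ) - m + 1) - (((S.card : ℤ) - m : ℤ) : ℝ) * g ((S.card : ℤ) - m))
        - (((∑ a ∈ S, p a) - (m : ℝ)) * (g ((S.card : ℤ) - m + 1) - g ((S.card : ℤ) - m)))
      = ∑ i, (p i * g ((S.card : ℤ) - m + 1)
          - (if i ∈ S then (1:ℝ) else 0) * g ((S.card : ℤ) - m)
          - p i * (if i ∈ S then (1:ℝ) else 0)
            * (g ((S.card : ℤ) - m + 1) - g ((S.card : ℤ) - m))) := by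
    intro S
    rw [Finset.sum_sub_distrib, Finset.sum_sub_distrib, ← Finset.sum_mul, ← Finset.sum_mul,
      ← Finset.sum_mul]
    have hU : (∑ i, (if i ∈ S then (1:ℝ) else 0) * p i) = ∑ a ∈ S, p a := (U_cast p S).symm
    have hX : (∑ i, (if i ∈ S then (1:ℝ) else 0)) = (S.card : ℝ) := (card_cast S).symm
    have hcast : (((S.card : ℤ) - m : ℤ) : ℝ) = (S.card : ℝ) - (m : ℝ) := by push_cast; ring
    have hUmul : (∑ i, p i * (if i ∈ S then (1:ℝ) else 0)) = ∑ a ∈ S, p a := by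
      rw [← hU]; exact Finset.sum_congr rfl fun i _ => by ring
    rw [hX, hUmul, hcast, hlam]
    ring
  have : (∑ S : Finset (Fin n), wgt p S
        * (lam * g ((S.card : ℤ) - m + 1) - (((S.card : ℤ) - m : ℤ) : ℝ) * g ((S.card : ℤ) - m)))
      - (∑ S : Finset (Fin n), wgt p S
        * (((∑ a ∈ S, p a) - (m : ℝ)) * (g ((S.card : ℤ) - m + 1) - g ((S.card : ℤ) - m))))
      = 0 := by
    rw [← Finset.sum_sub_distrib]
    rw [← hsum]
    apply Finset.sum_congr rfl
    intro S _
    rw [← mul_sub, hpt S]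
  linarith [this]

end Dist
/-- The Poisson binomial pmf viewed as a pmf on ℤ. -/
noncomputable def pbPMFZ (n : ℕ) (p : Fin n → ℝ) (k : ℤ) : ℝ :=
  if 0 ≤ k then pbPMF n p k.toNat else 0

/-- The translated Poisson pmf `TP(μ, σ²)` on ℤ: `X - ⌊μ - σ²⌋ ~ Poi(σ² + {μ - σ²})`,
where `{x}` is the fractional part of `x`. -/
noncomputable def tpPMF (μ σ2 : ℝ) (k : ℤ) : ℝ :=
  if ⌊μ - σ2⌋ ≤ k then
    Real.exp (-(σ2 + Int.fract (μ - σ2))) * (σ2 + Int.fract (μ - σ2)) ^ (k - ⌊μ - σ2⌋).toNat /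
      ((k - ⌊μ - σ2⌋).toNat.factorial : ℝ)
  else 0

/-- The total variation distance between two pmfs on ℤ: `d_TV(μ, ν) = sup_A |μ(A) - ν(A)|`. -/
noncomputable def tvDistZ (f g : ℤ → ℝ) : ℝ :=
  ⨆ A : Set ℤ, |(∑' k : ℤ, A.indicator f k) - ∑' k : ℤ, A.indicator g k|


lemma pbPMF_eq_zero {n : ℕ} (p : Fin n → ℝ) {k : ℕ} (hk : n < k) : pbPMF n p k = 0 := by
  rw [pbPMF, Finset.powersetCard_eq_empty.mpr (by simpa using hk), Finset.sum_empty]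

lemma pb_cube {n : ℕ} (p : Fin n → ℝ) (φ : ℕ → ℝ) :
    ∑ k ∈ Finset.range (n+1), pbPMF n p k * φ k
      = ∑ S : Finset (Fin n), wgt p S * φ S.card := by
  have h := Finset.sum_powerset (Finset.univ : Finset (Fin n))
    (fun S => wgt p S * φ S.card)
  rw [Finset.powerset_univ] at h
  rw [h, Finset.card_univ, Fintype.card_fin]
  apply Finset.sum_congr rfl
  intro k _
  have hinner : ∀ S ∈ Finset.powersetCard k (Finset.univ : Finset (Fin n)),
      wgt p S * φ S.card = ((∏ i ∈ S, p i) * ∏ i ∈ Sᶜ, (1 - p i)) * φ k := by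
    intro S hS
    obtain ⟨hsub, hcard⟩ := Finset.mem_powersetCard.mp hS
    have hw : wgt p S = (∏ i ∈ S, p i) * ∏ i ∈ Sᶜ, (1 - p i) := by
      rw [wgt, ifprod p Finset.univ S hsub, Finset.compl_eq_univ_sdiff]
    rw [hw, hcard]
  rw [Finset.sum_congr rfl hinner, ← Finset.sum_mul, pbPMF]

open Classical in
lemma tsumP {n : ℕ} (p : Fin n → ℝ) (A : Set ℤ) :
    ∑' k : ℤ, A.indicator (pbPMFZ n p) k
      = ∑ S : Finset (Fin n), wgt p S * (if ((S.card : ℤ) ∈ A) then (1:ℝ) else 0) := by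
  have hinj : Set.InjOn (fun j : ℕ => (j : ℤ)) (Finset.range (n+1)) := by
    intro a _ b _ hab
    simpa using hab
  have hzero : ∀ k : ℤ, k ∉ (Finset.range (n+1)).image (fun j : ℕ => (j : ℤ)) →
      A.indicator (pbPMFZ n p) k = 0 := by
    intro k hk
    simp only [Finset.mem_image, Finset.mem_range] at hk
    rcases le_or_gt 0 k with h0 | h0
    · have hn : n < k.toNat := by
        by_contra hc
        exact hk ⟨k.toNat, by omega, by omega⟩
      have hpz : pbPMFZ n p k = 0 := by
        rw [pbPMFZ, if_pos h0, pbPMF_eq_zero p hn]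
      rw [Set.indicator_apply, hpz]
      simp
    · have hpz : pbPMFZ n p k = 0 := by rw [pbPMFZ, if_neg (by omega)]
      rw [Set.indicator_apply, hpz]
      simp
  rw [tsum_eq_sum hzero, Finset.sum_image hinj,
    ← pb_cube p (fun k => if ((k : ℤ) ∈ A) then (1:ℝ) else 0)]
  apply Finset.sum_congr rfl
  intro k hk
  rw [Set.indicator_apply]
  by_cases hA : ((k : ℤ) ∈ A)
  · rw [if_pos hA, if_pos hA, pbPMFZ, if_pos (Int.natCast_nonneg k), Int.toNat_natCast, mul_one]
  · rw [if_neg hA, if_neg hA, mul_zero]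

open Classical in
lemma tsumQ (μ σ2 : ℝ) (hσ2 : 0 < σ2) (A : Set ℤ) :
    ∑' k : ℤ, A.indicator (tpPMF μ σ2) k
      = piB (σ2 + Int.fract (μ - σ2))
          (fun j => if ((j : ℤ) + ⌊μ - σ2⌋ ∈ A) then (1:ℝ) else 0) := by
  have hinj : Function.Injective (fun j : ℕ => (j : ℤ) + ⌊μ - σ2⌋) := by
    intro a b hab
    simpa using hab
  have hsupp : Function.support (A.indicator (tpPMF μ σ2)) ⊆
      Set.range (fun j : ℕ => (j : ℤ) + ⌊μ - σ2⌋) := by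
    intro k hk
    rcases lt_or_ge k ⌊μ - σ2⌋ with h | h
    · exfalso
      apply hk
      rw [Set.indicator_apply]
      have : tpPMF μ σ2 k = 0 := by rw [tpPMF, if_neg (by omega)]
      rw [this]
      simp
    · exact ⟨(k - ⌊μ - σ2⌋).toNat, by show ((k - ⌊μ - σ2⌋).toNat : ℤ) + ⌊μ - σ2⌋ = k; omega⟩
  rw [← hinj.tsum_eq hsupp, piB]
  apply tsum_congr
  intro j
  rw [Set.indicator_apply]
  have h1 : tpPMF μ σ2 ((j : ℤ) + ⌊μ - σ2⌋) = ppi (σ2 + Int.fract (μ - σ2)) j := by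
    rw [tpPMF, if_pos (by omega)]
    have h2 : ((j : ℤ) + ⌊μ - σ2⌋ - ⌊μ - σ2⌋).toNat = j := by omega
    rw [h2, ppi]
  rw [h1]
  split <;> ring

/-- Translated Poisson approximation (Röllin): for `X ~ PB(p_1, ..., p_n)` with
`μ = Σ p_i` and `σ² = Σ p_i (1 - p_i) > 0`,
`d_TV(L(X), TP(μ, σ²)) ≤ (2 + sqrt(Σ p_i³ (1 - p_i))) / σ²`. -/
theorem rollin_translated_poisson (n : ℕ) (p : Fin n → ℝ)
    (hp : ∀ i, 0 ≤ p i ∧ p i ≤ 1)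
    (μ σ2 : ℝ) (hμ : μ = ∑ i, p i) (hσ2 : σ2 = ∑ i, p i * (1 - p i)) (hσ2pos : 0 < σ2) :
    tvDistZ (pbPMFZ n p) (tpPMF μ σ2) ≤
      (2 + Real.sqrt (∑ i, (p i) ^ 3 * (1 - p i))) / σ2 := by
  classical
  rw [tvDistZ]
  apply ciSup_le
  intro A
  rw [tsumP p A, tsumQ μ σ2 hσ2pos A]
  set m : ℤ := ⌊μ - σ2⌋ with hm
  set γ : ℝ := Int.fract (μ - σ2) with hγ
  set lam : ℝ := σ2 + γ with hlamdef
  set h : ℕ → ℝ := fun j => if ((j : ℤ) + m ∈ A) then (1:ℝ) else 0 with hh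
  have hγ0 : 0 ≤ γ := Int.fract_nonneg _
  have hγ1 : γ < 1 := Int.fract_lt_one _
  have hl : 0 < lam := by rw [hlamdef]; linarith
  have hfl : (m : ℝ) + γ = μ - σ2 := by rw [hm, hγ]; exact Int.floor_add_fract _
  have hmle : (m : ℝ) ≤ μ - σ2 := by rw [hm]; exact Int.floor_le _
  have hh0 : ∀ k, 0 ≤ h k := fun k => by rw [hh]; dsimp only; split <;> norm_num
  have hh1 : ∀ k, h k ≤ 1 := fun k => by rw [hh]; dsimp only; split <;> norm_num
  set g : ℤ → ℝ := steinG lam h with hg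
  set V : ℝ := ∑ i, (p i)^3 * (1 - p i) with hV
  have hV0 : 0 ≤ V := Finset.sum_nonneg fun i _ =>
    mul_nonneg (pow_nonneg (hp i).1 3) (by linarith [(hp i).2])
  have hsw : ∑ S : Finset (Fin n), wgt p S = 1 := sum_wgt p
  have hwnn : ∀ S : Finset (Fin n), 0 ≤ wgt p S := wgt_nonneg p hp
  have hpiB0 : 0 ≤ piB lam h := piB_nonneg hl hh0
  have hpiB1 : piB lam h ≤ 1 := piB_le_one hl hh0 hh1
  have hdiff : ∀ z : ℤ, |g (z+1) - g z| ≤ 1 / lam := steinG_diff hl hh0 hh1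
  have hEU : (∑ i, (p i)^2) = μ - σ2 := by
    rw [hμ, hσ2, ← Finset.sum_sub_distrib]
    exact Finset.sum_congr rfl fun i _ => by ring
  have hlam_eq : lam = (∑ i, p i) - (m : ℝ) := by rw [← hμ]; linarith
  -- the three components
  set EU : ℝ := ∑ i, (p i)^2 with hEUd
  set T1 : ℝ := ∑ S : Finset (Fin n), wgt p S * (((∑ a ∈ S, p a) - EU)
    * (g ((S.card : ℤ) - m + 1) - g ((S.card : ℤ) - m))) with hT1
  set T2 : ℝ := ∑ S : Finset (Fin n), wgt p S
    * (g ((S.card : ℤ) - m + 1) - g ((S.card : ℤ) - m)) with hT2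
  set κ : Finset (Fin n) → ℝ := fun S => if (S.card : ℤ) < m then
    (if ((S.card : ℤ) ∈ A) then (1:ℝ) else 0) - piB lam h else 0 with hκ
  -- decomposition
  have hdecomp : (∑ S : Finset (Fin n), wgt p S * (if ((S.card : ℤ) ∈ A) then (1:ℝ) else 0))
      - piB lam h = T1 + γ * T2 + (∑ S : Finset (Fin n), wgt p S * κ S) := by
    have e1 : (∑ S : Finset (Fin n), wgt p S * (if ((S.card : ℤ) ∈ A) then (1:ℝ) else 0))
        - piB lam h = ∑ S : Finset (Fin n), wgt p S
          * ((if ((S.card : ℤ) ∈ A) then (1:ℝ) else 0) - piB lam h) := by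
      have e1a : ∀ S : Finset (Fin n), wgt p S
          * ((if ((S.card : ℤ) ∈ A) then (1:ℝ) else 0) - piB lam h)
          = wgt p S * (if ((S.card : ℤ) ∈ A) then (1:ℝ) else 0) - wgt p S * piB lam h :=
        fun S => by ring
      rw [Finset.sum_congr rfl fun S _ => e1a S, Finset.sum_sub_distrib, ← Finset.sum_mul,
        hsw, one_mul]
    have e2 : ∀ S : Finset (Fin n), (if ((S.card : ℤ) ∈ A) then (1:ℝ) else 0) - piB lam h
        = (lam * g ((S.card : ℤ) - m + 1)
            - ((((S.card : ℤ) - m : ℤ)) : ℝ) * g ((S.card : ℤ) - m)) + κ S := by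
      intro S
      rcases le_or_gt m (S.card : ℤ) with hc | hc
      · have hse := stein_eq (h := h) hl ((S.card : ℤ) - m) (by omega)
        have hcast : ((((S.card : ℤ) - m).toNat : ℤ) + m) = (S.card : ℤ) := by omega
        have hhv : h (((S.card : ℤ) - m).toNat) = (if ((S.card : ℤ) ∈ A) then (1:ℝ) else 0) := by
          rw [hh]
          dsimp only
          rw [hcast]
        rw [hhv] at hse
        have hκ0 : κ S = 0 := by rw [hκ]; dsimp only; rw [if_neg (by omega)]
        rw [hκ0, add_zero, hse]
      · have hg1 : g ((S.card : ℤ) - m + 1) = 0 := steinG_nonpos (by omega)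
        have hg2 : g ((S.card : ℤ) - m) = 0 := steinG_nonpos (by omega)
        have hκ1 : κ S = (if ((S.card : ℤ) ∈ A) then (1:ℝ) else 0) - piB lam h := by
          rw [hκ]; dsimp only; rw [if_pos hc]
        rw [hg1, hg2, hκ1]
        ring
    rw [e1, Finset.sum_congr rfl fun S _ => by rw [e2 S]]
    have e3 : ∑ S : Finset (Fin n), wgt p S
        * ((lam * g ((S.card : ℤ) - m + 1)
            - ((((S.card : ℤ) - m : ℤ)) : ℝ) * g ((S.card : ℤ) - m)) + κ S)
        = (∑ S : Finset (Fin n), wgt p S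
            * (lam * g ((S.card : ℤ) - m + 1)
              - ((((S.card : ℤ) - m : ℤ)) : ℝ) * g ((S.card : ℤ) - m)))
          + ∑ S : Finset (Fin n), wgt p S * κ S := by
      rw [← Finset.sum_add_distrib]
      exact Finset.sum_congr rfl fun S _ => by ring
    rw [e3, main_ident p g m lam hlam_eq]
    have e4 : ∑ S : Finset (Fin n), wgt p S
        * (((∑ a ∈ S, p a) - (m : ℝ))
          * (g ((S.card : ℤ) - m + 1) - g ((S.card : ℤ) - m)))
        = T1 + γ * T2 := by
      rw [hT1, hT2, Finset.mul_sum, ← Finset.sum_add_distrib]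
      apply Finset.sum_congr rfl
      intro S _
      have hmr : (m : ℝ) = EU - γ := by rw [hEU]; linarith
      rw [hmr]
      ring
    rw [e4]
  rw [hdecomp]
  -- bounds
  have habs : ∀ x : ℝ, x = |x| → True := fun _ _ => trivial
  -- bound on T1 via Cauchy-Schwarz
  have hb1 : |T1| ≤ Real.sqrt V / lam := by
    have step1 : |T1| ≤ ∑ S : Finset (Fin n), wgt p S * |(∑ a ∈ S, p a) - EU| * (1 / lam) := by
      refine (Finset.abs_sum_le_sum_abs _ _).trans (Finset.sum_le_sum fun S _ => ?_)
      rw [abs_mul, abs_of_nonneg (hwnn S), abs_mul, mul_assoc]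
      apply mul_le_mul_of_nonneg_left _ (hwnn S)
      exact mul_le_mul_of_nonneg_left (hdiff _) (abs_nonneg _)
    have step2 : ∑ S : Finset (Fin n), wgt p S * |(∑ a ∈ S, p a) - EU| * (1 / lam)
        = (∑ S : Finset (Fin n), wgt p S * |(∑ a ∈ S, p a) - EU|) / lam := by
      rw [← Finset.sum_mul, mul_one_div]
    have hcs : ∑ S : Finset (Fin n), wgt p S * |(∑ a ∈ S, p a) - EU| ≤ Real.sqrt V := by
      have hsq : (∑ S : Finset (Fin n), wgt p S * |(∑ a ∈ S, p a) - EU|)^2 ≤ V := by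
        have hcs2 := Finset.sum_mul_sq_le_sq_mul_sq Finset.univ
          (fun S : Finset (Fin n) => Real.sqrt (wgt p S))
          (fun S : Finset (Fin n) => Real.sqrt (wgt p S) * |(∑ a ∈ S, p a) - EU|)
        have el : ∀ S : Finset (Fin n), Real.sqrt (wgt p S)
            * (Real.sqrt (wgt p S) * |(∑ a ∈ S, p a) - EU|)
            = wgt p S * |(∑ a ∈ S, p a) - EU| := by
          intro S
          rw [← mul_assoc, Real.mul_self_sqrt (hwnn S)]
        have er1 : ∀ S : Finset (Fin n), (Real.sqrt (wgt p S))^2 = wgt p S :=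
          fun S => Real.sq_sqrt (hwnn S)
        have er2 : ∀ S : Finset (Fin n), (Real.sqrt (wgt p S) * |(∑ a ∈ S, p a) - EU|)^2
            = wgt p S * ((∑ a ∈ S, p a) - EU)^2 := by
          intro S
          rw [mul_pow, Real.sq_sqrt (hwnn S), sq_abs]
        rw [Finset.sum_congr rfl fun S _ => el S, Finset.sum_congr rfl fun S _ => er1 S,
          Finset.sum_congr rfl fun S _ => er2 S, hsw, one_mul] at hcs2
        calc (∑ S : Finset (Fin n), wgt p S * |(∑ a ∈ S, p a) - EU|)^2
            ≤ ∑ S : Finset (Fin n), wgt p S * ((∑ a ∈ S, p a) - EU)^2 := hcs2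
          _ = V := by rw [hV, hEUd]; exact var_U p
      have hnn : 0 ≤ ∑ S : Finset (Fin n), wgt p S * |(∑ a ∈ S, p a) - EU| :=
        Finset.sum_nonneg fun S _ => mul_nonneg (hwnn S) (abs_nonneg _)
      exact (Real.le_sqrt hnn hV0).mpr hsq
    calc |T1| ≤ (∑ S : Finset (Fin n), wgt p S * |(∑ a ∈ S, p a) - EU|) / lam := by
          rw [← step2]; exact step1
      _ ≤ Real.sqrt V / lam := div_le_div_of_nonneg_right hcs hl.le
  have hb2 : |γ * T2| ≤ γ / lam := by
    rw [abs_mul, abs_of_nonneg hγ0]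
    have : |T2| ≤ 1 / lam := by
      refine (Finset.abs_sum_le_sum_abs _ _).trans ?_
      have : ∑ S : Finset (Fin n), |wgt p S
          * (g ((S.card : ℤ) - m + 1) - g ((S.card : ℤ) - m))|
          ≤ ∑ S : Finset (Fin n), wgt p S * (1 / lam) := by
        apply Finset.sum_le_sum
        intro S _
        rw [abs_mul, abs_of_nonneg (hwnn S)]
        exact mul_le_mul_of_nonneg_left (hdiff _) (hwnn S)
      refine this.trans ?_
      rw [← Finset.sum_mul, hsw, one_mul]
    calc γ * |T2| ≤ γ * (1 / lam) := mul_le_mul_of_nonneg_left this hγ0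
      _ = γ / lam := by ring
  have hb3 : |∑ S : Finset (Fin n), wgt p S * κ S| ≤ 1 / σ2 := by
    have hptw : ∀ S : Finset (Fin n), |wgt p S * κ S|
        ≤ wgt p S * (if (S.card : ℤ) < m then (1:ℝ) else 0) := by
      intro S
      rw [abs_mul, abs_of_nonneg (hwnn S)]
      apply mul_le_mul_of_nonneg_left _ (hwnn S)
      rw [hκ]
      dsimp only
      rcases lt_or_ge (S.card : ℤ) m with hc | hc
      · rw [if_pos hc, if_pos hc]
        rw [abs_le]
        constructor
        · split <;> simp <;> linarith
        · split <;> simp <;> linarith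
      · rw [if_neg (by omega), if_neg (by omega), abs_zero]
    have hcheb : ∑ S : Finset (Fin n), wgt p S * (if (S.card : ℤ) < m then (1:ℝ) else 0)
        ≤ 1 / σ2 := by
      have hkey : σ2^2 * ∑ S : Finset (Fin n), wgt p S
          * (if (S.card : ℤ) < m then (1:ℝ) else 0) ≤ σ2 := by
        have hvc : ∑ S : Finset (Fin n), wgt p S * ((S.card : ℝ) - μ)^2 = σ2 := by
          rw [hσ2, hμ]
          exact var_card p
        rw [Finset.mul_sum]
        calc ∑ S : Finset (Fin n), σ2^2 * (wgt p S * (if (S.card : ℤ) < m then (1:ℝ) else 0))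
            ≤ ∑ S : Finset (Fin n), wgt p S * ((S.card : ℝ) - μ)^2 := by
              apply Finset.sum_le_sum
              intro S _
              rcases lt_or_ge (S.card : ℤ) m with hc | hc
              · rw [if_pos hc, mul_one]
                have hcard : (S.card : ℝ) ≤ (m : ℝ) - 1 := by
                  have h1 : (S.card : ℤ) ≤ m - 1 := by omega
                  have h2 : ((S.card : ℤ) : ℝ) ≤ ((m - 1 : ℤ) : ℝ) := by exact_mod_cast h1
                  push_cast at h2
                  linarith
                have hgap : μ - (S.card : ℝ) ≥ σ2 + 1 := by linarith
                have hs : σ2^2 ≤ ((S.card : ℝ) - μ)^2 := by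
                  nlinarith [hgap, hσ2pos, sq_nonneg (μ - (S.card : ℝ) - (σ2+1))]
                calc σ2^2 * wgt p S = wgt p S * σ2^2 := by ring
                  _ ≤ wgt p S * ((S.card : ℝ) - μ)^2 :=
                      mul_le_mul_of_nonneg_left hs (hwnn S)
              · rw [if_neg (by omega), mul_zero, mul_zero]
                exact mul_nonneg (hwnn S) (sq_nonneg _)
          _ = σ2 := hvc
      have hnn : 0 ≤ ∑ S : Finset (Fin n), wgt p S
          * (if (S.card : ℤ) < m then (1:ℝ) else 0) := by
        apply Finset.sum_nonneg
        intro S _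
        apply mul_nonneg (hwnn S)
        split <;> norm_num
      rw [le_div_iff₀ hσ2pos]
      nlinarith
    calc |∑ S : Finset (Fin n), wgt p S * κ S|
        ≤ ∑ S : Finset (Fin n), |wgt p S * κ S| := Finset.abs_sum_le_sum_abs _ _
      _ ≤ ∑ S : Finset (Fin n), wgt p S * (if (S.card : ℤ) < m then (1:ℝ) else 0) :=
          Finset.sum_le_sum fun S _ => hptw S
      _ ≤ 1 / σ2 := hcheb
  -- combine
  have htri : |T1 + γ * T2 + (∑ S : Finset (Fin n), wgt p S * κ S)|
      ≤ |T1| + |γ * T2| + |∑ S : Finset (Fin n), wgt p S * κ S| :=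
    (abs_add_le _ _).trans (by linarith [abs_add_le T1 (γ * T2)])
  have hlamge : σ2 ≤ lam := by rw [hlamdef]; linarith
  have hd1 : Real.sqrt V / lam ≤ Real.sqrt V / σ2 :=
    div_le_div_of_nonneg_left (Real.sqrt_nonneg V) hσ2pos hlamge |>.trans_eq rfl
  have hd2 : γ / lam ≤ 1 / σ2 := by
    apply div_le_div₀ (by norm_num) (by linarith) hσ2pos hlamge
  have hfin : (2 + Real.sqrt V) / σ2
      = Real.sqrt V / σ2 + 1 / σ2 + 1 / σ2 := by ring
  linarith [htri, hb1, hb2, hb3, hd1, hd2, hfin]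
end Key
end
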